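/- arXiv:2308.16365 — 3 statements merged into one kernel-verified Lean document; each statement's English description precedes it below -/
import Mathlib

section
/- Let n ≥ 5 and let c be a (5,8)-coloring of K_n with m colors and with no monochromatic triangle. Then m·n − 2·binom(n,2) ≥ |D| − |B_1|. -/
open SimpleGraph

/-- The color class of color `i` in the edge-coloring `c` of the complete graph on `Fin n`:
the spanning subgraph consisting of the edges of color `i`. -/
def colorClass {n : ℕ} {α : Type*} (c : Sym2 (Fin n) → α) (i : α) :
    SimpleGraph (Fin n) where
  Adj x y := x ≠ y ∧ c s(x, y) = i
  symm := by
    constructor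
    rintro x y ⟨hxy, hc⟩
    refine ⟨hxy.symm, ?_⟩
    rwa [Sym2.eq_swap]
  loopless := by
    constructor
    rintro x ⟨hxx, -⟩
    exact hxx rfl

/-- `c` is a `(p,q)`-coloring of the complete graph on `Fin n`: every set of `p` vertices
spans edges receiving at least `q` distinct colors. -/
def IsPQColoring {n : ℕ} {α : Type*} (p q : ℕ) (c : Sym2 (Fin n) → α) : Prop :=
  ∀ S : Finset (Fin n), S.card = p →
    q ≤ {j : α | ∃ x ∈ S, ∃ y ∈ S, x ≠ y ∧ c s(x, y) = j}.ncard

/-- `f(n,p,q)`: the minimum number of colors in a `(p,q)`-coloring of `K_n`. -/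
noncomputable def fpq (n p q : ℕ) : ℕ :=
  sInf {m : ℕ | ∃ c : Sym2 (Fin n) → Fin m, IsPQColoring p q c}

/-- The coloring `c` has a monochromatic triangle. -/
def HasMonoTriangle {n : ℕ} {α : Type*} (c : Sym2 (Fin n) → α) : Prop :=
  ∃ x y z : Fin n, x ≠ y ∧ y ≠ z ∧ x ≠ z ∧
    c s(x, y) = c s(y, z) ∧ c s(y, z) = c s(x, z)

/-- The connected component `K` of `G` (as an induced subgraph) is isomorphic to `H`. -/
def ComponentIso {V : Type*} (G : SimpleGraph V) (K : G.ConnectedComponent)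
    {W : Type*} (H : SimpleGraph W) : Prop :=
  Nonempty (G.induce K.supp ≃g H)

/-- The connected component `K` of `G` contains at least one edge. -/
def CompHasEdge {V : Type*} (G : SimpleGraph V) (K : G.ConnectedComponent) : Prop :=
  ∃ u v : V, u ∈ K.supp ∧ G.Adj u v

/-- The set of monochromatic components (pairs of a color and a connected component of its
color class) isomorphic to `H`. -/
def compsIso {n : ℕ} {α : Type*} (c : Sym2 (Fin n) → α) {W : Type*} (H : SimpleGraph W) :
    Set (Σ i : α, (colorClass c i).ConnectedComponent) :=
  {X | ComponentIso (colorClass c X.1) X.2 H}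

/-- The star `K_{1,3}`. -/
def starK13 : SimpleGraph (Fin 1 ⊕ Fin 3) := completeBipartiteGraph (Fin 1) (Fin 3)

/-- `A`: maximal monochromatic components isomorphic to `K_2`. -/
def setA {n : ℕ} {α : Type*} (c : Sym2 (Fin n) → α) :
    Set (Σ i : α, (colorClass c i).ConnectedComponent) := compsIso c (pathGraph 2)

/-- `B`: maximal monochromatic components isomorphic to `P_3` (path with 2 edges). -/
def setB {n : ℕ} {α : Type*} (c : Sym2 (Fin n) → α) :
    Set (Σ i : α, (colorClass c i).ConnectedComponent) := compsIso c (pathGraph 3)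

/-- `C`: maximal monochromatic components isomorphic to `P_4` (path with 3 edges). -/
def setC {n : ℕ} {α : Type*} (c : Sym2 (Fin n) → α) :
    Set (Σ i : α, (colorClass c i).ConnectedComponent) := compsIso c (pathGraph 4)

/-- `D`: maximal monochromatic components isomorphic to `K_{1,3}`. -/
def setD {n : ℕ} {α : Type*} (c : Sym2 (Fin n) → α) :
    Set (Σ i : α, (colorClass c i).ConnectedComponent) := compsIso c starK13

/-- `B_1`: components in `B` sharing at most one vertex with every other component of `B`. -/
def setB1 {n : ℕ} {α : Type*} (c : Sym2 (Fin n) → α) :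
    Set (Σ i : α, (colorClass c i).ConnectedComponent) :=
  {X ∈ setB c | ∀ Y ∈ setB c, Y ≠ X → (X.2.supp ∩ Y.2.supp).ncard ≤ 1}

/-- `B_2 = B \ B_1`. -/
def setB2 {n : ℕ} {α : Type*} (c : Sym2 (Fin n) → α) :
    Set (Σ i : α, (colorClass c i).ConnectedComponent) := setB c \ setB1 c

/-- A monochromatic 2-edge path (for a total coloring). -/
def MonoPath2 {n : ℕ} {α : Type*} (c : Sym2 (Fin n) → α) (x y z : Fin n) : Prop :=
  x ≠ y ∧ y ≠ z ∧ x ≠ z ∧ c s(x, y) = c s(y, z)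

/-- The three values `a`, `b`, `c` take exactly two distinct values. -/
def ExactlyTwo {α : Type*} (a b c : α) : Prop :=
  (a = b ∧ a ≠ c) ∨ (b = c ∧ a ≠ b) ∨ (a = c ∧ a ≠ b)

/-- A 2-edge path `x-y-z` with both edges of color `i`, with respect to the
edge-color relation `col`. -/
def PathCol {n : ℕ} {α : Type*} (col : Sym2 (Fin n) → α → Prop) (i : α)
    (x y z : Fin n) : Prop :=
  x ≠ y ∧ y ≠ z ∧ x ≠ z ∧ col s(x, y) i ∧ col s(y, z) i

/-- A 2-edge matching `{xy, uv}` with both edges of color `i`, with respect to the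
edge-color relation `col`. -/
def MatchCol {n : ℕ} {α : Type*} (col : Sym2 (Fin n) → α → Prop) (i : α)
    (x y u v : Fin n) : Prop :=
  x ≠ y ∧ u ≠ v ∧ x ≠ u ∧ x ≠ v ∧ y ≠ u ∧ y ≠ v ∧ col s(x, y) i ∧ col s(u, v) i

/-- The colored edge set `E` contains a triangle whose three edges receive exactly
two distinct colors. -/
def TwoColTriIn {n : ℕ} {α : Type*} (E : Set (Sym2 (Fin n) × α)) : Prop :=
  ∃ (x y z : Fin n) (c₁ c₂ c₃ : α), x ≠ y ∧ y ≠ z ∧ x ≠ z ∧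
    (s(x, y), c₁) ∈ E ∧ (s(y, z), c₂) ∈ E ∧ (s(x, z), c₃) ∈ E ∧
    ExactlyTwo c₁ c₂ c₃

/-- Bad subgraph of type (a): an alternating 4-cycle formed by two monochromatic
2-edge matchings of distinct colors, with all vertices in `S`. -/
def TypeA {n : ℕ} {α : Type*} (col : Sym2 (Fin n) → α → Prop) (S : Finset (Fin n)) : Prop :=
  ∃ (w x y z : Fin n) (i ℓ : α), w ∈ S ∧ x ∈ S ∧ y ∈ S ∧ z ∈ S ∧ i ≠ ℓ ∧
    MatchCol col i w x y z ∧ MatchCol col ℓ x y z w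

/-- Bad subgraph of type (b): an alternating 5-cycle colored with two colors `i ≠ ℓ`,
where `i` appears on a 2-edge path plus a vertex-disjoint edge and `ℓ` on the remaining
two nonadjacent edges, with all vertices in `S`. -/
def TypeB {n : ℕ} {α : Type*} (col : Sym2 (Fin n) → α → Prop) (S : Finset (Fin n)) : Prop :=
  ∃ (v₀ v₁ v₂ v₃ v₄ : Fin n) (i ℓ : α),
    v₀ ∈ S ∧ v₁ ∈ S ∧ v₂ ∈ S ∧ v₃ ∈ S ∧ v₄ ∈ S ∧ i ≠ ℓ ∧
    List.Pairwise (· ≠ ·) [v₀, v₁, v₂, v₃, v₄] ∧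
    col s(v₀, v₁) i ∧ col s(v₁, v₂) i ∧ col s(v₃, v₄) i ∧
    col s(v₂, v₃) ℓ ∧ col s(v₄, v₀) ℓ

/-- Bad subgraph of type (c): a 6-edge subgraph on 5 vertices with three distinct colors,
where color `i` forms a 2-edge path and colors `ℓ`, `m` each form 2-edge matchings,
containing a triangle whose edges use exactly two colors. -/
def TypeC {n : ℕ} {α : Type*} (col : Sym2 (Fin n) → α → Prop) (S : Finset (Fin n)) : Prop :=
  ∃ (a b d x y u v p q r w : Fin n) (i ℓ m : α),
    a ∈ S ∧ b ∈ S ∧ d ∈ S ∧ x ∈ S ∧ y ∈ S ∧ u ∈ S ∧ v ∈ S ∧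
    p ∈ S ∧ q ∈ S ∧ r ∈ S ∧ w ∈ S ∧
    i ≠ ℓ ∧ i ≠ m ∧ ℓ ≠ m ∧
    PathCol col i a b d ∧ MatchCol col ℓ x y u v ∧ MatchCol col m p q r w ∧
    TwoColTriIn ({(s(a, b), i), (s(b, d), i), (s(x, y), ℓ), (s(u, v), ℓ),
      (s(p, q), m), (s(r, w), m)} : Set (Sym2 (Fin n) × α))

/-- Bad subgraph of type (d): a 6-edge subgraph on 5 vertices with three distinct colors,
where one color forms a 2-edge matching and each of the other two forms a 2-edge path. -/
def TypeD {n : ℕ} {α : Type*} (col : Sym2 (Fin n) → α → Prop) (S : Finset (Fin n)) : Prop :=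
  ∃ (a b d a' b' d' x y u v : Fin n) (i ℓ m : α),
    a ∈ S ∧ b ∈ S ∧ d ∈ S ∧ a' ∈ S ∧ b' ∈ S ∧ d' ∈ S ∧
    x ∈ S ∧ y ∈ S ∧ u ∈ S ∧ v ∈ S ∧
    i ≠ ℓ ∧ i ≠ m ∧ ℓ ≠ m ∧
    PathCol col i a b d ∧ PathCol col ℓ a' b' d' ∧ MatchCol col m x y u v

/-- Bad subgraph of type (e): a 6-edge subgraph on 5 vertices with three distinct colors,
where two colors form 2-edge matchings and the third forms a 2-edge path, containing
no triangle colored with exactly two colors. -/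
def TypeE {n : ℕ} {α : Type*} (col : Sym2 (Fin n) → α → Prop) (S : Finset (Fin n)) : Prop :=
  ∃ (a b d x y u v p q r w : Fin n) (i ℓ m : α),
    a ∈ S ∧ b ∈ S ∧ d ∈ S ∧ x ∈ S ∧ y ∈ S ∧ u ∈ S ∧ v ∈ S ∧
    p ∈ S ∧ q ∈ S ∧ r ∈ S ∧ w ∈ S ∧
    i ≠ ℓ ∧ i ≠ m ∧ ℓ ≠ m ∧
    PathCol col i a b d ∧ MatchCol col ℓ x y u v ∧ MatchCol col m p q r w ∧
    ¬ TwoColTriIn ({(s(a, b), i), (s(b, d), i), (s(x, y), ℓ), (s(u, v), ℓ),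
      (s(p, q), m), (s(r, w), m)} : Set (Sym2 (Fin n) × α))

/-- Bad subgraph of type (f): a 6-edge subgraph on 5 vertices formed by three
monochromatic 2-edge matchings of three distinct colors. -/
def TypeF {n : ℕ} {α : Type*} (col : Sym2 (Fin n) → α → Prop) (S : Finset (Fin n)) : Prop :=
  ∃ (x₁ y₁ u₁ v₁ x₂ y₂ u₂ v₂ x₃ y₃ u₃ v₃ : Fin n) (i ℓ m : α),
    x₁ ∈ S ∧ y₁ ∈ S ∧ u₁ ∈ S ∧ v₁ ∈ S ∧ x₂ ∈ S ∧ y₂ ∈ S ∧ u₂ ∈ S ∧ v₂ ∈ S ∧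
    x₃ ∈ S ∧ y₃ ∈ S ∧ u₃ ∈ S ∧ v₃ ∈ S ∧
    i ≠ ℓ ∧ i ≠ m ∧ ℓ ≠ m ∧
    MatchCol col i x₁ y₁ u₁ v₁ ∧ MatchCol col ℓ x₂ y₂ u₂ v₂ ∧ MatchCol col m x₃ y₃ u₃ v₃

/-- Bad subgraph of type `t`, where `t = 0,1,2,3,4,5` codes types (a)-(f). -/
def BadOfType {n : ℕ} {α : Type*} (t : ℕ) (col : Sym2 (Fin n) → α → Prop)
    (S : Finset (Fin n)) : Prop :=
  if t = 0 then TypeA col S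
  else if t = 1 then TypeB col S
  else if t = 2 then TypeC col S
  else if t = 3 then TypeD col S
  else if t = 4 then TypeE col S
  else TypeF col S

section Helpers
variable {n m : ℕ} {c : Sym2 (Fin n) → Fin m}

instance colorClass.adjDecidable (i : Fin m) :
    DecidableRel (colorClass c i).Adj := fun x y =>
  inferInstanceAs (Decidable (x ≠ y ∧ c s(x, y) = i))

lemma colorClass_adj {i : Fin m} {x y : Fin n} :
    (colorClass c i).Adj x y ↔ x ≠ y ∧ c s(x, y) = i := Iff.rfl

lemma card7 {α : Type*} [DecidableEq α] (a b d e f g h : α) :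
    ({a, b, d, e, f, g, h} : Finset α).card ≤ 7 := by
  refine le_trans (Finset.card_insert_le _ _) (Nat.succ_le_succ ?_)
  refine le_trans (Finset.card_insert_le _ _) (Nat.succ_le_succ ?_)
  refine le_trans (Finset.card_insert_le _ _) (Nat.succ_le_succ ?_)
  refine le_trans (Finset.card_insert_le _ _) (Nat.succ_le_succ ?_)
  refine le_trans (Finset.card_insert_le _ _) (Nat.succ_le_succ ?_)
  refine le_trans (Finset.card_insert_le _ _) (Nat.succ_le_succ ?_)
  simp

lemma tenEdges (hc : IsPQColoring 5 8 c) {v0 v1 v2 v3 v4 : Fin n}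
    (h01 : v0 ≠ v1) (h02 : v0 ≠ v2) (h03 : v0 ≠ v3) (h04 : v0 ≠ v4)
    (h12 : v1 ≠ v2) (h13 : v1 ≠ v3) (h14 : v1 ≠ v4)
    (h23 : v2 ≠ v3) (h24 : v2 ≠ v4) (h34 : v3 ≠ v4)
    (T : Finset (Fin m)) (hT : T.card ≤ 7)
    (e01 : c s(v0, v1) ∈ T) (e02 : c s(v0, v2) ∈ T) (e03 : c s(v0, v3) ∈ T)
    (e04 : c s(v0, v4) ∈ T) (e12 : c s(v1, v2) ∈ T) (e13 : c s(v1, v3) ∈ T)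
    (e14 : c s(v1, v4) ∈ T) (e23 : c s(v2, v3) ∈ T) (e24 : c s(v2, v4) ∈ T)
    (e34 : c s(v3, v4) ∈ T) : False := by
  set S : Finset (Fin n) := {v0, v1, v2, v3, v4} with hSdef
  have hS : S.card = 5 := by
    simp [hSdef, Finset.card_insert_of_notMem, Finset.mem_insert, Finset.mem_singleton,
      h01, h02, h03, h04, h12, h13, h14, h23, h24, h34]
  have h8 := hc S hS
  have hsub : {j | ∃ x ∈ S, ∃ y ∈ S, x ≠ y ∧ c s(x, y) = j} ⊆ (↑T : Set (Fin m)) := by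
    rintro j ⟨x, hx, y, hy, hxy, rfl⟩
    simp only [hSdef, Finset.mem_insert, Finset.mem_singleton] at hx hy
    rcases hx with rfl | rfl | rfl | rfl | rfl <;> rcases hy with rfl | rfl | rfl | rfl | rfl <;>
      first
        | exact absurd rfl hxy
        | assumption
        | (rw [Sym2.eq_swap]; assumption)
  have hle := Set.ncard_le_ncard hsub (Set.toFinite _)
  rw [Set.ncard_coe_finset] at hle
  omega

end Helpers
section Helpers2
variable {n m : ℕ} {c : Sym2 (Fin n) → Fin m}

lemma mem_nbr {i : Fin m} {v y : Fin n} :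
    y ∈ (colorClass c i).neighborFinset v ↔ v ≠ y ∧ c s(v, y) = i := by
  rw [SimpleGraph.mem_neighborFinset]; exact Iff.rfl

lemma sum_degree (v : Fin n) :
    ∑ i : Fin m, (colorClass c i).degree v = n - 1 := by
  have h1 : ∀ i : Fin m, (colorClass c i).degree v =
      ((Finset.univ.filter fun y => v ≠ y).filter fun y => c s(v, y) = i).card := by
    intro i
    rw [SimpleGraph.degree, SimpleGraph.neighborFinset_eq_filter, Finset.filter_filter]
    rfl
  simp only [h1]
  rw [← Finset.card_eq_sum_card_fiberwise (fun y _ => Finset.mem_univ (c s(v, y)))]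
  simp [Finset.filter_ne]

lemma exists_fresh {s : Finset (Fin n)} (h : s.card < n) : ∃ x, x ∉ s := by
  by_contra hco
  push_neg at hco
  have : (Finset.univ : Finset (Fin n)) ⊆ s := fun x _ => hco x
  have := Finset.card_le_card this
  simp at this
  omega

lemma no_mono_tri (htri : ¬ HasMonoTriangle c) {x y z : Fin n}
    (hxy : x ≠ y) (hyz : y ≠ z) (hxz : x ≠ z)
    (h1 : c s(x, y) = c s(y, z)) : c s(y, z) ≠ c s(x, z) := by
  intro h2
  exact htri ⟨x, y, z, hxy, hyz, hxz, h1, h2⟩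

/-- every color-degree is at most `3`. -/
lemma deg_le_three (hc : IsPQColoring 5 8 c) (i : Fin m) (v : Fin n) :
    (colorClass c i).degree v ≤ 3 := by
  by_contra h
  push_neg at h
  obtain ⟨t, hts, ht4⟩ := Finset.exists_subset_card_eq h
  rw [Finset.card_eq_succ] at ht4
  obtain ⟨a, t', hat', rfl, ht3⟩ := ht4
  obtain ⟨b, d, e, hbd, hbe, hde, rfl⟩ := Finset.card_eq_three.mp ht3
  have ha := mem_nbr.mp (hts (show a ∈ ({a, b, d, e} : Finset (Fin n)) by simp))
  have hb := mem_nbr.mp (hts (show b ∈ ({a, b, d, e} : Finset (Fin n)) by simp))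
  have hd := mem_nbr.mp (hts (show d ∈ ({a, b, d, e} : Finset (Fin n)) by simp))
  have he := mem_nbr.mp (hts (show e ∈ ({a, b, d, e} : Finset (Fin n)) by simp))
  simp only [Finset.mem_insert, Finset.mem_singleton, not_or] at hat'
  obtain ⟨hab, had, hae⟩ := hat'
  exact tenEdges hc ha.1 hb.1 hd.1 he.1 hab had hae hbd hbe hde
    {i, c s(a, b), c s(a, d), c s(a, e), c s(b, d), c s(b, e), c s(d, e)}
    (card7 _ _ _ _ _ _ _)
    (by rw [ha.2]; simp) (by rw [hb.2]; simp) (by rw [hd.2]; simp) (by rw [he.2]; simp)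
    (by simp) (by simp) (by simp) (by simp) (by simp) (by simp)

end Helpers2
section Helpers3
variable {n m : ℕ} {c : Sym2 (Fin n) → Fin m}

/-- At the centre of a monochromatic star with ≥ 2 rays, the colour of the edge joining two
ray-ends differs from the star colour. -/
lemma star_ne (htri : ¬ HasMonoTriangle c) {i : Fin m} {v a b : Fin n}
    (hva : (colorClass c i).Adj v a) (hvb : (colorClass c i).Adj v b)
    (hab : a ≠ b) : i ≠ c s(a, b) := by
  obtain ⟨hva1, hva2⟩ := hva
  obtain ⟨hvb1, hvb2⟩ := hvb
  have h1 : c s(a, v) = c s(v, b) := by rw [Sym2.eq_swap, hva2, hvb2]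
  have := no_mono_tri htri (Ne.symm hva1) hvb1 hab h1
  rw [hvb2] at this
  exact this

/-- L1: a vertex of colour-degree 3 misses the colour of each edge joining two neighbours. -/
lemma deg3_missing (hc : IsPQColoring 5 8 c) (htri : ¬ HasMonoTriangle c)
    {i : Fin m} {v a b d : Fin n}
    (hva : (colorClass c i).Adj v a) (hvb : (colorClass c i).Adj v b)
    (hvd : (colorClass c i).Adj v d)
    (hab : a ≠ b) (had : a ≠ d) (hbd : b ≠ d) :
    ∀ u, u ≠ v → c s(v, u) ≠ c s(a, b) := by
  have hine := star_ne htri hva hvb hab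
  intro u hu heq
  rcases eq_or_ne u a with rfl | hua
  · rw [hva.2] at heq; exact hine heq
  rcases eq_or_ne u b with rfl | hub
  · rw [hvb.2] at heq; exact hine heq
  rcases eq_or_ne u d with rfl | hud
  · rw [hvd.2] at heq; exact hine heq
  exact tenEdges hc hva.1 hvb.1 hvd.1 (Ne.symm hu) hab had (Ne.symm hua) hbd (Ne.symm hub)
    (Ne.symm hud)
    {i, c s(a, b), c s(a, d), c s(b, d), c s(a, u), c s(b, u), c s(d, u)}
    (card7 _ _ _ _ _ _ _)
    (by rw [hva.2]; simp) (by rw [hvb.2]; simp) (by rw [hvd.2]; simp)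
    (by rw [heq]; simp) (by simp) (by simp) (by simp) (by simp) (by simp) (by simp)

/-- The three colours of edges joining the neighbours of a degree-3 vertex are distinct. -/
lemma deg3_charges_ne (hc : IsPQColoring 5 8 c) (hn : 5 ≤ n)
    {i : Fin m} {v a b d : Fin n}
    (hva : (colorClass c i).Adj v a) (hvb : (colorClass c i).Adj v b)
    (hvd : (colorClass c i).Adj v d)
    (hab : a ≠ b) (had : a ≠ d) (hbd : b ≠ d) :
    c s(a, b) ≠ c s(a, d) := by
  intro heq
  obtain ⟨u, hu⟩ := exists_fresh (s := {v, a, b, d}) (by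
    calc ({v, a, b, d} : Finset (Fin n)).card ≤ 4 := by
          refine le_trans (Finset.card_insert_le _ _) (Nat.succ_le_succ ?_)
          refine le_trans (Finset.card_insert_le _ _) (Nat.succ_le_succ ?_)
          refine le_trans (Finset.card_insert_le _ _) (Nat.succ_le_succ ?_)
          simp
      _ < n := by omega)
  simp only [Finset.mem_insert, Finset.mem_singleton, not_or] at hu
  obtain ⟨huv, hua, hub, hud⟩ := hu
  exact tenEdges hc hva.1 hvb.1 hvd.1 (Ne.symm huv) hab had (Ne.symm hua) hbd (Ne.symm hub)
    (Ne.symm hud)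
    {i, c s(a, b), c s(b, d), c s(a, u), c s(b, u), c s(d, u), c s(v, u)}
    (card7 _ _ _ _ _ _ _)
    (by rw [hva.2]; simp) (by rw [hvb.2]; simp) (by rw [hvd.2]; simp)
    (by simp) (by simp) (by rw [← heq]; simp) (by simp) (by simp) (by simp) (by simp)

/-- Cross lemma: two cherries of distinct colours at the same vertex have distinct
joining colours. -/
lemma cross_ne (hc : IsPQColoring 5 8 c) {i i' : Fin m} {v s t s' t' : Fin n}
    (hii' : i ≠ i')
    (hvs : (colorClass c i).Adj v s) (hvt : (colorClass c i).Adj v t)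
    (hvs' : (colorClass c i').Adj v s') (hvt' : (colorClass c i').Adj v t')
    (hst : s ≠ t) (hs't' : s' ≠ t') :
    c s(s, t) ≠ c s(s', t') := by
  intro heq
  have hss' : s ≠ s' := by rintro rfl; exact hii' (hvs.2.symm.trans hvs'.2)
  have hst' : s ≠ t' := by rintro rfl; exact hii' (hvs.2.symm.trans hvt'.2)
  have hts' : t ≠ s' := by rintro rfl; exact hii' (hvt.2.symm.trans hvs'.2)
  have htt' : t ≠ t' := by rintro rfl; exact hii' (hvt.2.symm.trans hvt'.2)
  exact tenEdges hc hvs.1 hvt.1 hvs'.1 hvt'.1 hst hss' hst' hts' htt' hs't'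
    {i, i', c s(s, t), c s(s, s'), c s(s, t'), c s(t, s'), c s(t, t')}
    (card7 _ _ _ _ _ _ _)
    (by rw [hvs.2]; simp) (by rw [hvt.2]; simp) (by rw [hvs'.2]; simp) (by rw [hvt'.2]; simp)
    (by simp) (by simp) (by simp) (by simp) (by simp) (by rw [← heq]; simp)

/-- L2: missing colour at the degree-2 vertex of a cherry one of whose ends has another
neighbour. -/
lemma q_missing (hc : IsPQColoring 5 8 c) (htri : ¬ HasMonoTriangle c) (hn : 5 ≤ n)
    {i : Fin m} {v s t u : Fin n}
    (hvs : (colorClass c i).Adj v s) (hvt : (colorClass c i).Adj v t) (hst : s ≠ t)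
    (htu : (colorClass c i).Adj t u) (huv : u ≠ v) :
    ∀ w, w ≠ v → c s(v, w) ≠ c s(s, t) := by
  have hiμ : i ≠ c s(s, t) := star_ne htri hvs hvt hst
  have hus : u ≠ s := by
    rintro rfl
    apply hiμ
    rw [← htu.2, Sym2.eq_swap]
  have hut : u ≠ t := Ne.symm htu.1
  intro w hw heq
  rcases eq_or_ne w s with rfl | hws
  · rw [hvs.2] at heq; exact hiμ heq
  rcases eq_or_ne w t with rfl | hwt
  · rw [hvt.2] at heq; exact hiμ heq
  rcases eq_or_ne w u with rfl | hwu
  · -- w = u : use a fresh fifth vertex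
    obtain ⟨x, hx⟩ := exists_fresh (s := {v, s, t, w}) (by
      calc ({v, s, t, w} : Finset (Fin n)).card ≤ 4 := by
            refine le_trans (Finset.card_insert_le _ _) (Nat.succ_le_succ ?_)
            refine le_trans (Finset.card_insert_le _ _) (Nat.succ_le_succ ?_)
            refine le_trans (Finset.card_insert_le _ _) (Nat.succ_le_succ ?_)
            simp
        _ < n := by omega)
    simp only [Finset.mem_insert, Finset.mem_singleton, not_or] at hx
    obtain ⟨hxv, hxs, hxt, hxw⟩ := hx
    exact tenEdges hc hvs.1 hvt.1 (Ne.symm hw) (Ne.symm hxv) hst (Ne.symm hus) (Ne.symm hxs)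
      (Ne.symm hut) (Ne.symm hxt) (Ne.symm hxw)
      {i, c s(s, t), c s(s, w), c s(v, x), c s(s, x), c s(t, x), c s(w, x)}
      (card7 _ _ _ _ _ _ _)
      (by rw [hvs.2]; simp) (by rw [hvt.2]; simp) (by rw [heq]; simp) (by simp)
      (by simp) (by simp) (by simp) (by rw [htu.2]; simp) (by simp) (by simp)
  · exact tenEdges hc hvs.1 hvt.1 (Ne.symm huv) (Ne.symm hw) hst (Ne.symm hus) (Ne.symm hws)
      (Ne.symm hut) (Ne.symm hwt) (Ne.symm hwu)
      {i, c s(s, t), c s(s, u), c s(v, u), c s(s, w), c s(t, w), c s(u, w)}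
      (card7 _ _ _ _ _ _ _)
      (by rw [hvs.2]; simp) (by rw [hvt.2]; simp) (by simp) (by rw [heq]; simp)
      (by simp) (by simp) (by simp) (by rw [htu.2]; simp) (by simp) (by simp)

end Helpers3
section Helpers4
variable {n m : ℕ} {c : Sym2 (Fin n) → Fin m}

lemma supp_closed {V : Type*} {G : SimpleGraph V} {S : Set V}
    (hcl : ∀ a b, a ∈ S → G.Adj a b → b ∈ S) {v : V} (hv : v ∈ S) :
    (G.connectedComponentMk v).supp ⊆ S := by
  have hwalk : ∀ {a u : V}, G.Walk a u → a ∈ S → u ∈ S := by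
    intro a u w
    induction w with
    | nil => exact fun h => h
    | cons h p ih => exact fun ha => ih (hcl _ _ ha h)
  intro u hu
  rw [SimpleGraph.ConnectedComponent.mem_supp_iff] at hu
  obtain ⟨w⟩ := (SimpleGraph.ConnectedComponent.eq.mp hu).symm
  exact hwalk w hv

lemma nf_eq_single {G : SimpleGraph (Fin n)} [DecidableRel G.Adj] {x y : Fin n}
    (hd : G.degree x = 1) (hxy : G.Adj x y) : G.neighborFinset x = {y} := by
  rw [SimpleGraph.degree] at hd
  obtain ⟨a, ha⟩ := Finset.card_eq_one.mp hd
  have hv : y ∈ G.neighborFinset x := by rw [SimpleGraph.mem_neighborFinset]; exact hxy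
  rw [ha] at hv ⊢
  simp only [Finset.mem_singleton] at hv
  rw [hv]

lemma nf_eq_pair {G : SimpleGraph (Fin n)} [DecidableRel G.Adj] {x y z : Fin n}
    (hd : G.degree x = 2) (hxy : G.Adj x y) (hxz : G.Adj x z) (hyz : y ≠ z) :
    G.neighborFinset x = {y, z} := by
  have h1 : ({y, z} : Finset (Fin n)) ⊆ G.neighborFinset x := by
    intro a ha
    simp only [Finset.mem_insert, Finset.mem_singleton] at ha
    rw [SimpleGraph.mem_neighborFinset]
    rcases ha with rfl | rfl
    · exact hxy
    · exact hxz
  have h2 : (G.neighborFinset x).card ≤ ({y, z} : Finset (Fin n)).card := by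
    rw [Finset.card_insert_of_notMem (by simp [hyz]), Finset.card_singleton]
    rw [← SimpleGraph.degree, hd]
  exact (Finset.eq_of_subset_of_card_le h1 h2).symm

/-- structure of the component of the middle of a cherry whose ends have degree 1. -/
lemma ppair_supp {i : Fin m} {v s t : Fin n}
    (hvs : (colorClass c i).Adj v s) (hvt : (colorClass c i).Adj v t) (hst : s ≠ t)
    (hdv : (colorClass c i).degree v = 2)
    (hds : (colorClass c i).degree s = 1) (hdt : (colorClass c i).degree t = 1) :
    ((colorClass c i).connectedComponentMk v).supp = {s, v, t} := by
  have hnfv := nf_eq_pair hdv hvs hvt hst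
  have hnfs := nf_eq_single hds hvs.symm
  have hnft := nf_eq_single hdt hvt.symm
  apply Set.Subset.antisymm
  · apply supp_closed
    · intro a b ha hab
      have hb : b ∈ (colorClass c i).neighborFinset a := by
        rw [SimpleGraph.mem_neighborFinset]; exact hab
      rcases ha with rfl | rfl | rfl
      · rw [hnfs] at hb; simp at hb; simp [hb]
      · rw [hnfv] at hb; simp at hb
        rcases hb with rfl | rfl <;> simp
      · rw [hnft] at hb; simp at hb; simp [hb]
    · simp
  · intro x hx
    rw [SimpleGraph.ConnectedComponent.mem_supp_iff, SimpleGraph.ConnectedComponent.eq]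
    rcases hx with rfl | rfl | rfl
    · exact hvs.symm.reachable
    · rfl
    · exact hvt.symm.reachable
end Helpers4
section Helpers5
variable {n m : ℕ} {c : Sym2 (Fin n) → Fin m}

lemma fin3_cases : ∀ k : Fin 3, k = 0 ∨ k = 1 ∨ k = 2 := by decide

/-- the component of a `P`-pair belongs to `setB`. -/
lemma ppair_mem_setB {i : Fin m} {v s t : Fin n}
    (hvs : (colorClass c i).Adj v s) (hvt : (colorClass c i).Adj v t) (hst : s ≠ t)
    (hdv : (colorClass c i).degree v = 2)
    (hds : (colorClass c i).degree s = 1) (hdt : (colorClass c i).degree t = 1) :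
    (⟨i, (colorClass c i).connectedComponentMk v⟩ :
      Σ j : Fin m, (colorClass c j).ConnectedComponent) ∈ setB c := by
  have hS := ppair_supp (c := c) hvs hvt hst hdv hds hdt
  set K := (colorClass c i).connectedComponentMk v with hK
  have hsmem : s ∈ K.supp := by rw [hS]; simp
  have hvmem : v ∈ K.supp := by rw [hS]; simp
  have htmem : t ∈ K.supp := by rw [hS]; simp
  have hnst : ¬ (colorClass c i).Adj s t := by
    intro h
    have : t ∈ (colorClass c i).neighborFinset s := by
      rw [SimpleGraph.mem_neighborFinset]; exact h
    rw [nf_eq_single hds hvs.symm] at this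
    simp only [Finset.mem_singleton] at this
    exact hvt.1 this.symm
  have hnts : ¬ (colorClass c i).Adj t s := fun h => hnst h.symm
  have hsv : s ≠ v := hvs.1.symm
  have hvt' : v ≠ t := hvt.1
  let f : Fin 3 → K.supp := ![⟨s, hsmem⟩, ⟨v, hvmem⟩, ⟨t, htmem⟩]
  have hinj : Function.Injective f := by
    intro a b hab
    rcases fin3_cases a with rfl | rfl | rfl <;> rcases fin3_cases b with rfl | rfl | rfl <;>
      first
        | rfl
        | (exfalso
           simp only [f, Matrix.cons_val_zero, Matrix.cons_val_one, Matrix.head_cons,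
             Matrix.cons_val_two, Matrix.tail_cons, Subtype.mk.injEq] at hab
           first
             | exact hsv hab | exact hsv hab.symm
             | exact hvt' hab | exact hvt' hab.symm
             | exact hst hab | exact hst hab.symm)
  have hsurj : Function.Surjective f := by
    rintro ⟨x, hx⟩
    rw [hS] at hx
    rcases hx with rfl | rfl | rfl
    · exact ⟨0, rfl⟩
    · exact ⟨1, rfl⟩
    · exact ⟨2, rfl⟩
  refine ⟨?_⟩
  refine SimpleGraph.Iso.symm ⟨Equiv.ofBijective f ⟨hinj, hsurj⟩, ?_⟩
  intro a b
  show ((colorClass c i).induce K.supp).Adj (f a) (f b) ↔ (SimpleGraph.pathGraph 3).Adj a b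
  rcases fin3_cases a with rfl | rfl | rfl <;> rcases fin3_cases b with rfl | rfl | rfl <;>
    simp only [f, Matrix.cons_val_zero, Matrix.cons_val_one, Matrix.head_cons,
      Matrix.cons_val_two, Matrix.tail_cons, SimpleGraph.comap_adj,
      Function.Embedding.coe_subtype, SimpleGraph.pathGraph_adj] <;>
    simp_all [SimpleGraph.irrefl, hvs.symm, hvt, hvt.symm, hvs, hnst, hnts]

end Helpers5
section Helpers6
variable {n m : ℕ} {c : Sym2 (Fin n) → Fin m}

/-- structure extracted from membership in `setB`. -/
lemma setB_struct {i : Fin m} {K : (colorClass c i).ConnectedComponent}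
    (h : (⟨i, K⟩ : Σ j : Fin m, (colorClass c j).ConnectedComponent) ∈ setB c) :
    ∃ y0 y1 y2 : Fin n, y0 ≠ y1 ∧ y0 ≠ y2 ∧ y1 ≠ y2 ∧ K.supp = {y0, y1, y2} ∧
      (colorClass c i).Adj y0 y1 ∧ (colorClass c i).Adj y1 y2 := by
  obtain ⟨φ⟩ := h
  let ψ := φ.symm
  refine ⟨(ψ 0).1, (ψ 1).1, (ψ 2).1, ?_, ?_, ?_, ?_, ?_, ?_⟩
  · intro hh
    have : (ψ 0) = (ψ 1) := Subtype.ext hh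
    have := ψ.toEquiv.injective this
    simp at this
  · intro hh
    have : (ψ 0) = (ψ 2) := Subtype.ext hh
    have := ψ.toEquiv.injective this
    simp at this
  · intro hh
    have : (ψ 1) = (ψ 2) := Subtype.ext hh
    have := ψ.toEquiv.injective this
    simp at this
  · apply Set.Subset.antisymm
    · intro u hu
      have hk := fin3_cases (φ ⟨u, hu⟩)
      have hre : ∀ k : Fin 3, φ ⟨u, hu⟩ = k → u = (ψ k).1 := by
        intro k hk'
        show u = (φ.symm k).1
        rw [← hk', RelIso.symm_apply_apply]
      rcases hk with hk | hk | hk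
      · left; exact hre 0 hk
      · right; left; exact hre 1 hk
      · right; right; exact hre 2 hk
    · intro u hu
      rcases hu with rfl | rfl | rfl <;> exact Subtype.coe_prop _
  · exact ψ.map_adj_iff.mpr (show (SimpleGraph.pathGraph 3).Adj 0 1 by rw [SimpleGraph.pathGraph_adj]; decide)
  · exact ψ.map_adj_iff.mpr (show (SimpleGraph.pathGraph 3).Adj 1 2 by rw [SimpleGraph.pathGraph_adj]; decide)

end Helpers6
section Helpers7
variable {n m : ℕ} {c : Sym2 (Fin n) → Fin m}

/-- structure extracted from membership in `setD`: the centre of the star and its degree. -/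
lemma setD_struct {i : Fin m} {K : (colorClass c i).ConnectedComponent}
    (h : (⟨i, K⟩ : Σ j : Fin m, (colorClass c j).ConnectedComponent) ∈ setD c) :
    ∃ b a0 a1 a2 : Fin n, b ∈ K.supp ∧ a0 ≠ a1 ∧ a0 ≠ a2 ∧ a1 ≠ a2 ∧
      (colorClass c i).Adj b a0 ∧ (colorClass c i).Adj b a1 ∧ (colorClass c i).Adj b a2 := by
  obtain ⟨φ⟩ := h
  let ψ := φ.symm
  have hadj : ∀ j : Fin 3, ((colorClass c i).induce K.supp).Adj (ψ (Sum.inl 0)) (ψ (Sum.inr j)) :=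
    fun j => ψ.map_adj_iff.mpr (show starK13.Adj (Sum.inl 0) (Sum.inr j) by
      simp [starK13])
  have hne : ∀ j j' : Fin 3, j ≠ j' → ((ψ (Sum.inr j)).1 : Fin n) ≠ (ψ (Sum.inr j')).1 := by
    intro j j' hjj' hh
    exact hjj' (Sum.inr.inj (ψ.toEquiv.injective (Subtype.ext hh)))
  exact ⟨(ψ (Sum.inl 0)).1, (ψ (Sum.inr 0)).1, (ψ (Sum.inr 1)).1, (ψ (Sum.inr 2)).1,
    Subtype.coe_prop _, hne 0 1 (by decide), hne 0 2 (by decide), hne 1 2 (by decide),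
    hadj 0, hadj 1, hadj 2⟩

end Helpers7
section Helpers8
variable {n m : ℕ} {c : Sym2 (Fin n) → Fin m}

/-- L3 core: missing colour at the centre of a `B₂` cherry. -/
lemma b2_missing_core (hc : IsPQColoring 5 8 c) (htri : ¬ HasMonoTriangle c) (hn : 5 ≤ n)
    {i j : Fin m} {v s t w0 : Fin n} (hij : i ≠ j)
    (hvs : (colorClass c i).Adj v s) (hvt : (colorClass c i).Adj v t) (hst : s ≠ t)
    (hw0s : w0 ≠ s) (hw0v : w0 ≠ v) (hw0t : w0 ≠ t)
    (hMN : (∃ g, (g = s ∨ g = v ∨ g = t) ∧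
            ∀ x, (x = s ∨ x = v ∨ x = t) → x ≠ g → c s(x, w0) = j) ∨
           (c s(s, t) = j ∧ (c s(s, w0) = j ∨ c s(t, w0) = j))) :
    ∀ w, w ≠ v → c s(v, w) ≠ c s(s, t) := by
  have hiμ : i ≠ c s(s, t) := star_ne htri hvs hvt hst
  intro w hw heq
  rcases eq_or_ne w s with rfl | hws
  · rw [hvs.2] at heq; exact hiμ heq
  rcases eq_or_ne w t with rfl | hwt
  · rw [hvt.2] at heq; exact hiμ heq
  have hvsne : v ≠ s := hvs.1
  have hvtne : v ≠ t := hvt.1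
  rcases eq_or_ne w w0 with rfl | hww0
  · -- w = w0 : use a fresh fifth vertex x
    obtain ⟨x, hx⟩ := exists_fresh (s := {v, s, t, w}) (by
      calc ({v, s, t, w} : Finset (Fin n)).card ≤ 4 := by
            refine le_trans (Finset.card_insert_le _ _) (Nat.succ_le_succ ?_)
            refine le_trans (Finset.card_insert_le _ _) (Nat.succ_le_succ ?_)
            refine le_trans (Finset.card_insert_le _ _) (Nat.succ_le_succ ?_)
            simp
        _ < n := by omega)
    simp only [Finset.mem_insert, Finset.mem_singleton, not_or] at hx
    obtain ⟨hxv, hxs, hxt, hxw⟩ := hx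
    rcases hMN with ⟨g, hg, hgj⟩ | ⟨hμj, hδ⟩
    · rcases eq_or_ne v g with rfl | hvg
      ·
        exact tenEdges hc hvsne hvtne (Ne.symm hw) (Ne.symm hxv) hst (Ne.symm hws)
          (Ne.symm hxs) (Ne.symm hwt) (Ne.symm hxt) (Ne.symm hxw)
          {i, j, c s(s, t), c s(v, x), c s(s, x), c s(t, x), c s(w, x)}
          (card7 _ _ _ _ _ _ _)
          (by rw [hvs.2]; simp) (by rw [hvt.2]; simp) (by rw [heq]; simp) (by simp)
          (by simp) (by rw [hgj s (by tauto) (Ne.symm hvsne)]; simp) (by simp)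
          (by rw [hgj t (by tauto) (Ne.symm hvtne)]; simp) (by simp) (by simp)
      · -- g ≠ v, so c s(v,w0) = j = c s(s,t)
        have hvj : c s(v, w) = j := hgj v (by tauto) hvg
        have hμj : c s(s, t) = j := by rw [← heq, hvj]
        exact tenEdges hc hvsne hvtne (Ne.symm hw) (Ne.symm hxv) hst (Ne.symm hws)
          (Ne.symm hxs) (Ne.symm hwt) (Ne.symm hxt) (Ne.symm hxw)
          {i, j, c s(g, w), c s(v, x), c s(s, x), c s(t, x), c s(w, x)}
          (card7 _ _ _ _ _ _ _)
          (by rw [hvs.2]; simp) (by rw [hvt.2]; simp) (by rw [hvj]; simp) (by simp)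
          (by rw [hμj]; simp)
          (by rcases eq_or_ne s g with rfl | hsg
              · simp
              · rw [hgj s (by tauto) hsg]; simp)
          (by simp)
          (by rcases eq_or_ne t g with rfl | htg
              · simp
              · rw [hgj t (by tauto) htg]; simp)
          (by simp) (by simp)
    · rcases hδ with hδ | hδ
      · exact tenEdges hc hvsne hvtne (Ne.symm hw) (Ne.symm hxv) hst (Ne.symm hws)
          (Ne.symm hxs) (Ne.symm hwt) (Ne.symm hxt) (Ne.symm hxw)
          {i, j, c s(t, w), c s(v, x), c s(s, x), c s(t, x), c s(w, x)}
          (card7 _ _ _ _ _ _ _)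
          (by rw [hvs.2]; simp) (by rw [hvt.2]; simp) (by rw [heq, hμj]; simp) (by simp)
          (by rw [hμj]; simp) (by rw [hδ]; simp) (by simp) (by simp) (by simp) (by simp)
      · exact tenEdges hc hvsne hvtne (Ne.symm hw) (Ne.symm hxv) hst (Ne.symm hws)
          (Ne.symm hxs) (Ne.symm hwt) (Ne.symm hxt) (Ne.symm hxw)
          {i, j, c s(s, w), c s(v, x), c s(s, x), c s(t, x), c s(w, x)}
          (card7 _ _ _ _ _ _ _)
          (by rw [hvs.2]; simp) (by rw [hvt.2]; simp) (by rw [heq, hμj]; simp) (by simp)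
          (by rw [hμj]; simp) (by simp) (by simp) (by rw [hδ]; simp) (by simp) (by simp)
  · -- w ∉ {v,s,t,w0} : use the five-set {v,s,t,w0,w}
    rcases hMN with ⟨g, hg, hgj⟩ | ⟨hμj, hδ⟩
    · exact tenEdges hc hvsne hvtne (Ne.symm hw0v) (Ne.symm hw) hst (Ne.symm hw0s)
        (Ne.symm hws) (Ne.symm hw0t) (Ne.symm hwt) (Ne.symm hww0)
        {i, j, c s(s, t), c s(g, w0), c s(s, w), c s(t, w), c s(w0, w)}
        (card7 _ _ _ _ _ _ _)
        (by rw [hvs.2]; simp) (by rw [hvt.2]; simp)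
        (by rcases eq_or_ne v g with rfl | hvg
            · simp
            · rw [hgj v (by tauto) hvg]; simp)
        (by rw [heq]; simp) (by simp)
        (by rcases eq_or_ne s g with rfl | hsg
            · simp
            · rw [hgj s (by tauto) hsg]; simp)
        (by simp)
        (by rcases eq_or_ne t g with rfl | htg
            · simp
            · rw [hgj t (by tauto) htg]; simp)
        (by simp) (by simp)
    · rcases hδ with hδ | hδ
      · exact tenEdges hc hvsne hvtne (Ne.symm hw0v) (Ne.symm hw) hst (Ne.symm hw0s)
          (Ne.symm hws) (Ne.symm hw0t) (Ne.symm hwt) (Ne.symm hww0)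
          {i, j, c s(v, w0), c s(t, w0), c s(s, w), c s(t, w), c s(w0, w)}
          (card7 _ _ _ _ _ _ _)
          (by rw [hvs.2]; simp) (by rw [hvt.2]; simp) (by simp)
          (by rw [heq, hμj]; simp) (by rw [hμj]; simp) (by rw [hδ]; simp)
          (by simp) (by simp) (by simp) (by simp)
      · exact tenEdges hc hvsne hvtne (Ne.symm hw0v) (Ne.symm hw) hst (Ne.symm hw0s)
          (Ne.symm hws) (Ne.symm hw0t) (Ne.symm hwt) (Ne.symm hww0)
          {i, j, c s(v, w0), c s(s, w0), c s(s, w), c s(t, w), c s(w0, w)}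
          (card7 _ _ _ _ _ _ _)
          (by rw [hvs.2]; simp) (by rw [hvt.2]; simp) (by simp)
          (by rw [heq, hμj]; simp) (by rw [hμj]; simp) (by simp)
          (by simp) (by rw [hδ]; simp) (by simp) (by simp)

end Helpers8
section Helpers9
variable {n m : ℕ} {c : Sym2 (Fin n) → Fin m}

lemma inner_edge {i j : Fin m} {v s t : Fin n} (hij : i ≠ j)
    (hvs : (colorClass c i).Adj v s) (hvt : (colorClass c i).Adj v t) :
    ∀ a b : Fin n, a ≠ b → (a = s ∨ a = v ∨ a = t) → (b = s ∨ b = v ∨ b = t) →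
      c s(a, b) = j → ((a = s ∧ b = t) ∨ (a = t ∧ b = s)) := by
  intro a b hab ha hb habj
  have hvsj : c s(v, s) ≠ j := by rw [hvs.2]; exact hij
  have hvtj : c s(v, t) ≠ j := by rw [hvt.2]; exact hij
  have hsvj : c s(s, v) ≠ j := by rw [Sym2.eq_swap]; exact hvsj
  have htvj : c s(t, v) ≠ j := by rw [Sym2.eq_swap]; exact hvtj
  rcases ha with rfl | rfl | rfl <;> rcases hb with rfl | rfl | rfl <;>
    first
      | exact absurd rfl hab
      | exact absurd habj hvsj
      | exact absurd habj hvtj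
      | exact absurd habj hsvj
      | exact absurd habj htvj
      | exact Or.inl ⟨rfl, rfl⟩
      | exact Or.inr ⟨rfl, rfl⟩

lemma inner_edge' {i j : Fin m} {v s t : Fin n} (hij : i ≠ j)
    (hvs : (colorClass c i).Adj v s) (hvt : (colorClass c i).Adj v t) :
    ∀ a b : Fin n, a ≠ b → (a = s ∨ a = v ∨ a = t) → (b = s ∨ b = v ∨ b = t) →
      c s(a, b) = j → c s(s, t) = j := by
  intro a b hab ha hb habj
  rcases inner_edge hij hvs hvt a b hab ha hb habj with ⟨rfl, rfl⟩ | ⟨rfl, rfl⟩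
  · exact habj
  · rw [Sym2.eq_swap]; exact habj

set_option maxHeartbeats 1600000 in
/-- L3: missing colour at the centre of a cherry whose component lies in `B₂`. -/
lemma b2_missing (hc : IsPQColoring 5 8 c) (htri : ¬ HasMonoTriangle c) (hn : 5 ≤ n)
    {i : Fin m} {v s t : Fin n}
    (hvs : (colorClass c i).Adj v s) (hvt : (colorClass c i).Adj v t) (hst : s ≠ t)
    (hdv : (colorClass c i).degree v = 2)
    (hds : (colorClass c i).degree s = 1) (hdt : (colorClass c i).degree t = 1)
    (hX2 : (⟨i, (colorClass c i).connectedComponentMk v⟩ :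
      Σ j : Fin m, (colorClass c j).ConnectedComponent) ∈ setB2 c) :
    ∀ w, w ≠ v → c s(v, w) ≠ c s(s, t) := by
  set K := (colorClass c i).connectedComponentMk v with hK
  have hS : K.supp = {s, v, t} := ppair_supp hvs hvt hst hdv hds hdt
  obtain ⟨hXB, hX1⟩ := hX2
  rw [setB1] at hX1
  simp only [Set.mem_setOf_eq, not_and, not_forall] at hX1
  obtain ⟨Y, hYB, hYX, hover⟩ := hX1 hXB
  rcases Y with ⟨j, KY⟩
  have hover' : 1 < ((K.supp : Set (Fin n)) ∩ KY.supp).ncard := Nat.lt_of_not_le hover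
  obtain ⟨p, q, hp, hq, hpq⟩ := (Set.one_lt_ncard_iff (Set.toFinite _)).mp hover'
  have hij : i ≠ j := by
    rintro rfl
    apply hYX
    have h1 : (colorClass c i).connectedComponentMk p = K :=
      (SimpleGraph.ConnectedComponent.mem_supp_iff _ _).mp hp.1
    have h2 : (colorClass c i).connectedComponentMk p = KY :=
      (SimpleGraph.ConnectedComponent.mem_supp_iff _ _).mp hp.2
    rw [← h1, h2]
  obtain ⟨y0, y1, y2, h01, h02, h12, hSY, hA, hB⟩ := setB_struct hYB
  -- colours of the two edges of Y
  have hA2 : c s(y0, y1) = j := hA.2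
  have hB2 : c s(y1, y2) = j := hB.2
  have hB2' : c s(y2, y1) = j := by rw [Sym2.eq_swap]; exact hB2
  have hA2' : c s(y1, y0) = j := by rw [Sym2.eq_swap]; exact hA2
  have hinner := inner_edge' hij hvs hvt
  -- membership of p and q in the support of Y and X
  have hmemX : ∀ x : Fin n, x ∈ K.supp → x = s ∨ x = v ∨ x = t := by
    intro x hx; rw [hS] at hx; exact hx
  have hmemY : ∀ x : Fin n, x ∈ KY.supp → x = y0 ∨ x = y1 ∨ x = y2 := by
    intro x hx; rw [hSY] at hx; exact hx
  -- not all of y0 y1 y2 lie in {s,v,t}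
  have hnotall : ¬ ((y0 = s ∨ y0 = v ∨ y0 = t) ∧ (y1 = s ∨ y1 = v ∨ y1 = t) ∧
      (y2 = s ∨ y2 = v ∨ y2 = t)) := by
    rintro ⟨hy0, hy1, hy2⟩
    have e1 : c s(s, t) = j := hinner y0 y1 h01 hy0 hy1 hA2
    -- both inner edges must be {s,t}; derive y0 = y2
    have key := inner_edge hij hvs hvt
    rcases key y0 y1 h01 hy0 hy1 hA2 with ⟨r1, r2⟩ | ⟨r1, r2⟩ <;>
      rcases key y1 y2 h12 hy1 hy2 hB2 with ⟨u1, u2⟩ | ⟨u1, u2⟩ <;>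
      first
        | exact hst (u1.symm.trans r2)
        | exact hst (r2.symm.trans u1)
        | exact h02 (r1.trans u2.symm)
  -- p and q pin down two of the yk inside {s,v,t}
  have hpin : ∀ x : Fin n, x ∈ (K.supp ∩ KY.supp : Set (Fin n)) →
      (x = y0 ∨ x = y1 ∨ x = y2) ∧ (x = s ∨ x = v ∨ x = t) :=
    fun x hx => ⟨hmemY x hx.2, hmemX x hx.1⟩
  obtain ⟨hpY, hpX⟩ := hpin p hp
  obtain ⟨hqY, hqX⟩ := hpin q hq
  -- case on which yk is outside {s,v,t}
  by_cases hy1in : y1 = s ∨ y1 = v ∨ y1 = t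
  · -- the centre y1 is inside; then y0 or y2 is outside
    by_cases hy0in : y0 = s ∨ y0 = v ∨ y0 = t
    · -- y2 outside (else all in): w0 := y2, inner edge y0 y1
      have hy2out : ¬ (y2 = s ∨ y2 = v ∨ y2 = t) := fun hy2 => hnotall ⟨hy0in, hy1in, hy2⟩
      push_neg at hy2out
      obtain ⟨hy2s, hy2v, hy2t⟩ := hy2out
      have hμj : c s(s, t) = j := hinner y0 y1 h01 hy0in hy1in hA2
      -- y1 ∈ {s,t} : from key-type reasoning; derive δ : c s(s,y2) = j ∨ c s(t,y2) = j
      have hδ : c s(s, y2) = j ∨ c s(t, y2) = j := by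
        have hy1vne : y1 ≠ v := by
          rintro rfl
          rcases hy0in with rfl | rfl | rfl
          · exact hij (hvs.2.symm.trans hA2')
          · exact h01 rfl
          · exact hij (hvt.2.symm.trans hA2')
        rcases hy1in with rfl | rfl | rfl
        · exact Or.inl hB2
        · exact absurd rfl hy1vne
        · exact Or.inr hB2
      exact b2_missing_core hc htri hn hij hvs hvt hst hy2s hy2v hy2t (Or.inr ⟨hμj, hδ⟩)
    · -- y0 outside: w0 := y0, inner edge y1 y2 (need y2 inside)
      push_neg at hy0in
      obtain ⟨hy0s, hy0v, hy0t⟩ := hy0in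
      have hpne : p ≠ y0 := by
        intro h
        rcases hpX with h' | h' | h'
        · exact hy0s (h ▸ h')
        · exact hy0v (h ▸ h')
        · exact hy0t (h ▸ h')
      have hqne : q ≠ y0 := by
        intro h
        rcases hqX with h' | h' | h'
        · exact hy0s (h ▸ h')
        · exact hy0v (h ▸ h')
        · exact hy0t (h ▸ h')
      have hy2in : y2 = s ∨ y2 = v ∨ y2 = t := by
        rcases hpY with h | h | h
        · exact absurd h hpne
        · rcases hqY with h' | h' | h'
          · exact absurd h' hqne
          · exact absurd (h.trans h'.symm) hpq
          · exact h' ▸ hqX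
        · exact h ▸ hpX
      have hμj : c s(s, t) = j := hinner y1 y2 h12 hy1in hy2in hB2
      have hδ : c s(s, y0) = j ∨ c s(t, y0) = j := by
        have hy1vne : y1 ≠ v := by
          rintro rfl
          rcases hy2in with rfl | rfl | rfl
          · exact hij (hvs.2.symm.trans hB2)
          · exact h12 rfl
          · exact hij (hvt.2.symm.trans hB2)
        rcases hy1in with rfl | rfl | rfl
        · exact Or.inl hA2'
        · exact absurd rfl hy1vne
        · exact Or.inr hA2'
      exact b2_missing_core hc htri hn hij hvs hvt hst hy0s hy0v hy0t (Or.inr ⟨hμj, hδ⟩)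
  · -- the centre y1 is outside: w0 := y1, type M
    push_neg at hy1in
    obtain ⟨hy1s, hy1v, hy1t⟩ := hy1in
    have hpne : p ≠ y1 := by
      intro h
      rcases hpX with h' | h' | h'
      · exact hy1s (h ▸ h')
      · exact hy1v (h ▸ h')
      · exact hy1t (h ▸ h')
    have hqne : q ≠ y1 := by
      intro h
      rcases hqX with h' | h' | h'
      · exact hy1s (h ▸ h')
      · exact hy1v (h ▸ h')
      · exact hy1t (h ▸ h')
    have hy0in : y0 = s ∨ y0 = v ∨ y0 = t := by
      rcases hpY with h | h | h
      · exact h ▸ hpX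
      · exact absurd h hpne
      · rcases hqY with h' | h' | h'
        · exact h' ▸ hqX
        · exact absurd h' hqne
        · exact absurd (h.trans h'.symm) hpq
    have hy2in : y2 = s ∨ y2 = v ∨ y2 = t := by
      rcases hpY with h | h | h
      · rcases hqY with h' | h' | h'
        · exact absurd (h.trans h'.symm) hpq
        · exact absurd h' hqne
        · exact h' ▸ hqX
      · exact absurd h hpne
      · exact h ▸ hpX
    -- find the third element g
    have hM : ∃ g, (g = s ∨ g = v ∨ g = t) ∧
        ∀ x, (x = s ∨ x = v ∨ x = t) → x ≠ g → c s(x, y1) = j := by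
      rcases hy0in with rfl | rfl | rfl <;> rcases hy2in with rfl | rfl | rfl
      · exact absurd rfl h02
      · exact ⟨t, Or.inr (Or.inr rfl), by
          intro x hx hxg
          rcases hx with rfl | rfl | rfl
          · exact hA2
          · exact hB2'
          · exact absurd rfl hxg⟩
      · exact ⟨v, Or.inr (Or.inl rfl), by
          intro x hx hxg
          rcases hx with rfl | rfl | rfl
          · exact hA2
          · exact absurd rfl hxg
          · exact hB2'⟩
      · exact ⟨t, Or.inr (Or.inr rfl), by
          intro x hx hxg
          rcases hx with rfl | rfl | rfl
          · exact hB2'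
          · exact hA2
          · exact absurd rfl hxg⟩
      · exact absurd rfl h02
      · exact ⟨s, Or.inl rfl, by
          intro x hx hxg
          rcases hx with rfl | rfl | rfl
          · exact absurd rfl hxg
          · exact hA2
          · exact hB2'⟩
      · exact ⟨v, Or.inr (Or.inl rfl), by
          intro x hx hxg
          rcases hx with rfl | rfl | rfl
          · exact hB2'
          · exact absurd rfl hxg
          · exact hA2⟩
      · exact ⟨s, Or.inl rfl, by
          intro x hx hxg
          rcases hx with rfl | rfl | rfl
          · exact absurd rfl hxg
          · exact hB2'
          · exact hA2⟩
      · exact absurd rfl h02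
    exact b2_missing_core hc htri hn hij hvs hvt hst hy1s hy1v hy1t (Or.inl hM)

end Helpers9
section Counting
variable {n m : ℕ}

open Finset in
/-- colour-degree of a (vertex, colour) pair. -/
def degp (c : Sym2 (Fin n) → Fin m) (p : Fin n × Fin m) : ℕ :=
  (colorClass c p.2).degree p.1

open Finset in
def F0 (c : Sym2 (Fin n) → Fin m) : Finset (Fin n × Fin m) :=
  univ.filter fun p => degp c p = 0
open Finset in
def F1 (c : Sym2 (Fin n) → Fin m) : Finset (Fin n × Fin m) :=
  univ.filter fun p => degp c p = 1
open Finset in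
def F2 (c : Sym2 (Fin n) → Fin m) : Finset (Fin n × Fin m) :=
  univ.filter fun p => degp c p = 2
open Finset in
def F3 (c : Sym2 (Fin n) → Fin m) : Finset (Fin n × Fin m) :=
  univ.filter fun p => degp c p = 3

open Finset in
def Pset (c : Sym2 (Fin n) → Fin m) : Finset (Fin n × Fin m) :=
  (F2 c).filter fun p => ∀ u, (colorClass c p.2).Adj p.1 u → degp c (u, p.2) = 1
open Finset in
def Qset (c : Sym2 (Fin n) → Fin m) : Finset (Fin n × Fin m) :=
  (F2 c).filter fun p => ¬ ∀ u, (colorClass c p.2).Adj p.1 u → degp c (u, p.2) = 1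

open scoped Classical in
noncomputable def PB1 (c : Sym2 (Fin n) → Fin m) : Finset (Fin n × Fin m) :=
  (Pset c).filter fun p =>
    (⟨p.2, (colorClass c p.2).connectedComponentMk p.1⟩ :
      Σ j : Fin m, (colorClass c j).ConnectedComponent) ∈ setB1 c
noncomputable def PB2 (c : Sym2 (Fin n) → Fin m) : Finset (Fin n × Fin m) :=
  Pset c \ PB1 c

noncomputable def charge2 (c : Sym2 (Fin n) → Fin m) (p : Fin n × Fin m) :
    Fin n × Fin m :=
  if h : ((colorClass c p.2).neighborFinset p.1).Nonempty then
    (p.1, c s(((colorClass c p.2).neighborFinset p.1).min' h,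
              ((colorClass c p.2).neighborFinset p.1).max' h))
  else p

noncomputable def charge3 (c : Sym2 (Fin n) → Fin m) (p : Fin n × Fin m) (k : Fin 3) :
    Fin n × Fin m :=
  if h : ((colorClass c p.2).neighborFinset p.1).card = 3 then
    let e := ((colorClass c p.2).neighborFinset p.1).orderIsoOfFin h
    (p.1, if k = 0 then c s((e 1 : _), (e 2 : _))
          else if k = 1 then c s((e 0 : _), (e 2 : _)) else c s((e 0 : _), (e 1 : _)))
  else p

variable {c : Sym2 (Fin n) → Fin m}

lemma adj_of_mem_nf {i : Fin m} {v w : Fin n}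
    (h : w ∈ (colorClass c i).neighborFinset v) : (colorClass c i).Adj v w := by
  rwa [SimpleGraph.mem_neighborFinset] at h

lemma mem_F2_spec {p : Fin n × Fin m} (hp : p ∈ F2 c) :
    ∃ s t : Fin n, s ≠ t ∧ (colorClass c p.2).Adj p.1 s ∧ (colorClass c p.2).Adj p.1 t ∧
      charge2 c p = (p.1, c s(s, t)) ∧
      (colorClass c p.2).neighborFinset p.1 = {s, t} := by
  have hcard : ((colorClass c p.2).neighborFinset p.1).card = 2 :=
    (Finset.mem_filter.mp hp).2
  have hne : ((colorClass c p.2).neighborFinset p.1).Nonempty := by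
    rw [← Finset.card_pos, hcard]; omega
  set N := (colorClass c p.2).neighborFinset p.1 with hN
  refine ⟨N.min' hne, N.max' hne, ?_, ?_, ?_, ?_, ?_⟩
  · exact ne_of_lt (N.min'_lt_max'_of_card (by omega))
  · exact adj_of_mem_nf (N.min'_mem hne)
  · exact adj_of_mem_nf (N.max'_mem hne)
  · rw [charge2, dif_pos hne]
  · exact nf_eq_pair (by rw [SimpleGraph.degree, ← hN, hcard])
      (adj_of_mem_nf (N.min'_mem hne))
      (adj_of_mem_nf (N.max'_mem hne))
      (ne_of_lt (N.min'_lt_max'_of_card (by omega)))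

lemma mem_F3_spec {p : Fin n × Fin m} (hp : p ∈ F3 c) :
    ∃ a0 a1 a2 : Fin n, a0 ≠ a1 ∧ a0 ≠ a2 ∧ a1 ≠ a2 ∧
      (colorClass c p.2).Adj p.1 a0 ∧ (colorClass c p.2).Adj p.1 a1 ∧
      (colorClass c p.2).Adj p.1 a2 ∧
      charge3 c p 0 = (p.1, c s(a1, a2)) ∧
      charge3 c p 1 = (p.1, c s(a0, a2)) ∧
      charge3 c p 2 = (p.1, c s(a0, a1)) := by
  have hcard : ((colorClass c p.2).neighborFinset p.1).card = 3 :=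
    (Finset.mem_filter.mp hp).2
  set N := (colorClass c p.2).neighborFinset p.1 with hN
  set e := N.orderIsoOfFin hcard with he
  refine ⟨e 0, e 1, e 2, ?_, ?_, ?_, ?_, ?_, ?_, ?_, ?_, ?_⟩
  · intro hh; have := e.injective (Subtype.ext hh); simp at this
  · intro hh; have := e.injective (Subtype.ext hh); simp at this
  · intro hh; have := e.injective (Subtype.ext hh); simp at this
  · exact adj_of_mem_nf (e 0).2
  · exact adj_of_mem_nf (e 1).2
  · exact adj_of_mem_nf (e 2).2
  · rw [charge3, dif_pos hcard]; rfl
  · rw [charge3, dif_pos hcard]; rfl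
  · rw [charge3, dif_pos hcard]; rfl

lemma deg0_of_missing {i : Fin m} {v : Fin n}
    (h : ∀ u, u ≠ v → c s(v, u) ≠ i) : degp c (v, i) = 0 := by
  rw [degp, SimpleGraph.degree, Finset.card_eq_zero]
  rw [Finset.eq_empty_iff_forall_notMem]
  intro u hu
  rw [SimpleGraph.mem_neighborFinset] at hu
  exact h u (Ne.symm hu.1) hu.2

end Counting
section Charging
variable {n m : ℕ} {c : Sym2 (Fin n) → Fin m}

noncomputable def Phi3 (c : Sym2 (Fin n) → Fin m) : Finset (Fin n × Fin m) :=
  ((F3 c) ×ˢ (Finset.univ : Finset (Fin 3))).image fun q => charge3 c q.1 q.2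

noncomputable def Phi2 (c : Sym2 (Fin n) → Fin m) : Finset (Fin n × Fin m) :=
  ((Qset c) ∪ (PB2 c)).image (charge2 c)

lemma Qset_sub : Qset c ⊆ F2 c := Finset.filter_subset _ _
lemma Pset_sub : Pset c ⊆ F2 c := Finset.filter_subset _ _
lemma PB2_sub : PB2 c ⊆ Pset c := Finset.sdiff_subset
lemma QP2_sub : Qset c ∪ PB2 c ⊆ F2 c :=
  Finset.union_subset Qset_sub (PB2_sub.trans Pset_sub)

/-- the three charges of an `F3` pair are pairwise distinct in the second coordinate. -/
lemma charge3_pairwise (hc : IsPQColoring 5 8 c) (hn : 5 ≤ n)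
    {i : Fin m} {v a0 a1 a2 : Fin n}
    (hv0 : (colorClass c i).Adj v a0) (hv1 : (colorClass c i).Adj v a1)
    (hv2 : (colorClass c i).Adj v a2)
    (h01 : a0 ≠ a1) (h02 : a0 ≠ a2) (h12 : a1 ≠ a2) :
    c s(a1, a2) ≠ c s(a0, a2) ∧ c s(a1, a2) ≠ c s(a0, a1) ∧
      c s(a0, a2) ≠ c s(a0, a1) := by
  refine ⟨?_, ?_, ?_⟩
  · intro h
    exact deg3_charges_ne hc hn hv2 hv1 hv0 (Ne.symm h12) (Ne.symm h02) (Ne.symm h01)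
      (by rw [Sym2.eq_swap, h, Sym2.eq_swap])
  · intro h
    exact deg3_charges_ne hc hn hv1 hv2 hv0 h12 (Ne.symm h01) (Ne.symm h02)
      (by rw [h, Sym2.eq_swap])
  · exact deg3_charges_ne hc hn hv0 hv2 hv1 h02 h01 (Ne.symm h12)

lemma Phi3_sub_F0 (hc : IsPQColoring 5 8 c) (htri : ¬ HasMonoTriangle c) :
    Phi3 c ⊆ F0 c := by
  intro a ha
  obtain ⟨q, hq, rfl⟩ := Finset.mem_image.mp ha
  obtain ⟨hq3, -⟩ := Finset.mem_product.mp hq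
  obtain ⟨a0, a1, a2, h01, h02, h12, hv0, hv1, hv2, hc0, hc1, hc2⟩ := mem_F3_spec hq3
  simp only [F0, Finset.mem_filter]
  refine ⟨Finset.mem_univ _, ?_⟩
  rcases fin3_cases q.2 with hk | hk | hk <;> rw [hk]
  · rw [hc0]; exact deg0_of_missing (deg3_missing hc htri hv1 hv2 hv0 h12
      (Ne.symm h01) (Ne.symm h02))
  · rw [hc1]; exact deg0_of_missing (deg3_missing hc htri hv0 hv2 hv1 h02 h01
      (Ne.symm h12))
  · rw [hc2]; exact deg0_of_missing (deg3_missing hc htri hv0 hv1 hv2 h01 h02 h12)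

lemma Phi2_sub_F0 (hc : IsPQColoring 5 8 c) (htri : ¬ HasMonoTriangle c) (hn : 5 ≤ n) :
    Phi2 c ⊆ F0 c := by
  classical
  intro a ha
  obtain ⟨p, hp, rfl⟩ := Finset.mem_image.mp ha
  obtain ⟨s, t, hst, hvs, hvt, hch, hnf⟩ := mem_F2_spec (QP2_sub hp)
  simp only [F0, Finset.mem_filter]
  refine ⟨Finset.mem_univ _, ?_⟩
  rw [hch]
  rcases Finset.mem_union.mp hp with hQ | hP2
  · -- Q-pair
    obtain ⟨hF2, hnot⟩ := Finset.mem_filter.mp hQ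
    push_neg at hnot
    obtain ⟨u, hadj, hdu⟩ := hnot
    have hu_mem : u ∈ ({s, t} : Finset (Fin n)) := by
      rw [← hnf, SimpleGraph.mem_neighborFinset]; exact hadj
    have hdeg1 : 1 < ((colorClass c p.2).neighborFinset u).card := by
      have h1 : p.1 ∈ (colorClass c p.2).neighborFinset u := by
        rw [SimpleGraph.mem_neighborFinset]; exact hadj.symm
      have hge : 0 < ((colorClass c p.2).neighborFinset u).card :=
        Finset.card_pos.mpr ⟨p.1, h1⟩
      have : ((colorClass c p.2).neighborFinset u).card ≠ 1 := hdu
      omega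
    obtain ⟨u', hu'_mem, hu'v⟩ := Finset.exists_mem_ne hdeg1 p.1
    have hadj' : (colorClass c p.2).Adj u u' := adj_of_mem_nf hu'_mem
    simp only [Finset.mem_insert, Finset.mem_singleton] at hu_mem
    rcases hu_mem with rfl | rfl
    · -- u = s : apply q_missing with roles swapped
      apply deg0_of_missing
      intro w hw hweq
      exact q_missing hc htri hn hvt hvs (Ne.symm hst) hadj' hu'v w hw
        (by rw [hweq, Sym2.eq_swap])
    · exact deg0_of_missing (q_missing hc htri hn hvs hvt hst hadj' hu'v)
  · -- PB2-pair
    have hPmem : p ∈ Pset c := PB2_sub hP2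
    obtain ⟨hF2, hall⟩ := Finset.mem_filter.mp hPmem
    have hds : (colorClass c p.2).degree s = 1 := hall s hvs
    have hdt : (colorClass c p.2).degree t = 1 := hall t hvt
    have hdv : (colorClass c p.2).degree p.1 = 2 := (Finset.mem_filter.mp hF2).2
    have hnB1 : (⟨p.2, (colorClass c p.2).connectedComponentMk p.1⟩ :
        Σ j : Fin m, (colorClass c j).ConnectedComponent) ∉ setB1 c := by
      intro hmem
      obtain ⟨hPs, hnPB1⟩ := Finset.mem_sdiff.mp hP2
      exact hnPB1 (by rw [PB1, Finset.mem_filter]; exact ⟨hPs, hmem⟩)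
    have hX2 : (⟨p.2, (colorClass c p.2).connectedComponentMk p.1⟩ :
        Σ j : Fin m, (colorClass c j).ConnectedComponent) ∈ setB2 c :=
      ⟨ppair_mem_setB hvs hvt hst hdv hds hdt, hnB1⟩
    exact deg0_of_missing (b2_missing hc htri hn hvs hvt hst hdv hds hdt hX2)

lemma Phi2_card (hc : IsPQColoring 5 8 c) : (Phi2 c).card = (Qset c).card + (PB2 c).card := by
  rw [Phi2, Finset.card_image_of_injOn, Finset.card_union_of_disjoint]
  · -- disjointness of Qset and PB2
    rw [Finset.disjoint_left]
    intro p hQ hP2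
    have h1 := (Finset.mem_filter.mp hQ).2
    have h2 := (Finset.mem_filter.mp (PB2_sub hP2)).2
    exact h1 h2
  · -- injectivity
    intro p hp p' hp' heq
    obtain ⟨s, t, hst, hvs, hvt, hch, -⟩ := mem_F2_spec (QP2_sub hp)
    obtain ⟨s', t', hst', hvs', hvt', hch', -⟩ := mem_F2_spec (QP2_sub hp')
    have heq2 : charge2 c p = charge2 c p' := heq
    rw [hch, hch', Prod.mk.injEq] at heq2
    obtain ⟨h1, h2⟩ := heq2
    rcases eq_or_ne p.2 p'.2 with h3 | h3
    · exact Prod.ext h1 h3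
    · exfalso
      rw [← h1] at hvs' hvt'
      exact cross_ne hc h3 hvs hvt hvs' hvt' hst hst' h2

lemma Phi3_card (hc : IsPQColoring 5 8 c) (hn : 5 ≤ n) :
    (Phi3 c).card = 3 * (F3 c).card := by
  rw [Phi3, Finset.card_image_of_injOn]
  · rw [Finset.card_product]
    simp [Nat.mul_comm]
  · intro q hq q' hq' heq
    obtain ⟨hq3, -⟩ := Finset.mem_product.mp (Finset.mem_coe.mp hq)
    obtain ⟨hq3', -⟩ := Finset.mem_product.mp (Finset.mem_coe.mp hq')
    obtain ⟨a0, a1, a2, h01, h02, h12, hv0, hv1, hv2, hc0, hc1, hc2⟩ := mem_F3_spec hq3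
    obtain ⟨b0, b1, b2, g01, g02, g12, hw0, hw1, hw2, hd0, hd1, hd2⟩ := mem_F3_spec hq3'
    -- compute both charges
    have hx : ∀ k : Fin 3, ∃ x y, x ≠ y ∧ (colorClass c q.1.2).Adj q.1.1 x ∧
        (colorClass c q.1.2).Adj q.1.1 y ∧ charge3 c q.1 k = (q.1.1, c s(x, y)) := by
      intro k
      rcases fin3_cases k with hk | hk | hk <;> rw [hk]
      · exact ⟨a1, a2, h12, hv1, hv2, hc0⟩
      · exact ⟨a0, a2, h02, hv0, hv2, hc1⟩
      · exact ⟨a0, a1, h01, hv0, hv1, hc2⟩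
    have hy : ∀ k : Fin 3, ∃ x y, x ≠ y ∧ (colorClass c q'.1.2).Adj q'.1.1 x ∧
        (colorClass c q'.1.2).Adj q'.1.1 y ∧ charge3 c q'.1 k = (q'.1.1, c s(x, y)) := by
      intro k
      rcases fin3_cases k with hk | hk | hk <;> rw [hk]
      · exact ⟨b1, b2, g12, hw1, hw2, hd0⟩
      · exact ⟨b0, b2, g02, hw0, hw2, hd1⟩
      · exact ⟨b0, b1, g01, hw0, hw1, hd2⟩
    obtain ⟨x, y, hxy, hax, hay, hcx⟩ := hx q.2
    obtain ⟨x', y', hxy', hax', hay', hcx'⟩ := hy q'.2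
    have heqq : charge3 c q.1 q.2 = charge3 c q'.1 q'.2 := heq
    have heq1 : charge3 c q.1 q.2 = charge3 c q'.1 q'.2 := heq
    rw [hcx, hcx', Prod.mk.injEq] at heq1
    obtain ⟨h1, h2⟩ := heq1
    rcases eq_or_ne q.1.2 q'.1.2 with h3 | h3
    · -- same pair, distinct k impossible
      have hpp : q.1 = q'.1 := Prod.ext h1 h3
      rcases eq_or_ne q.2 q'.2 with h4 | h4
      · exact Prod.ext hpp h4
      · exfalso
        -- distinct k on the same F3-pair give distinct charges
        have hpair := charge3_pairwise hc hn hv0 hv1 hv2 h01 h02 h12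
        have heq2 : charge3 c q.1 q.2 = charge3 c q.1 q'.2 := by
          rw [hpp]; rw [hpp] at heqq; exact heqq
        rcases fin3_cases q.2 with hk | hk | hk <;> rcases fin3_cases q'.2 with hk' | hk' | hk' <;>
          rw [hk, hk'] at heq2 h4 <;>
          first
            | exact h4 rfl
            | (rw [hc0, hc1] at heq2; exact hpair.1 (congrArg Prod.snd heq2))
            | (rw [hc1, hc0] at heq2; exact hpair.1 (congrArg Prod.snd heq2).symm)
            | (rw [hc0, hc2] at heq2; exact hpair.2.1 (congrArg Prod.snd heq2))
            | (rw [hc2, hc0] at heq2; exact hpair.2.1 (congrArg Prod.snd heq2).symm)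
            | (rw [hc1, hc2] at heq2; exact hpair.2.2 (congrArg Prod.snd heq2))
            | (rw [hc2, hc1] at heq2; exact hpair.2.2 (congrArg Prod.snd heq2).symm)
    · exfalso
      rw [← h1] at hax' hay'
      exact cross_ne hc h3 hax hay hax' hay' hxy hxy' h2

lemma Phi_disjoint (hc : IsPQColoring 5 8 c) : Disjoint (Phi3 c) (Phi2 c) := by
  rw [Finset.disjoint_left]
  intro a ha3 ha2
  obtain ⟨q, hq, hq_eq⟩ := Finset.mem_image.mp ha3
  obtain ⟨p', hp', hp'_eq⟩ := Finset.mem_image.mp ha2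
  obtain ⟨hq3, -⟩ := Finset.mem_product.mp hq
  obtain ⟨a0, a1, a2, h01, h02, h12, hv0, hv1, hv2, hc0, hc1, hc2⟩ := mem_F3_spec hq3
  obtain ⟨s', t', hst', hvs', hvt', hch', -⟩ := mem_F2_spec (QP2_sub hp')
  have hx : ∃ x y, x ≠ y ∧ (colorClass c q.1.2).Adj q.1.1 x ∧
      (colorClass c q.1.2).Adj q.1.1 y ∧ charge3 c q.1 q.2 = (q.1.1, c s(x, y)) := by
    rcases fin3_cases q.2 with hk | hk | hk <;> rw [hk]
    · exact ⟨a1, a2, h12, hv1, hv2, hc0⟩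
    · exact ⟨a0, a2, h02, hv0, hv2, hc1⟩
    · exact ⟨a0, a1, h01, hv0, hv1, hc2⟩
  obtain ⟨x, y, hxy, hax, hay, hcx⟩ := hx
  have heq : charge3 c q.1 q.2 = charge2 c p' := by rw [hq_eq, hp'_eq]
  rw [hcx, hch', Prod.mk.injEq] at heq
  obtain ⟨h1, h2⟩ := heq
  rcases eq_or_ne q.1.2 p'.2 with h3 | h3
  · -- same colour: degrees 3 and 2 clash
    have hd3 : degp c q.1 = 3 := (Finset.mem_filter.mp hq3).2
    have hd2 : degp c p' = 2 := (Finset.mem_filter.mp (QP2_sub hp')).2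
    have : q.1 = p' := Prod.ext h1 h3
    rw [this, hd2] at hd3
    omega
  · rw [← h1] at hvs' hvt'
    exact cross_ne hc h3 hax hay hvs' hvt' hxy hst' h2

lemma charge_card (hc : IsPQColoring 5 8 c) (htri : ¬ HasMonoTriangle c) (hn : 5 ≤ n) :
    3 * (F3 c).card + ((Qset c).card + (PB2 c).card) ≤ (F0 c).card := by
  have hsub : Phi3 c ∪ Phi2 c ⊆ F0 c :=
    Finset.union_subset (Phi3_sub_F0 hc htri) (Phi2_sub_F0 hc htri hn)
  calc 3 * (F3 c).card + ((Qset c).card + (PB2 c).card)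
      = (Phi3 c).card + (Phi2 c).card := by rw [Phi3_card hc hn, Phi2_card hc]
    _ = (Phi3 c ∪ Phi2 c).card := (Finset.card_union_of_disjoint (Phi_disjoint hc)).symm
    _ ≤ (F0 c).card := Finset.card_le_card hsub

end Charging
section Assembly
variable {n m : ℕ} {c : Sym2 (Fin n) → Fin m}

open scoped Classical in
noncomputable def centerD (c : Sym2 (Fin n) → Fin m)
    (X : Σ i : Fin m, (colorClass c i).ConnectedComponent) : Fin n :=
  if h : X ∈ setD c then ((Classical.choice h).symm (Sum.inl 0)).val else Quot.out X.2

lemma centerD_spec (hc : IsPQColoring 5 8 c)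
    {X : Σ i : Fin m, (colorClass c i).ConnectedComponent} (h : X ∈ setD c) :
    centerD c X ∈ X.2.supp ∧ (centerD c X, X.1) ∈ F3 c := by
  classical
  have hcd : centerD c X = ((Classical.choice h).symm (Sum.inl 0)).val := by
    rw [centerD, dif_pos h]
  set φ := Classical.choice h with hφ
  set ψ := φ.symm with hψ
  have hb : centerD c X = (ψ (Sum.inl 0)).val := hcd
  have hadj : ∀ j : Fin 3,
      ((colorClass c X.1).induce X.2.supp).Adj (ψ (Sum.inl 0)) (ψ (Sum.inr j)) :=
    fun j => ψ.map_adj_iff.mpr (show starK13.Adj (Sum.inl 0) (Sum.inr j) by simp [starK13])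
  have hne : ∀ j j' : Fin 3, j ≠ j' → ((ψ (Sum.inr j)).1 : Fin n) ≠ (ψ (Sum.inr j')).1 := by
    intro j j' hjj' hh
    exact hjj' (Sum.inr.inj (ψ.toEquiv.injective (Subtype.ext hh)))
  constructor
  · rw [hb]; exact Subtype.coe_prop _
  · have hsub : ({(ψ (Sum.inr 0)).1, (ψ (Sum.inr 1)).1, (ψ (Sum.inr 2)).1} : Finset (Fin n))
        ⊆ (colorClass c X.1).neighborFinset (centerD c X) := by
      intro x hx
      rw [SimpleGraph.mem_neighborFinset]
      simp only [Finset.mem_insert, Finset.mem_singleton] at hx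
      rcases hx with rfl | rfl | rfl
      · rw [hb]; exact hadj 0
      · rw [hb]; exact hadj 1
      · rw [hb]; exact hadj 2
    have hcard3 : ({(ψ (Sum.inr 0)).1, (ψ (Sum.inr 1)).1, (ψ (Sum.inr 2)).1} :
        Finset (Fin n)).card = 3 := by
      rw [Finset.card_insert_of_notMem, Finset.card_insert_of_notMem,
        Finset.card_singleton]
      · simp only [Finset.mem_singleton]
        exact hne 1 2 (by decide)
      · simp only [Finset.mem_insert, Finset.mem_singleton, not_or]
        exact ⟨hne 0 1 (by decide), hne 0 2 (by decide)⟩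
    have h3le : 3 ≤ (colorClass c X.1).degree (centerD c X) := by
      rw [SimpleGraph.degree, ← hcard3]
      exact Finset.card_le_card hsub
    have hle3 := deg_le_three hc X.1 (centerD c X)
    simp only [F3, Finset.mem_filter]
    have hdegp : degp c (centerD c X, X.1) = (colorClass c X.1).degree (centerD c X) := rfl
    exact ⟨Finset.mem_univ _, by omega⟩

lemma setD_le_F3 (hc : IsPQColoring 5 8 c) : (setD c).ncard ≤ (F3 c).card := by
  classical
  have hinj : Set.InjOn (fun X => ((centerD c X, X.1) : Fin n × Fin m)) (setD c) := by
    rintro ⟨i, K⟩ hX ⟨i', K'⟩ hX' heq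
    simp only [Prod.mk.injEq] at heq
    obtain ⟨h1, h2⟩ := heq
    subst h2
    have hm1 := (centerD_spec hc hX).1
    have hm2 := (centerD_spec hc hX').1
    rw [SimpleGraph.ConnectedComponent.mem_supp_iff] at hm1 hm2
    rw [h1] at hm1
    rw [hm1] at hm2
    have hKK : K = K' := hm2
    rw [hKK]
  calc (setD c).ncard
      = ((fun X => ((centerD c X, X.1) : Fin n × Fin m)) '' setD c).ncard :=
        (Set.ncard_image_of_injOn hinj).symm
    _ ≤ ((F3 c : Finset (Fin n × Fin m)) : Set (Fin n × Fin m)).ncard := by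
        apply Set.ncard_le_ncard _ (Set.toFinite _)
        rintro a ⟨X, hX, rfl⟩
        exact (centerD_spec hc hX).2
    _ = (F3 c).card := Set.ncard_coe_finset _

lemma PB1_le_setB1 : (PB1 c).card ≤ (setB1 c).ncard := by
  classical
  set g : Fin n × Fin m → Σ j : Fin m, (colorClass c j).ConnectedComponent :=
    fun p => ⟨p.2, (colorClass c p.2).connectedComponentMk p.1⟩ with hg
  have hinj : Set.InjOn g (↑(PB1 c) : Set (Fin n × Fin m)) := by
    rintro ⟨v, i⟩ hp ⟨v', i'⟩ hp' heq
    simp only [Finset.coe_filter, Set.mem_setOf_eq, PB1] at hp hp'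
    have h1 : i = i' := congrArg Sigma.fst heq
    subst h1
    have h2 : (colorClass c i).connectedComponentMk v =
        (colorClass c i).connectedComponentMk v' := by
      have := Sigma.mk.inj_iff.mp heq
      exact eq_of_heq this.2
    -- structure of p
    obtain ⟨hPs, -⟩ := hp
    obtain ⟨hPs', -⟩ := hp'
    obtain ⟨hF2, hall⟩ := Finset.mem_filter.mp hPs
    obtain ⟨hF2', hall'⟩ := Finset.mem_filter.mp hPs'
    obtain ⟨s, t, hst, hvs, hvt, -, -⟩ := mem_F2_spec hF2
    have hsupp := ppair_supp (v := v) (s := s) (t := t) hvs hvt hst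
      (Finset.mem_filter.mp hF2).2 (hall s hvs) (hall t hvt)
    have hv' : v' ∈ ((colorClass c i).connectedComponentMk v).supp := by
      rw [SimpleGraph.ConnectedComponent.mem_supp_iff, ← h2]
    rw [hsupp] at hv'
    have hdv' : degp c (v', i) = 2 := (Finset.mem_filter.mp hF2').2
    rcases hv' with rfl | rfl | rfl
    · exfalso; have := hall v' hvs; rw [this] at hdv'; exact absurd hdv' (by omega)
    · rfl
    · exfalso; have := hall v' hvt; rw [this] at hdv'; exact absurd hdv' (by omega)
  calc (PB1 c).card = (↑(PB1 c) : Set (Fin n × Fin m)).ncard :=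
        (Set.ncard_coe_finset _).symm
    _ = (g '' ↑(PB1 c)).ncard := (Set.ncard_image_of_injOn hinj).symm
    _ ≤ (setB1 c).ncard := by
        apply Set.ncard_le_ncard _ (Set.toFinite _)
        rintro a ⟨p, hp, rfl⟩
        have := Finset.mem_coe.mp hp
        rw [PB1, Finset.mem_filter] at this
        exact this.2

lemma card_partition (hc : IsPQColoring 5 8 c) :
    (F0 c).card + (F1 c).card + (F2 c).card + (F3 c).card = n * m := by
  classical
  have hmap : ∀ p : Fin n × Fin m, p ∈ (Finset.univ : Finset (Fin n × Fin m)) →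
      degp c p ∈ Finset.range 4 := by
    intro p _
    rw [Finset.mem_range]
    have := deg_le_three hc p.2 p.1
    have h : degp c p ≤ 3 := this
    omega
  have := Finset.card_eq_sum_card_fiberwise hmap
  rw [Finset.card_univ, Fintype.card_prod, Fintype.card_fin, Fintype.card_fin] at this
  rw [show (4 : ℕ) = 3 + 1 from rfl] at this
  rw [Finset.sum_range_succ, Finset.sum_range_succ, Finset.sum_range_succ,
    Finset.sum_range_one] at this
  rw [F0, F1, F2, F3]
  omega

lemma sum_degp : ∑ p : Fin n × Fin m, degp c p = n * (n - 1) := by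
  rw [Fintype.sum_prod_type]
  have : ∀ v : Fin n, ∑ i : Fin m, degp c (v, i) = n - 1 := fun v => sum_degree v
  calc ∑ v : Fin n, ∑ i : Fin m, degp c (v, i) = ∑ _v : Fin n, (n - 1) := by
        exact Finset.sum_congr rfl fun v _ => this v
    _ = n * (n - 1) := by rw [Finset.sum_const, Finset.card_univ, Fintype.card_fin,
        smul_eq_mul]

lemma sum_partition (hc : IsPQColoring 5 8 c) :
    (F1 c).card + 2 * (F2 c).card + 3 * (F3 c).card = n * (n - 1) := by
  classical
  have hmap : ∀ p : Fin n × Fin m, p ∈ (Finset.univ : Finset (Fin n × Fin m)) →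
      degp c p ∈ Finset.range 4 := by
    intro p _
    rw [Finset.mem_range]
    have h : degp c p ≤ 3 := deg_le_three hc p.2 p.1
    omega
  have hfib := Finset.sum_fiberwise_of_maps_to hmap (degp c)
  rw [sum_degp] at hfib
  rw [show (4 : ℕ) = 3 + 1 from rfl] at hfib
  rw [Finset.sum_range_succ, Finset.sum_range_succ, Finset.sum_range_succ,
    Finset.sum_range_one] at hfib
  have h0 : ∀ k, ∑ p ∈ Finset.univ.filter (fun p => degp c p = k), degp c p =
      k * (Finset.univ.filter (fun p => degp c p = k)).card := by
    intro k
    rw [Finset.sum_congr rfl (fun p hp => (Finset.mem_filter.mp hp).2),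
      Finset.sum_const, smul_eq_mul, Nat.mul_comm]
  rw [h0 0, h0 1, h0 2, h0 3] at hfib
  rw [F1, F2, F3]
  omega

lemma F2_split : (Pset c).card + (Qset c).card = (F2 c).card := by
  classical
  exact Finset.card_filter_add_card_filter_not _

lemma Pset_split : (PB2 c).card + (PB1 c).card = (Pset c).card := by
  classical
  exact Finset.card_sdiff_add_card_eq_card (Finset.filter_subset _ _)

end Assembly
/-- For a `(5,8)`-coloring of `K_n` (`n ≥ 5`) with `m` colors and no
monochromatic triangle, `m·n − 2·binom(n,2) ≥ |D| − |B₁|`. -/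
theorem degree_count_inequality {n m : ℕ} (hn : 5 ≤ n)
    (c : Sym2 (Fin n) → Fin m) (hc : IsPQColoring 5 8 c)
    (htri : ¬ HasMonoTriangle c) :
    ((setD c).ncard : ℝ) - (setB1 c).ncard ≤ (m : ℝ) * n - 2 * (n.choose 2) := by
  have A3 : 2 * (n.choose 2) = n * (n - 1) := by
    obtain ⟨k, hk⟩ := Nat.even_mul_succ_self (n - 1)
    have h1 : n * (n - 1) = (n - 1) * (n - 1 + 1) := by
      rw [Nat.sub_add_cancel (by omega : 1 ≤ n), Nat.mul_comm]
    have h2 : n * (n - 1) = k + k := h1.trans hk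
    rw [Nat.choose_two_right]
    omega
  have B2 : (F1 c).card + 2 * (F2 c).card + 3 * (F3 c).card = 2 * (n.choose 2) :=
    (sum_partition hc).trans A3.symm
  have r1 : ((F0 c).card : ℝ) + (F1 c).card + (F2 c).card + (F3 c).card = (n : ℝ) * m := by
    exact_mod_cast card_partition hc
  have r2 : ((F1 c).card : ℝ) + 2 * (F2 c).card + 3 * (F3 c).card
      = 2 * (n.choose 2 : ℝ) := by exact_mod_cast B2
  have r4 : 3 * ((F3 c).card : ℝ) + (((Qset c).card : ℝ) + ((PB2 c).card : ℝ))
      ≤ ((F0 c).card : ℝ) := by exact_mod_cast charge_card hc htri hn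
  have r5 : ((Pset c).card : ℝ) + ((Qset c).card : ℝ) = ((F2 c).card : ℝ) := by
    exact_mod_cast F2_split (c := c)
  have r6 : ((PB2 c).card : ℝ) + ((PB1 c).card : ℝ) = ((Pset c).card : ℝ) := by
    exact_mod_cast Pset_split (c := c)
  have r7 : ((setD c).ncard : ℝ) ≤ ((F3 c).card : ℝ) := by
    exact_mod_cast setD_le_F3 hc
  have r8 : ((PB1 c).card : ℝ) ≤ ((setB1 c).ncard : ℝ) := by
    exact_mod_cast PB1_le_setB1 (c := c)
  have hcomm : (m : ℝ) * n = (n : ℝ) * m := mul_comm _ _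
  linarith
end

section
/- Let n ≥ 5 and let c be a (5,8)-coloring of K_n with m colors and with no monochromatic triangle. Then m·n ≥ 4|D| + 6|B_1|. -/
open SimpleGraph

section EGAux

open SimpleGraph

variable {n m : ℕ} {c : Sym2 (Fin n) → Fin m}

lemma eg_key5 (hc : IsPQColoring 5 8 c)
    (v1 v2 v3 v4 v5 : Fin n)
    (d12 : v1 ≠ v2) (d13 : v1 ≠ v3) (d14 : v1 ≠ v4) (d15 : v1 ≠ v5)
    (d23 : v2 ≠ v3) (d24 : v2 ≠ v4) (d25 : v2 ≠ v5)
    (d34 : v3 ≠ v4) (d35 : v3 ≠ v5) (d45 : v4 ≠ v5)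
    (a1 a2 a3 a4 a5 a6 a7 : Fin m)
    (h12 : c s(v1,v2) ∈ ({a1,a2,a3,a4,a5,a6,a7} : Set (Fin m)))
    (h13 : c s(v1,v3) ∈ ({a1,a2,a3,a4,a5,a6,a7} : Set (Fin m)))
    (h14 : c s(v1,v4) ∈ ({a1,a2,a3,a4,a5,a6,a7} : Set (Fin m)))
    (h15 : c s(v1,v5) ∈ ({a1,a2,a3,a4,a5,a6,a7} : Set (Fin m)))
    (h23 : c s(v2,v3) ∈ ({a1,a2,a3,a4,a5,a6,a7} : Set (Fin m)))
    (h24 : c s(v2,v4) ∈ ({a1,a2,a3,a4,a5,a6,a7} : Set (Fin m)))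
    (h25 : c s(v2,v5) ∈ ({a1,a2,a3,a4,a5,a6,a7} : Set (Fin m)))
    (h34 : c s(v3,v4) ∈ ({a1,a2,a3,a4,a5,a6,a7} : Set (Fin m)))
    (h35 : c s(v3,v5) ∈ ({a1,a2,a3,a4,a5,a6,a7} : Set (Fin m)))
    (h45 : c s(v4,v5) ∈ ({a1,a2,a3,a4,a5,a6,a7} : Set (Fin m))) : False := by
  have hcard : ({v1,v2,v3,v4,v5} : Finset (Fin n)).card = 5 := by
    rw [Finset.card_insert_of_notMem (by simp [d12,d13,d14,d15]),
      Finset.card_insert_of_notMem (by simp [d23,d24,d25]),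
      Finset.card_insert_of_notMem (by simp [d34,d35]),
      Finset.card_insert_of_notMem (by simp [d45]), Finset.card_singleton]
  have h8 := hc {v1,v2,v3,v4,v5} hcard
  have hsub : {j : Fin m | ∃ x ∈ ({v1,v2,v3,v4,v5} : Finset (Fin n)),
      ∃ y ∈ ({v1,v2,v3,v4,v5} : Finset (Fin n)), x ≠ y ∧ c s(x, y) = j} ⊆
      ({a1,a2,a3,a4,a5,a6,a7} : Set (Fin m)) := by
    rintro j ⟨x, hx, y, hy, hxy, hcxy⟩
    simp only [Finset.mem_insert, Finset.mem_singleton] at hx hy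
    rcases hx with rfl|rfl|rfl|rfl|rfl <;> rcases hy with rfl|rfl|rfl|rfl|rfl <;>
      first
      | exact absurd rfl hxy
      | (rw [← hcxy]; first | assumption | (rw [Sym2.eq_swap]; assumption))
  have h7 : ({a1,a2,a3,a4,a5,a6,a7} : Set (Fin m)).ncard ≤ 7 := by
    refine le_trans (Set.ncard_insert_le _ _) ?_
    have h6 : ({a2,a3,a4,a5,a6,a7} : Set (Fin m)).ncard ≤ 6 := by
      refine le_trans (Set.ncard_insert_le _ _) ?_
      have h5 : ({a3,a4,a5,a6,a7} : Set (Fin m)).ncard ≤ 5 := by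
        refine le_trans (Set.ncard_insert_le _ _) ?_
        have h4 : ({a4,a5,a6,a7} : Set (Fin m)).ncard ≤ 4 := by
          refine le_trans (Set.ncard_insert_le _ _) ?_
          have h3 : ({a5,a6,a7} : Set (Fin m)).ncard ≤ 3 := by
            refine le_trans (Set.ncard_insert_le _ _) ?_
            have h2 : ({a6,a7} : Set (Fin m)).ncard ≤ 2 := by
              refine le_trans (Set.ncard_insert_le _ _) ?_
              simp [Set.ncard_singleton]
            omega
          omega
        omega
      omega
    omega
  have := Set.ncard_le_ncard hsub (Set.toFinite _)
  omega

variable {x y z p q x' y' z' : Fin n}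

lemma eg_aux1 (hc : IsPQColoring 5 8 c)
    (d12 : x ≠ y) (d13 : x ≠ z) (d14 : x ≠ p) (d15 : x ≠ q)
    (d23 : y ≠ z) (d24 : y ≠ p) (d25 : y ≠ q) (d34 : z ≠ p) (d35 : z ≠ q) (d45 : p ≠ q)
    (hA : c s(x,y) = c s(y,z)) (hB : c s(x,p) = c s(x,z)) (hC : c s(x,q) = c s(x,z)) :
    False := by
  have hA' := hA.symm; have hB' := hB.symm; have hC' := hC.symm
  exact eg_key5 hc x y z p q d12 d13 d14 d15 d23 d24 d25 d34 d35 d45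
    (c s(x,y)) (c s(x,z)) (c s(y,p)) (c s(y,q)) (c s(z,p)) (c s(z,q)) (c s(p,q))
    (by simp only [Set.mem_insert_iff, Set.mem_singleton_iff]; tauto) (by simp only [Set.mem_insert_iff, Set.mem_singleton_iff]; tauto) (by simp only [Set.mem_insert_iff, Set.mem_singleton_iff]; tauto) (by simp only [Set.mem_insert_iff, Set.mem_singleton_iff]; tauto) (by simp only [Set.mem_insert_iff, Set.mem_singleton_iff]; tauto) (by simp only [Set.mem_insert_iff, Set.mem_singleton_iff]; tauto) (by simp only [Set.mem_insert_iff, Set.mem_singleton_iff]; tauto) (by simp only [Set.mem_insert_iff, Set.mem_singleton_iff]; tauto) (by simp only [Set.mem_insert_iff, Set.mem_singleton_iff]; tauto) (by simp only [Set.mem_insert_iff, Set.mem_singleton_iff]; tauto)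

lemma eg_aux2b1 (hc : IsPQColoring 5 8 c)
    (d12 : x ≠ y) (d13 : x ≠ z) (d14 : x ≠ p) (d15 : x ≠ q)
    (d23 : y ≠ z) (d24 : y ≠ p) (d25 : y ≠ q) (d34 : z ≠ p) (d35 : z ≠ q) (d45 : p ≠ q)
    (hA : c s(x,y) = c s(y,z)) (hB : c s(y,p) = c s(x,z)) (hC : c s(p,q) = c s(x,z)) :
    False := by
  have hA' := hA.symm; have hB' := hB.symm; have hC' := hC.symm
  exact eg_key5 hc x y z p q d12 d13 d14 d15 d23 d24 d25 d34 d35 d45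
    (c s(x,y)) (c s(x,z)) (c s(x,p)) (c s(x,q)) (c s(y,q)) (c s(z,p)) (c s(z,q))
    (by simp only [Set.mem_insert_iff, Set.mem_singleton_iff]; tauto) (by simp only [Set.mem_insert_iff, Set.mem_singleton_iff]; tauto) (by simp only [Set.mem_insert_iff, Set.mem_singleton_iff]; tauto) (by simp only [Set.mem_insert_iff, Set.mem_singleton_iff]; tauto) (by simp only [Set.mem_insert_iff, Set.mem_singleton_iff]; tauto) (by simp only [Set.mem_insert_iff, Set.mem_singleton_iff]; tauto) (by simp only [Set.mem_insert_iff, Set.mem_singleton_iff]; tauto) (by simp only [Set.mem_insert_iff, Set.mem_singleton_iff]; tauto) (by simp only [Set.mem_insert_iff, Set.mem_singleton_iff]; tauto) (by simp only [Set.mem_insert_iff, Set.mem_singleton_iff]; tauto)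

lemma eg_aux2b2 (hc : IsPQColoring 5 8 c)
    (d12 : x ≠ y) (d13 : x ≠ z) (d14 : x ≠ p) (d15 : x ≠ q)
    (d23 : y ≠ z) (d24 : y ≠ p) (d25 : y ≠ q) (d34 : z ≠ p) (d35 : z ≠ q) (d45 : p ≠ q)
    (hA : c s(x,y) = c s(y,z)) (hB : c s(y,p) = c s(x,z)) (hC : c s(y,q) = c s(x,z)) :
    False := by
  have hA' := hA.symm; have hB' := hB.symm; have hC' := hC.symm
  exact eg_key5 hc x y z p q d12 d13 d14 d15 d23 d24 d25 d34 d35 d45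
    (c s(x,y)) (c s(x,z)) (c s(x,p)) (c s(x,q)) (c s(z,p)) (c s(z,q)) (c s(p,q))
    (by simp only [Set.mem_insert_iff, Set.mem_singleton_iff]; tauto) (by simp only [Set.mem_insert_iff, Set.mem_singleton_iff]; tauto) (by simp only [Set.mem_insert_iff, Set.mem_singleton_iff]; tauto) (by simp only [Set.mem_insert_iff, Set.mem_singleton_iff]; tauto) (by simp only [Set.mem_insert_iff, Set.mem_singleton_iff]; tauto) (by simp only [Set.mem_insert_iff, Set.mem_singleton_iff]; tauto) (by simp only [Set.mem_insert_iff, Set.mem_singleton_iff]; tauto) (by simp only [Set.mem_insert_iff, Set.mem_singleton_iff]; tauto) (by simp only [Set.mem_insert_iff, Set.mem_singleton_iff]; tauto) (by simp only [Set.mem_insert_iff, Set.mem_singleton_iff]; tauto)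

lemma eg_core1 (hc : IsPQColoring 5 8 c)
    (d12 : x ≠ y) (d13 : x ≠ z) (d14 : x ≠ y') (d15 : x ≠ z')
    (d23 : y ≠ z) (d24 : y ≠ y') (d25 : y ≠ z') (d34 : z ≠ y') (d35 : z ≠ z')
    (d45 : y' ≠ z')
    (hA : c s(x,y) = c s(y,z)) (hB : c s(x,y') = c s(y',z')) (hC : c s(x,z) = c s(x,z')) :
    False := by
  have hA' := hA.symm; have hB' := hB.symm; have hC' := hC.symm
  exact eg_key5 hc x y z y' z' d12 d13 d14 d15 d23 d24 d25 d34 d35 d45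
    (c s(x,y)) (c s(x,y')) (c s(x,z)) (c s(y,y')) (c s(y,z')) (c s(z,y')) (c s(z,z'))
    (by simp only [Set.mem_insert_iff, Set.mem_singleton_iff]; tauto) (by simp only [Set.mem_insert_iff, Set.mem_singleton_iff]; tauto) (by simp only [Set.mem_insert_iff, Set.mem_singleton_iff]; tauto) (by simp only [Set.mem_insert_iff, Set.mem_singleton_iff]; tauto) (by simp only [Set.mem_insert_iff, Set.mem_singleton_iff]; tauto) (by simp only [Set.mem_insert_iff, Set.mem_singleton_iff]; tauto) (by simp only [Set.mem_insert_iff, Set.mem_singleton_iff]; tauto) (by simp only [Set.mem_insert_iff, Set.mem_singleton_iff]; tauto) (by simp only [Set.mem_insert_iff, Set.mem_singleton_iff]; tauto) (by simp only [Set.mem_insert_iff, Set.mem_singleton_iff]; tauto)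

lemma eg_core2 (hc : IsPQColoring 5 8 c)
    (d12 : x ≠ y) (d13 : x ≠ z) (d14 : x ≠ x') (d15 : x ≠ z')
    (d23 : y ≠ z) (d24 : y ≠ x') (d25 : y ≠ z') (d34 : z ≠ x') (d35 : z ≠ z')
    (d45 : x' ≠ z')
    (hA : c s(x,y) = c s(y,z)) (hB : c s(x,x') = c s(x,z')) (hC : c s(x,z) = c s(x',z')) :
    False := by
  have hA' := hA.symm; have hB' := hB.symm; have hC' := hC.symm
  exact eg_key5 hc x y z x' z' d12 d13 d14 d15 d23 d24 d25 d34 d35 d45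
    (c s(x,y)) (c s(x,x')) (c s(x,z)) (c s(y,x')) (c s(y,z')) (c s(z,x')) (c s(z,z'))
    (by simp only [Set.mem_insert_iff, Set.mem_singleton_iff]; tauto) (by simp only [Set.mem_insert_iff, Set.mem_singleton_iff]; tauto) (by simp only [Set.mem_insert_iff, Set.mem_singleton_iff]; tauto) (by simp only [Set.mem_insert_iff, Set.mem_singleton_iff]; tauto) (by simp only [Set.mem_insert_iff, Set.mem_singleton_iff]; tauto) (by simp only [Set.mem_insert_iff, Set.mem_singleton_iff]; tauto) (by simp only [Set.mem_insert_iff, Set.mem_singleton_iff]; tauto) (by simp only [Set.mem_insert_iff, Set.mem_singleton_iff]; tauto) (by simp only [Set.mem_insert_iff, Set.mem_singleton_iff]; tauto) (by simp only [Set.mem_insert_iff, Set.mem_singleton_iff]; tauto)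

lemma eg_core3 (hc : IsPQColoring 5 8 c)
    (d12 : x ≠ y) (d13 : x ≠ z) (d14 : x ≠ x') (d15 : x ≠ z')
    (d23 : y ≠ z) (d24 : y ≠ x') (d25 : y ≠ z') (d34 : z ≠ x') (d35 : z ≠ z')
    (d45 : x' ≠ z')
    (hA : c s(x,y) = c s(y,z)) (hB : c s(y,x') = c s(y,z')) (hC : c s(x,z) = c s(x',z')) :
    False := by
  have hA' := hA.symm; have hB' := hB.symm; have hC' := hC.symm
  exact eg_key5 hc x y z x' z' d12 d13 d14 d15 d23 d24 d25 d34 d35 d45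
    (c s(x,y)) (c s(y,x')) (c s(x,z)) (c s(x,x')) (c s(x,z')) (c s(z,x')) (c s(z,z'))
    (by simp only [Set.mem_insert_iff, Set.mem_singleton_iff]; tauto) (by simp only [Set.mem_insert_iff, Set.mem_singleton_iff]; tauto) (by simp only [Set.mem_insert_iff, Set.mem_singleton_iff]; tauto) (by simp only [Set.mem_insert_iff, Set.mem_singleton_iff]; tauto) (by simp only [Set.mem_insert_iff, Set.mem_singleton_iff]; tauto) (by simp only [Set.mem_insert_iff, Set.mem_singleton_iff]; tauto) (by simp only [Set.mem_insert_iff, Set.mem_singleton_iff]; tauto) (by simp only [Set.mem_insert_iff, Set.mem_singleton_iff]; tauto) (by simp only [Set.mem_insert_iff, Set.mem_singleton_iff]; tauto) (by simp only [Set.mem_insert_iff, Set.mem_singleton_iff]; tauto)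

end EGAux

section EGGraph

open SimpleGraph

variable {n : ℕ} {G : SimpleGraph (Fin n)}

lemma eg_supp_closed {K : G.ConnectedComponent} {v w : Fin n} (hv : v ∈ K.supp)
    (h : G.Adj v w) : w ∈ K.supp := by
  rw [ConnectedComponent.mem_supp_iff] at hv ⊢
  rw [← hv]; exact ConnectedComponent.sound h.symm.reachable

lemma eg_comp_eq_of_mem {K K' : G.ConnectedComponent} {v : Fin n} (h : v ∈ K.supp)
    (h' : v ∈ K'.supp) : K = K' := by
  rw [ConnectedComponent.mem_supp_iff] at h h'; rw [← h, ← h']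

lemma eg_iso_ne {K : G.ConnectedComponent} {W : Type*} {H : SimpleGraph W}
    (e : G.induce K.supp ≃g H) {a b : W} (hab : a ≠ b) :
    ((e.symm a : K.supp) : Fin n) ≠ ((e.symm b : K.supp) : Fin n) := by
  intro hh
  exact hab (by simpa using congrArg e (Subtype.val_injective hh))

lemma eg_iso_mem {K : G.ConnectedComponent} {W : Type*} {H : SimpleGraph W}
    (e : G.induce K.supp ≃g H) {w : Fin n} (hw : w ∈ K.supp) {a : W}
    (ha : e ⟨w, hw⟩ = a) : w = ((e.symm a : K.supp) : Fin n) := by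
  rw [← ha]; simp

lemma eg_iso_adj {K : G.ConnectedComponent} {W : Type*} {H : SimpleGraph W}
    (e : G.induce K.supp ≃g H) {a b : W} (hab : H.Adj a b) :
    G.Adj ((e.symm a : K.supp) : Fin n) ((e.symm b : K.supp) : Fin n) := by
  have : (G.induce K.supp).Adj (e.symm a) (e.symm b) := by
    rw [e.symm.map_adj_iff]; exact hab
  exact this

lemma eg_iso_nadj {K : G.ConnectedComponent} {W : Type*} {H : SimpleGraph W}
    (e : G.induce K.supp ≃g H) {a b : W} (hab : ¬ H.Adj a b) :
    ¬ G.Adj ((e.symm a : K.supp) : Fin n) ((e.symm b : K.supp) : Fin n) := by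
  intro h
  exact hab (by rw [← e.symm.map_adj_iff]; exact h)

lemma eg_bstruct {K : G.ConnectedComponent} (h : ComponentIso G K (pathGraph 3)) :
    ∃ x y z : Fin n, x ≠ y ∧ y ≠ z ∧ x ≠ z ∧ K.supp = {x, y, z} ∧
      G.Adj x y ∧ G.Adj y z ∧ ¬ G.Adj x z := by
  obtain ⟨e⟩ := h
  refine ⟨e.symm 0, e.symm 1, e.symm 2, eg_iso_ne e (by decide), eg_iso_ne e (by decide),
    eg_iso_ne e (by decide), ?_, eg_iso_adj e (by simp [pathGraph_adj]),
    eg_iso_adj e (by simp [pathGraph_adj]), eg_iso_nadj e (by simp [pathGraph_adj])⟩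
  ext w
  simp only [Set.mem_insert_iff, Set.mem_singleton_iff]
  constructor
  · intro hw
    have h3 : e ⟨w, hw⟩ = 0 ∨ e ⟨w, hw⟩ = 1 ∨ e ⟨w, hw⟩ = 2 := by
      generalize e ⟨w, hw⟩ = t; omega
    rcases h3 with h3|h3|h3
    · exact Or.inl (eg_iso_mem e hw h3)
    · exact Or.inr (Or.inl (eg_iso_mem e hw h3))
    · exact Or.inr (Or.inr (eg_iso_mem e hw h3))
  · rintro (rfl|rfl|rfl) <;> exact Subtype.coe_prop _

lemma eg_dstruct {K : G.ConnectedComponent} (h : ComponentIso G K starK13) :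
    ∃ u a b d : Fin n, u ≠ a ∧ u ≠ b ∧ u ≠ d ∧ a ≠ b ∧ a ≠ d ∧ b ≠ d ∧
      K.supp = {u, a, b, d} ∧
      G.Adj u a ∧ G.Adj u b ∧ G.Adj u d ∧ ¬ G.Adj a b ∧ ¬ G.Adj a d ∧ ¬ G.Adj b d := by
  obtain ⟨e⟩ := h
  refine ⟨e.symm (.inl 0), e.symm (.inr 0), e.symm (.inr 1), e.symm (.inr 2),
    eg_iso_ne e (by decide), eg_iso_ne e (by decide), eg_iso_ne e (by decide),
    eg_iso_ne e (by decide), eg_iso_ne e (by decide), eg_iso_ne e (by decide), ?_,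
    eg_iso_adj e (by simp [starK13]), eg_iso_adj e (by simp [starK13]),
    eg_iso_adj e (by simp [starK13]), eg_iso_nadj e (by simp [starK13]),
    eg_iso_nadj e (by simp [starK13]), eg_iso_nadj e (by simp [starK13])⟩
  ext w
  simp only [Set.mem_insert_iff, Set.mem_singleton_iff]
  constructor
  · intro hw
    have h4 : e ⟨w, hw⟩ = .inl 0 ∨ e ⟨w, hw⟩ = .inr 0 ∨ e ⟨w, hw⟩ = .inr 1 ∨
        e ⟨w, hw⟩ = .inr 2 := by
      generalize e ⟨w, hw⟩ = t
      rcases t with a | a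
      · left; rw [Subsingleton.elim a 0]
      · right
        have : a = 0 ∨ a = 1 ∨ a = 2 := by omega
        rcases this with rfl|rfl|rfl <;> simp
    rcases h4 with h4|h4|h4|h4
    · exact Or.inl (eg_iso_mem e hw h4)
    · exact Or.inr (Or.inl (eg_iso_mem e hw h4))
    · exact Or.inr (Or.inr (Or.inl (eg_iso_mem e hw h4)))
    · exact Or.inr (Or.inr (Or.inr (eg_iso_mem e hw h4)))
  · rintro (rfl|rfl|rfl|rfl) <;> exact Subtype.coe_prop _

lemma eg_sets43 {u a b d x y z : Fin n} (dua : u ≠ a) (dub : u ≠ b) (dud : u ≠ d)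
    (dab : a ≠ b) (dad : a ≠ d) (dbd : b ≠ d)
    (h : ({u,a,b,d} : Set (Fin n)) = {x,y,z}) : False := by
  have h4 : ({u,a,b,d} : Set (Fin n)).ncard = 4 := by
    rw [Set.ncard_insert_of_notMem (by simp [dua, dub, dud]) (Set.toFinite _),
      Set.ncard_insert_of_notMem (by simp [dab, dad]) (Set.toFinite _),
      Set.ncard_insert_of_notMem (by simp [dbd]) (Set.toFinite _), Set.ncard_singleton]
  have h3 : ({x,y,z} : Set (Fin n)).ncard ≤ 3 := by
    refine le_trans (Set.ncard_insert_le _ _) ?_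
    have := Set.ncard_insert_le y ({z} : Set (Fin n))
    rw [Set.ncard_singleton] at this
    omega
  rw [h] at h4; omega

end EGGraph


section EGMain

open SimpleGraph

variable {n m : ℕ}

/-- chosen path vertices of a `B₁`-component -/
noncomputable def eg_btrip (c : Sym2 (Fin n) → Fin m)
    (X : Σ i : Fin m, (colorClass c i).ConnectedComponent) (hX : X ∈ setB1 c) :
    Fin n × Fin n × Fin n :=
  ⟨(eg_bstruct (G := colorClass c X.1) (K := X.2) hX.1).choose,
    (eg_bstruct (G := colorClass c X.1) (K := X.2) hX.1).choose_spec.choose,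
    (eg_bstruct (G := colorClass c X.1) (K := X.2) hX.1).choose_spec.choose_spec.choose⟩

lemma eg_btrip_spec (c : Sym2 (Fin n) → Fin m)
    (X : Σ i : Fin m, (colorClass c i).ConnectedComponent) (hX : X ∈ setB1 c) :
    (eg_btrip c X hX).1 ≠ (eg_btrip c X hX).2.1 ∧
    (eg_btrip c X hX).2.1 ≠ (eg_btrip c X hX).2.2 ∧
    (eg_btrip c X hX).1 ≠ (eg_btrip c X hX).2.2 ∧
    X.2.supp = {(eg_btrip c X hX).1, (eg_btrip c X hX).2.1, (eg_btrip c X hX).2.2} ∧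
    (colorClass c X.1).Adj (eg_btrip c X hX).1 (eg_btrip c X hX).2.1 ∧
    (colorClass c X.1).Adj (eg_btrip c X hX).2.1 (eg_btrip c X hX).2.2 ∧
    ¬ (colorClass c X.1).Adj (eg_btrip c X hX).1 (eg_btrip c X hX).2.2 :=
  (eg_bstruct (G := colorClass c X.1) (K := X.2) hX.1).choose_spec.choose_spec.choose_spec

/-- the "second color" of a `B₁`-component: the color of the edge joining the endpoints -/
noncomputable def eg_bj (c : Sym2 (Fin n) → Fin m)
    (X : Σ i : Fin m, (colorClass c i).ConnectedComponent) (hX : X ∈ setB1 c) : Fin m :=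
  c s((eg_btrip c X hX).1, (eg_btrip c X hX).2.2)

/-- chosen star vertices of a `D`-component (center first) -/
noncomputable def eg_dquad (c : Sym2 (Fin n) → Fin m)
    (X : Σ i : Fin m, (colorClass c i).ConnectedComponent) (hX : X ∈ setD c) :
    Fin n × Fin n × Fin n × Fin n :=
  ⟨(eg_dstruct (G := colorClass c X.1) (K := X.2) hX).choose,
    (eg_dstruct (G := colorClass c X.1) (K := X.2) hX).choose_spec.choose,
    (eg_dstruct (G := colorClass c X.1) (K := X.2) hX).choose_spec.choose_spec.choose,
    (eg_dstruct (G := colorClass c X.1) (K := X.2)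
      hX).choose_spec.choose_spec.choose_spec.choose⟩

lemma eg_dquad_spec (c : Sym2 (Fin n) → Fin m)
    (X : Σ i : Fin m, (colorClass c i).ConnectedComponent) (hX : X ∈ setD c) :
    (eg_dquad c X hX).1 ≠ (eg_dquad c X hX).2.1 ∧
    (eg_dquad c X hX).1 ≠ (eg_dquad c X hX).2.2.1 ∧
    (eg_dquad c X hX).1 ≠ (eg_dquad c X hX).2.2.2 ∧
    (eg_dquad c X hX).2.1 ≠ (eg_dquad c X hX).2.2.1 ∧
    (eg_dquad c X hX).2.1 ≠ (eg_dquad c X hX).2.2.2 ∧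
    (eg_dquad c X hX).2.2.1 ≠ (eg_dquad c X hX).2.2.2 ∧
    X.2.supp = {(eg_dquad c X hX).1, (eg_dquad c X hX).2.1, (eg_dquad c X hX).2.2.1,
      (eg_dquad c X hX).2.2.2} ∧
    (colorClass c X.1).Adj (eg_dquad c X hX).1 (eg_dquad c X hX).2.1 ∧
    (colorClass c X.1).Adj (eg_dquad c X hX).1 (eg_dquad c X hX).2.2.1 ∧
    (colorClass c X.1).Adj (eg_dquad c X hX).1 (eg_dquad c X hX).2.2.2 ∧
    ¬ (colorClass c X.1).Adj (eg_dquad c X hX).2.1 (eg_dquad c X hX).2.2.1 ∧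
    ¬ (colorClass c X.1).Adj (eg_dquad c X hX).2.1 (eg_dquad c X hX).2.2.2 ∧
    ¬ (colorClass c X.1).Adj (eg_dquad c X hX).2.2.1 (eg_dquad c X hX).2.2.2 :=
  (eg_dstruct (G := colorClass c X.1) (K := X.2)
    hX).choose_spec.choose_spec.choose_spec.choose_spec

variable {c : Sym2 (Fin n) → Fin m}

lemma eg_sigma_eq {X Y : Σ i : Fin m, (colorClass c i).ConnectedComponent}
    (h : X.1 = Y.1) {v : Fin n} (hX : v ∈ X.2.supp) (hY : v ∈ Y.2.supp) : X = Y := by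
  obtain ⟨i, K⟩ := X; obtain ⟨i', L⟩ := Y
  dsimp at h hX hY
  subst h
  exact congrArg (Sigma.mk i) (eg_comp_eq_of_mem hX hY)

lemma eg_b1_sep {X Y : Σ i : Fin m, (colorClass c i).ConnectedComponent}
    (hX : X ∈ setB1 c) (hY : Y ∈ setB c) (hne : Y ≠ X) {u v : Fin n}
    (hu : u ∈ X.2.supp) (hu' : u ∈ Y.2.supp) (hv : v ∈ X.2.supp) (hv' : v ∈ Y.2.supp)
    (huv : u ≠ v) : False := by
  have hle := hX.2 Y hY hne
  have h2 : 1 < (X.2.supp ∩ Y.2.supp).ncard :=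
    (Set.one_lt_ncard (Set.toFinite _)).mpr ⟨u, ⟨hu, hu'⟩, v, ⟨hv, hv'⟩, huv⟩
  omega

lemma eg_star_pick {j : Fin m} {u a b d x z : Fin n}
    (dua : u ≠ a) (dub : u ≠ b) (dud : u ≠ d) (dab : a ≠ b) (dad : a ≠ d) (dbd : b ≠ d)
    (cua : c s(u,a) = j) (cub : c s(u,b) = j) (cud : c s(u,d) = j)
    (nab : c s(a,b) ≠ j) (nad : c s(a,d) ≠ j) (nbd : c s(b,d) ≠ j)
    (hx : x = u ∨ x = a ∨ x = b ∨ x = d) (hz : z = u ∨ z = a ∨ z = b ∨ z = d)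
    (hxz : x ≠ z) (cxz : c s(x,z) = j) :
    ∃ p q : Fin n, p ≠ q ∧ x ≠ p ∧ x ≠ q ∧ z ≠ p ∧ z ≠ q ∧
      (c s(x,p) = j ∧ c s(x,q) = j ∨ c s(z,p) = j ∧ c s(z,q) = j) := by
  rcases hx with rfl|rfl|rfl|rfl <;> rcases hz with rfl|rfl|rfl|rfl
  · exact absurd rfl hxz
  · exact ⟨b, d, dbd, dub, dud, (by rintro rfl; simp_all), (by rintro rfl; simp_all),
      Or.inl ⟨cub, cud⟩⟩
  · exact ⟨a, d, dad, dua, dud, (by rintro rfl; simp_all), (by rintro rfl; simp_all),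
      Or.inl ⟨cua, cud⟩⟩
  · exact ⟨a, b, dab, dua, dub, (by rintro rfl; simp_all), (by rintro rfl; simp_all),
      Or.inl ⟨cua, cub⟩⟩
  · exact ⟨b, d, dbd, (by rintro rfl; simp_all), (by rintro rfl; simp_all), dub, dud,
      Or.inr ⟨cub, cud⟩⟩
  · exact absurd rfl hxz
  · exact absurd cxz nab
  · exact absurd cxz nad
  · exact ⟨a, d, dad, (by rintro rfl; simp_all), (by rintro rfl; simp_all), dua, dud,
      Or.inr ⟨cua, cud⟩⟩
  · exact absurd (by rwa [Sym2.eq_swap] at cxz) nab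
  · exact absurd rfl hxz
  · exact absurd cxz nbd
  · exact ⟨a, b, dab, (by rintro rfl; simp_all), (by rintro rfl; simp_all), dua, dub,
      Or.inr ⟨cua, cub⟩⟩
  · exact absurd (by rwa [Sym2.eq_swap] at cxz) nad
  · exact absurd (by rwa [Sym2.eq_swap] at cxz) nbd
  · exact absurd rfl hxz

lemma eg_star_pick2 {j : Fin m} {u a b d y : Fin n}
    (dua : u ≠ a) (dub : u ≠ b) (dud : u ≠ d) (dab : a ≠ b) (dad : a ≠ d) (dbd : b ≠ d)
    (cua : c s(u,a) = j) (cub : c s(u,b) = j) (cud : c s(u,d) = j)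
    (hy : y = u ∨ y = a ∨ y = b ∨ y = d) :
    ∃ p q : Fin n, p ≠ q ∧ p ≠ y ∧ q ≠ y ∧ p ∈ ({u,a,b,d} : Set (Fin n)) ∧
      q ∈ ({u,a,b,d} : Set (Fin n)) ∧
      ((c s(y,p) = j ∧ c s(y,q) = j) ∨ (c s(y,p) = j ∧ c s(p,q) = j)) := by
  have swau : c s(a,u) = j := by rwa [Sym2.eq_swap] at cua
  have swbu : c s(b,u) = j := by rwa [Sym2.eq_swap] at cub
  have swdu : c s(d,u) = j := by rwa [Sym2.eq_swap] at cud
  rcases hy with rfl|rfl|rfl|rfl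
  · exact ⟨a, b, dab, dua.symm, dub.symm, by simp, by simp, Or.inl ⟨cua, cub⟩⟩
  · exact ⟨u, b, dub, dua, dab.symm, by simp, by simp, Or.inr ⟨swau, cub⟩⟩
  · exact ⟨u, a, dua, dub, dab, by simp, by simp, Or.inr ⟨swbu, cua⟩⟩
  · exact ⟨u, a, dua, dud, dad, by simp, by simp, Or.inr ⟨swdu, cua⟩⟩

lemma eg_conflict_db (hc : IsPQColoring 5 8 c) {i j : Fin m} (hij : j ≠ i)
    {x y z : Fin n} (hxy : x ≠ y) (hyz : y ≠ z) (hxz : x ≠ z)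
    (cxy : c s(x,y) = i) (cyz : c s(y,z) = i) (cxz : c s(x,z) = j)
    {K : (colorClass c j).ConnectedComponent}
    (hK : ComponentIso (colorClass c j) K starK13)
    {v : Fin n} (hvK : v ∈ K.supp) (hv : v = x ∨ v = y ∨ v = z) : False := by
  obtain ⟨u, a, b, d, dua, dub, dud, dab, dad, dbd, hsupp, Aua, Aub, Aud, Nab, Nad, Nbd⟩ :=
    eg_dstruct hK
  have cua : c s(u,a) = j := Aua.2
  have cub : c s(u,b) = j := Aub.2
  have cud : c s(u,d) = j := Aud.2
  have nab : c s(a,b) ≠ j := fun h => Nab ⟨dab, h⟩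
  have nad : c s(a,d) ≠ j := fun h => Nad ⟨dad, h⟩
  have nbd : c s(b,d) ≠ j := fun h => Nbd ⟨dbd, h⟩
  have adjxz : (colorClass c j).Adj x z := ⟨hxz, cxz⟩
  have hA : c s(x,y) = c s(y,z) := cxy.trans cyz.symm
  have swzx : c s(z,x) = j := by rwa [Sym2.eq_swap] at cxz
  by_cases hx : x ∈ K.supp
  · have hz : z ∈ K.supp := eg_supp_closed hx adjxz
    rw [hsupp] at hx hz
    simp only [Set.mem_insert_iff, Set.mem_singleton_iff] at hx hz
    obtain ⟨p, q, dpq, dxp, dxq, dzp, dzq, hbr⟩ :=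
      eg_star_pick dua dub dud dab dad dbd cua cub cud nab nad nbd hx hz hxz cxz
    have dyp : y ≠ p := by
      rintro rfl
      rcases hbr with ⟨h1, _⟩|⟨h1, _⟩
      · exact hij (h1.symm.trans cxy)
      · rw [Sym2.eq_swap] at h1
        exact hij (h1.symm.trans cyz)
    have dyq : y ≠ q := by
      rintro rfl
      rcases hbr with ⟨_, h2⟩|⟨_, h2⟩
      · exact hij (h2.symm.trans cxy)
      · rw [Sym2.eq_swap] at h2
        exact hij (h2.symm.trans cyz)
    rcases hbr with ⟨h1, h2⟩|⟨h1, h2⟩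
    · exact eg_aux1 hc hxy hxz dxp dxq hyz dyp dyq dzp dzq dpq hA
        (h1.trans cxz.symm) (h2.trans cxz.symm)
    · have hA2 : c s(z,y) = c s(y,x) := by
        rw [show s(z,y) = s(y,z) from Sym2.eq_swap, show s(y,x) = s(x,y) from Sym2.eq_swap]
        exact hA.symm
      exact eg_aux1 hc hyz.symm hxz.symm dzp dzq hxy.symm dyp dyq dxp dxq dpq hA2
        (h1.trans swzx.symm) (h2.trans swzx.symm)
  · have hzK : z ∉ K.supp := fun h => hx (eg_supp_closed h adjxz.symm)
    rcases hv with rfl|rfl|rfl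
    · exact hx hvK
    · have hxs : x ∉ ({u,a,b,d} : Set (Fin n)) := by rw [← hsupp]; exact hx
      have hzs : z ∉ ({u,a,b,d} : Set (Fin n)) := by rw [← hsupp]; exact hzK
      have hy : v = u ∨ v = a ∨ v = b ∨ v = d := by
        have hm := hvK
        rw [hsupp] at hm
        simpa only [Set.mem_insert_iff, Set.mem_singleton_iff] using hm
      obtain ⟨p, q, dpq, dpy, dqy, hpmem, hqmem, hbr⟩ :=
        eg_star_pick2 dua dub dud dab dad dbd cua cub cud hy
      have dxp : x ≠ p := fun h => hxs (h ▸ hpmem)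
      have dxq : x ≠ q := fun h => hxs (h ▸ hqmem)
      have dzp : z ≠ p := fun h => hzs (h ▸ hpmem)
      have dzq : z ≠ q := fun h => hzs (h ▸ hqmem)
      rcases hbr with ⟨h1, h2⟩|⟨h1, h2⟩
      · exact eg_aux2b2 hc hxy hxz dxp dxq hyz dpy.symm dqy.symm dzp dzq dpq hA
          (h1.trans cxz.symm) (h2.trans cxz.symm)
      · exact eg_aux2b1 hc hxy hxz dxp dxq hyz dpy.symm dqy.symm dzp dzq dpq hA
          (h1.trans cxz.symm) (h2.trans cxz.symm)
    · exact hzK hvK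

lemma eg_conflict_bb (hc : IsPQColoring 5 8 c) {j : Fin m}
    {x y z : Fin n} (hxy : x ≠ y) (hyz : y ≠ z) (hxz : x ≠ z)
    (hA : c s(x,y) = c s(y,z)) (cxz : c s(x,z) = j)
    {K : (colorClass c j).ConnectedComponent}
    (hK : ComponentIso (colorClass c j) K (pathGraph 3))
    {v : Fin n} (hvK : v ∈ K.supp) (hv : v = x ∨ v = y ∨ v = z)
    (hnot : ¬ (x ∈ K.supp ∧ z ∈ K.supp)) : False := by
  obtain ⟨p, q, r, dpq, dqr, dpr, hsupp, Apq, Aqr, Npr⟩ := eg_bstruct hK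
  have cpq : c s(p,q) = j := Apq.2
  have cqr : c s(q,r) = j := Aqr.2
  have adjxz : (colorClass c j).Adj x z := ⟨hxz, cxz⟩
  have hxK : x ∉ K.supp := by
    intro hh
    exact hnot ⟨hh, eg_supp_closed hh adjxz⟩
  have hzK : z ∉ K.supp := by
    intro hh
    exact hnot ⟨eg_supp_closed hh adjxz.symm, hh⟩
  rcases hv with rfl|rfl|rfl
  · exact hxK hvK
  · have hxs : x ∉ ({p,q,r} : Set (Fin n)) := by rw [← hsupp]; exact hxK
    have hzs : z ∉ ({p,q,r} : Set (Fin n)) := by rw [← hsupp]; exact hzK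
    have hy : v = p ∨ v = q ∨ v = r := by
      have hm := hvK
      rw [hsupp] at hm
      simpa only [Set.mem_insert_iff, Set.mem_singleton_iff] using hm
    have hps : p ∈ ({p,q,r} : Set (Fin n)) := by simp
    have hqs : q ∈ ({p,q,r} : Set (Fin n)) := by simp
    have hrs : r ∈ ({p,q,r} : Set (Fin n)) := by simp
    rcases hy with rfl|rfl|rfl
    · exact eg_aux2b1 hc hxy hxz (fun h => hxs (h ▸ hqs)) (fun h => hxs (h ▸ hrs)) hyz
        dpq dpr (fun h => hzs (h ▸ hqs)) (fun h => hzs (h ▸ hrs)) dqr hA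
        (cpq.trans cxz.symm) (cqr.trans cxz.symm)
    · have swqp : c s(v,p) = j := by rwa [Sym2.eq_swap] at cpq
      exact eg_aux2b2 hc hxy hxz (fun h => hxs (h ▸ hps)) (fun h => hxs (h ▸ hrs)) hyz
        dpq.symm dqr (fun h => hzs (h ▸ hps)) (fun h => hzs (h ▸ hrs)) dpr hA
        (swqp.trans cxz.symm) (cqr.trans cxz.symm)
    · have swrq : c s(v,q) = j := by rwa [Sym2.eq_swap] at cqr
      have swqp : c s(q,p) = j := by rwa [Sym2.eq_swap] at cpq
      exact eg_aux2b1 hc hxy hxz (fun h => hxs (h ▸ hqs)) (fun h => hxs (h ▸ hps)) hyz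
        dqr.symm dpr.symm (fun h => hzs (h ▸ hqs)) (fun h => hzs (h ▸ hps)) dpq.symm hA
        (swrq.trans cxz.symm) (swqp.trans cxz.symm)
  · exact hzK hvK

/-- the token map -/
noncomputable def eg_tok (c : Sym2 (Fin n) → Fin m) :
    (↥(setD c) × Fin 4) ⊕ (↥(setB1 c) × Fin 6) → Fin m × Fin n
  | .inl P => (P.1.1.1, ![(eg_dquad c P.1.1 P.1.2).1, (eg_dquad c P.1.1 P.1.2).2.1,
      (eg_dquad c P.1.1 P.1.2).2.2.1, (eg_dquad c P.1.1 P.1.2).2.2.2] P.2)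
  | .inr P => ![(P.1.1.1, (eg_btrip c P.1.1 P.1.2).1),
      (P.1.1.1, (eg_btrip c P.1.1 P.1.2).2.1),
      (P.1.1.1, (eg_btrip c P.1.1 P.1.2).2.2),
      (eg_bj c P.1.1 P.1.2, (eg_btrip c P.1.1 P.1.2).1),
      (eg_bj c P.1.1 P.1.2, (eg_btrip c P.1.1 P.1.2).2.1),
      (eg_bj c P.1.1 P.1.2, (eg_btrip c P.1.1 P.1.2).2.2)] P.2

end EGMain


section EGVec
variable {A : Type*}
lemma eg_v6_0 (a b c d e f : A) : ![a,b,c,d,e,f] 0 = a := rfl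
lemma eg_v6_1 (a b c d e f : A) : ![a,b,c,d,e,f] 1 = b := rfl
lemma eg_v6_2 (a b c d e f : A) : ![a,b,c,d,e,f] 2 = c := rfl
lemma eg_v6_3 (a b c d e f : A) : ![a,b,c,d,e,f] 3 = d := rfl
lemma eg_v6_4 (a b c d e f : A) : ![a,b,c,d,e,f] 4 = e := rfl
lemma eg_v6_5 (a b c d e f : A) : ![a,b,c,d,e,f] 5 = f := rfl
lemma eg_v4_0 (a b c d : A) : ![a,b,c,d] 0 = a := rfl
lemma eg_v4_1 (a b c d : A) : ![a,b,c,d] 1 = b := rfl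
lemma eg_v4_2 (a b c d : A) : ![a,b,c,d] 2 = c := rfl
lemma eg_v4_3 (a b c d : A) : ![a,b,c,d] 3 = d := rfl
lemma eg_w6_0 {A : Type*} (a b c d e f : A) (h : 0 < 6) : ![a,b,c,d,e,f] ⟨0,h⟩ = a := rfl
lemma eg_w6_1 {A : Type*} (a b c d e f : A) (h : 1 < 6) : ![a,b,c,d,e,f] ⟨1,h⟩ = b := rfl
lemma eg_w6_2 {A : Type*} (a b c d e f : A) (h : 2 < 6) : ![a,b,c,d,e,f] ⟨2,h⟩ = c := rfl
lemma eg_w6_3 {A : Type*} (a b c d e f : A) (h : 3 < 6) : ![a,b,c,d,e,f] ⟨3,h⟩ = d := rfl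
lemma eg_w6_4 {A : Type*} (a b c d e f : A) (h : 4 < 6) : ![a,b,c,d,e,f] ⟨4,h⟩ = e := rfl
lemma eg_w6_5 {A : Type*} (a b c d e f : A) (h : 5 < 6) : ![a,b,c,d,e,f] ⟨5,h⟩ = f := rfl
lemma eg_w4_0 {A : Type*} (a b c d : A) (h : 0 < 4) : ![a,b,c,d] ⟨0,h⟩ = a := rfl
lemma eg_w4_1 {A : Type*} (a b c d : A) (h : 1 < 4) : ![a,b,c,d] ⟨1,h⟩ = b := rfl
lemma eg_w4_2 {A : Type*} (a b c d : A) (h : 2 < 4) : ![a,b,c,d] ⟨2,h⟩ = c := rfl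
lemma eg_w4_3 {A : Type*} (a b c d : A) (h : 3 < 4) : ![a,b,c,d] ⟨3,h⟩ = d := rfl
end EGVec

section EGInj

open SimpleGraph

variable {n m : ℕ} {c : Sym2 (Fin n) → Fin m}

lemma eg_bb_mixed (hc : IsPQColoring 5 8 c)
    (X Y : Σ i : Fin m, (colorClass c i).ConnectedComponent)
    (hX : X ∈ setB1 c) (hY : Y ∈ setB1 c) (hne : X ≠ Y)
    (hcol : X.1 = eg_bj c Y hY) {v : Fin n} (hvX : v ∈ X.2.supp)
    (hv : v = (eg_btrip c Y hY).1 ∨ v = (eg_btrip c Y hY).2.1 ∨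
      v = (eg_btrip c Y hY).2.2) : False := by
  obtain ⟨f1, f2, f3, hsY, hC1, hC2, hM⟩ := eg_btrip_spec c Y hY
  have cxy' : c s((eg_btrip c Y hY).1, (eg_btrip c Y hY).2.1) = Y.1 := hC1.2
  have cyz' : c s((eg_btrip c Y hY).2.1, (eg_btrip c Y hY).2.2) = Y.1 := hC2.2
  have hA' : c s((eg_btrip c Y hY).1, (eg_btrip c Y hY).2.1) =
      c s((eg_btrip c Y hY).2.1, (eg_btrip c Y hY).2.2) := cxy'.trans cyz'.symm
  have hcxz : c s((eg_btrip c Y hY).1, (eg_btrip c Y hY).2.2) = X.1 := hcol.symm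
  refine eg_conflict_bb hc f1 f2 f3 hA' hcxz (K := X.2) hX.1 hvX hv ?_
  rintro ⟨h1, h2⟩
  exact eg_b1_sep hY hX.1 hne (by rw [hsY]; simp) h1 (by rw [hsY]; simp) h2 f3

lemma eg_case_LR (hc : IsPQColoring 5 8 c)
    (X : Σ i : Fin m, (colorClass c i).ConnectedComponent) (hX : X ∈ setD c)
    (Y : Σ i : Fin m, (colorClass c i).ConnectedComponent) (hY : Y ∈ setB1 c)
    (k : Fin 4) (l : Fin 6)
    (h : eg_tok c (Sum.inl (⟨⟨X, hX⟩, k⟩)) = eg_tok c (Sum.inr (⟨⟨Y, hY⟩, l⟩))) :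
    False := by
  obtain ⟨d1, d2, d3, d4, d5, d6, hsX, -, -, -, -, -, -⟩ := eg_dquad_spec c X hX
  obtain ⟨f1, f2, f3, hsY, hC1, hC2, hM⟩ := eg_btrip_spec c Y hY
  have cxy : c s((eg_btrip c Y hY).1, (eg_btrip c Y hY).2.1) = Y.1 := hC1.2
  have cyz : c s((eg_btrip c Y hY).2.1, (eg_btrip c Y hY).2.2) = Y.1 := hC2.2
  have hNxz : c s((eg_btrip c Y hY).1, (eg_btrip c Y hY).2.2) ≠ Y.1 :=
    fun hh => hM ⟨f3, hh⟩
  simp only [eg_tok] at h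
  have hvX : ![(eg_dquad c X hX).1, (eg_dquad c X hX).2.1, (eg_dquad c X hX).2.2.1,
      (eg_dquad c X hX).2.2.2] k ∈ X.2.supp := by
    fin_cases k <;> simp [hsX, eg_v6_0, eg_v6_1, eg_v6_2, eg_v6_3, eg_v6_4, eg_v6_5, eg_v4_0, eg_v4_1, eg_v4_2, eg_v4_3, eg_w6_0, eg_w6_1, eg_w6_2, eg_w6_3, eg_w6_4, eg_w6_5, eg_w4_0, eg_w4_1, eg_w4_2, eg_w4_3]
  have hDB : X ≠ Y := by
    rintro rfl
    exact eg_sets43 d1 d2 d3 d4 d5 d6 (hsX.symm.trans hsY)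
  fin_cases l <;> simp only [Prod.mk.injEq, eg_v6_0, eg_v6_1, eg_v6_2, eg_v6_3, eg_v6_4, eg_v6_5, eg_v4_0, eg_v4_1, eg_v4_2, eg_v4_3, eg_w6_0, eg_w6_1, eg_w6_2, eg_w6_3, eg_w6_4, eg_w6_5, eg_w4_0, eg_w4_1, eg_w4_2, eg_w4_3] at h <;> obtain ⟨hcol, hver⟩ := h
  · exact hDB (eg_sigma_eq hcol hvX (by rw [hver, hsY]; simp))
  · exact hDB (eg_sigma_eq hcol hvX (by rw [hver, hsY]; simp))
  · exact hDB (eg_sigma_eq hcol hvX (by rw [hver, hsY]; simp))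
  · have hcxz : c s((eg_btrip c Y hY).1, (eg_btrip c Y hY).2.2) = X.1 := hcol.symm
    exact eg_conflict_db hc (fun hh => hNxz (hcxz.symm ▸ hh)) f1 f2 f3 cxy cyz hcxz
      hX hvX (Or.inl hver)
  · have hcxz : c s((eg_btrip c Y hY).1, (eg_btrip c Y hY).2.2) = X.1 := hcol.symm
    exact eg_conflict_db hc (fun hh => hNxz (hcxz.symm ▸ hh)) f1 f2 f3 cxy cyz hcxz
      hX hvX (Or.inr (Or.inl hver))
  · have hcxz : c s((eg_btrip c Y hY).1, (eg_btrip c Y hY).2.2) = X.1 := hcol.symm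
    exact eg_conflict_db hc (fun hh => hNxz (hcxz.symm ▸ hh)) f1 f2 f3 cxy cyz hcxz
      hX hvX (Or.inr (Or.inr hver))

lemma eg_case_RR (hc : IsPQColoring 5 8 c)
    (X : Σ i : Fin m, (colorClass c i).ConnectedComponent) (hX : X ∈ setB1 c)
    (Y : Σ i : Fin m, (colorClass c i).ConnectedComponent) (hY : Y ∈ setB1 c)
    (k l : Fin 6)
    (h : eg_tok c (Sum.inr (⟨⟨X, hX⟩, k⟩)) = eg_tok c (Sum.inr (⟨⟨Y, hY⟩, l⟩))) :
    (⟨⟨X, hX⟩, k⟩ : ↥(setB1 c) × Fin 6) = ⟨⟨Y, hY⟩, l⟩ := by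
  have swap_c : ∀ a b : Fin n, c s(a,b) = c s(b,a) := fun a b => by rw [Sym2.eq_swap]
  by_cases hXY : X = Y
  · subst hXY
    obtain rfl : hX = hY := rfl
    simp only [eg_tok] at h
    have hj1 : eg_bj c X hX = c s((eg_btrip c X hX).1, (eg_btrip c X hX).2.2) := rfl
    obtain ⟨f1, f2, f3, hsX, hC1, hC2, hM⟩ := eg_btrip_spec c X hX
    have hbj : X.1 ≠ eg_bj c X hX := fun hh => hM ⟨f3, hj1.symm.trans hh.symm⟩
    suffices hkl : k = l by rw [hkl]
    clear hsX hC1 hC2 hM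
    fin_cases k <;> fin_cases l <;> simp_all [Prod.mk.injEq, eg_v6_0, eg_v6_1, eg_v6_2, eg_v6_3, eg_v6_4, eg_v6_5, eg_v4_0, eg_v4_1, eg_v4_2, eg_v4_3, eg_w6_0, eg_w6_1, eg_w6_2, eg_w6_3, eg_w6_4, eg_w6_5, eg_w4_0, eg_w4_1, eg_w4_2, eg_w4_3]
  · exfalso
    simp only [eg_tok] at h
    have hj1 : eg_bj c X hX = c s((eg_btrip c X hX).1, (eg_btrip c X hX).2.2) := rfl
    have hj2 : eg_bj c Y hY = c s((eg_btrip c Y hY).1, (eg_btrip c Y hY).2.2) := rfl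
    obtain ⟨e1, e2, e3, hsX, hC1, hC2, hM⟩ := eg_btrip_spec c X hX
    obtain ⟨f1, f2, f3, hsY, hD1, hD2, hN⟩ := eg_btrip_spec c Y hY
    set x := (eg_btrip c X hX).1 with hxd
    set y := (eg_btrip c X hX).2.1 with hyd
    set z := (eg_btrip c X hX).2.2 with hzd
    set x' := (eg_btrip c Y hY).1 with hxd'
    set y' := (eg_btrip c Y hY).2.1 with hyd'
    set z' := (eg_btrip c Y hY).2.2 with hzd'
    have cxy : c s(x, y) = X.1 := hC1.2
    have cyz : c s(y, z) = X.1 := hC2.2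
    have cxy' : c s(x', y') = Y.1 := hD1.2
    have cyz' : c s(y', z') = Y.1 := hD2.2
    have hA : c s(x, y) = c s(y, z) := cxy.trans cyz.symm
    have hA' : c s(x', y') = c s(y', z') := cxy'.trans cyz'.symm
    have mx : x ∈ X.2.supp := by rw [hsX]; simp
    have my : y ∈ X.2.supp := by rw [hsX]; simp
    have mz : z ∈ X.2.supp := by rw [hsX]; simp
    have m'x : x' ∈ Y.2.supp := by rw [hsY]; simp
    have m'y : y' ∈ Y.2.supp := by rw [hsY]; simp
    have m'z : z' ∈ Y.2.supp := by rw [hsY]; simp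
    fin_cases k <;> fin_cases l <;> simp only [Prod.mk.injEq, eg_v6_0, eg_v6_1, eg_v6_2, eg_v6_3, eg_v6_4, eg_v6_5, eg_v4_0, eg_v4_1, eg_v4_2, eg_v4_3, eg_w6_0, eg_w6_1, eg_w6_2, eg_w6_3, eg_w6_4, eg_w6_5, eg_w4_0, eg_w4_1, eg_w4_2, eg_w4_3] at h <;>
      obtain ⟨hcol, hver⟩ := h
    -- (0,0) .. (0,5)
    · exact hXY (eg_sigma_eq hcol mx (by rw [hver]; exact m'x))
    · exact hXY (eg_sigma_eq hcol mx (by rw [hver]; exact m'y))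
    · exact hXY (eg_sigma_eq hcol mx (by rw [hver]; exact m'z))
    · exact eg_bb_mixed hc X Y hX hY hXY hcol mx (Or.inl hver)
    · exact eg_bb_mixed hc X Y hX hY hXY hcol mx (Or.inr (Or.inl hver))
    · exact eg_bb_mixed hc X Y hX hY hXY hcol mx (Or.inr (Or.inr hver))
    -- (1,0) .. (1,5)
    · exact hXY (eg_sigma_eq hcol my (by rw [hver]; exact m'x))
    · exact hXY (eg_sigma_eq hcol my (by rw [hver]; exact m'y))
    · exact hXY (eg_sigma_eq hcol my (by rw [hver]; exact m'z))
    · exact eg_bb_mixed hc X Y hX hY hXY hcol my (Or.inl hver)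
    · exact eg_bb_mixed hc X Y hX hY hXY hcol my (Or.inr (Or.inl hver))
    · exact eg_bb_mixed hc X Y hX hY hXY hcol my (Or.inr (Or.inr hver))
    -- (2,0) .. (2,5)
    · exact hXY (eg_sigma_eq hcol mz (by rw [hver]; exact m'x))
    · exact hXY (eg_sigma_eq hcol mz (by rw [hver]; exact m'y))
    · exact hXY (eg_sigma_eq hcol mz (by rw [hver]; exact m'z))
    · exact eg_bb_mixed hc X Y hX hY hXY hcol mz (Or.inl hver)
    · exact eg_bb_mixed hc X Y hX hY hXY hcol mz (Or.inr (Or.inl hver))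
    · exact eg_bb_mixed hc X Y hX hY hXY hcol mz (Or.inr (Or.inr hver))
    -- (3,0) .. (3,2) : j-own
    · exact eg_bb_mixed hc Y X hY hX (Ne.symm hXY) hcol.symm m'x (Or.inl hver.symm)
    · exact eg_bb_mixed hc Y X hY hX (Ne.symm hXY) hcol.symm m'y (Or.inl hver.symm)
    · exact eg_bb_mixed hc Y X hY hX (Ne.symm hXY) hcol.symm m'z (Or.inl hver.symm)
    -- (3,3): x = x'
    · have hCC : c s(x, z) = c s(x', z') := hj1.symm.trans (hcol.trans hj2)
      have hcr : ∀ p q : Fin n, p ∈ X.2.supp → q ∈ Y.2.supp → p = q → p = x := by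
        intro p q hp hq hpq
        by_contra hne2
        exact eg_b1_sep hX hY.1 (Ne.symm hXY) hp (by rw [hpq]; exact hq) mx
          (by rw [hver]; exact m'x) hne2
      have d14 : x ≠ y' := fun hh => f1 (hver.symm.trans hh)
      have d15 : x ≠ z' := fun hh => f3 (hver.symm.trans hh)
      have d24 : y ≠ y' := fun hh => e1 ((hcr y y' my m'y hh).symm)
      have d25 : y ≠ z' := fun hh => e1 ((hcr y z' my m'z hh).symm)
      have d34 : z ≠ y' := fun hh => e3 ((hcr z y' mz m'y hh).symm)
      have d35 : z ≠ z' := fun hh => e3 ((hcr z z' mz m'z hh).symm)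
      have hB : c s(x, y') = c s(y', z') := by rw [hver]; exact hA'
      have hC : c s(x, z) = c s(x, z') := hCC.trans (by rw [hver])
      exact eg_core1 hc e1 e3 d14 d15 e2 d24 d25 d34 d35 f2 hA hB hC
    -- (3,4): x = y'
    · have hCC : c s(x, z) = c s(x', z') := hj1.symm.trans (hcol.trans hj2)
      have hcr : ∀ p q : Fin n, p ∈ X.2.supp → q ∈ Y.2.supp → p = q → p = x := by
        intro p q hp hq hpq
        by_contra hne2
        exact eg_b1_sep hX hY.1 (Ne.symm hXY) hp (by rw [hpq]; exact hq) mx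
          (by rw [hver]; exact m'y) hne2
      have d14 : x ≠ x' := fun hh => f1 (hh.symm.trans hver)
      have d15 : x ≠ z' := fun hh => f2 (hver.symm.trans hh)
      have d24 : y ≠ x' := fun hh => e1 ((hcr y x' my m'x hh).symm)
      have d25 : y ≠ z' := fun hh => e1 ((hcr y z' my m'z hh).symm)
      have d34 : z ≠ x' := fun hh => e3 ((hcr z x' mz m'x hh).symm)
      have d35 : z ≠ z' := fun hh => e3 ((hcr z z' mz m'z hh).symm)
      have u1 : c s(x', x) = Y.1 := by rw [hver]; exact cxy'
      have u2 : c s(x, z') = Y.1 := by rw [hver]; exact cyz'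
      have hB : c s(x, x') = c s(x, z') := ((swap_c x x').trans u1).trans u2.symm
      exact eg_core2 hc e1 e3 d14 d15 e2 d24 d25 d34 d35 f3 hA hB hCC
    -- (3,5): x = z'
    · have hCC : c s(x, z) = c s(x', z') := hj1.symm.trans (hcol.trans hj2)
      have hcr : ∀ p q : Fin n, p ∈ X.2.supp → q ∈ Y.2.supp → p = q → p = x := by
        intro p q hp hq hpq
        by_contra hne2
        exact eg_b1_sep hX hY.1 (Ne.symm hXY) hp (by rw [hpq]; exact hq) mx
          (by rw [hver]; exact m'z) hne2
      have d14 : x ≠ y' := fun hh => f2 (hh.symm.trans hver)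
      have d15 : x ≠ x' := fun hh => f3 (hh.symm.trans hver)
      have d24 : y ≠ y' := fun hh => e1 ((hcr y y' my m'y hh).symm)
      have d25 : y ≠ x' := fun hh => e1 ((hcr y x' my m'x hh).symm)
      have d34 : z ≠ y' := fun hh => e3 ((hcr z y' mz m'y hh).symm)
      have d35 : z ≠ x' := fun hh => e3 ((hcr z x' mz m'x hh).symm)
      have u1 : c s(y', x) = Y.1 := by rw [hver]; exact cyz'
      have u2 : c s(y', x') = Y.1 := (swap_c y' x').trans cxy'
      have hB : c s(x, y') = c s(y', x') := ((swap_c x y').trans u1).trans u2.symm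
      have hC : c s(x, z) = c s(x, x') := hCC.trans ((swap_c x' z').trans (by rw [hver]))
      exact eg_core1 hc e1 e3 d14 d15 e2 d24 d25 d34 d35 f1.symm hA hB hC
    -- (4,0) .. (4,2) : j-own
    · exact eg_bb_mixed hc Y X hY hX (Ne.symm hXY) hcol.symm m'x (Or.inr (Or.inl hver.symm))
    · exact eg_bb_mixed hc Y X hY hX (Ne.symm hXY) hcol.symm m'y (Or.inr (Or.inl hver.symm))
    · exact eg_bb_mixed hc Y X hY hX (Ne.symm hXY) hcol.symm m'z (Or.inr (Or.inl hver.symm))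
    -- (4,3): y = x'
    · have hCC : c s(x, z) = c s(x', z') := hj1.symm.trans (hcol.trans hj2)
      have hcr : ∀ p q : Fin n, p ∈ X.2.supp → q ∈ Y.2.supp → p = q → p = y := by
        intro p q hp hq hpq
        by_contra hne2
        exact eg_b1_sep hX hY.1 (Ne.symm hXY) hp (by rw [hpq]; exact hq) my
          (by rw [hver]; exact m'x) hne2
      have d14 : x' ≠ x := fun hh => e1 ((hver.trans hh).symm)
      have d15 : x' ≠ z := fun hh => e2 (hver.trans hh)
      have d24 : y' ≠ x := fun hh => e1 (hcr x y' mx m'y hh.symm)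
      have d25 : y' ≠ z := fun hh => e2 ((hcr z y' mz m'y hh.symm).symm)
      have d34 : z' ≠ x := fun hh => e1 (hcr x z' mx m'z hh.symm)
      have d35 : z' ≠ z := fun hh => e2 ((hcr z z' mz m'z hh.symm).symm)
      have u1 : c s(x', x) = X.1 := by rw [← hver]; exact (swap_c y x).trans cxy
      have u2 : c s(x', z) = X.1 := by rw [← hver]; exact cyz
      have hB : c s(x', x) = c s(x', z) := u1.trans u2.symm
      exact eg_core2 hc f1 f3 d14 d15 f2 d24 d25 d34 d35 e3 hA' hB hCC.symm
    -- (4,4): y = y'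
    · have hCC : c s(x, z) = c s(x', z') := hj1.symm.trans (hcol.trans hj2)
      have hcr : ∀ p q : Fin n, p ∈ X.2.supp → q ∈ Y.2.supp → p = q → p = y := by
        intro p q hp hq hpq
        by_contra hne2
        exact eg_b1_sep hX hY.1 (Ne.symm hXY) hp (by rw [hpq]; exact hq) my
          (by rw [hver]; exact m'y) hne2
      have d14 : x ≠ x' := fun hh => e1 (hcr x x' mx m'x hh)
      have d15 : x ≠ z' := fun hh => e1 (hcr x z' mx m'z hh)
      have d24 : y ≠ x' := fun hh => f1 ((hver.symm.trans hh).symm)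
      have d25 : y ≠ z' := fun hh => f2 (hver.symm.trans hh)
      have d34 : z ≠ x' := fun hh => e2 ((hcr z x' mz m'x hh).symm)
      have d35 : z ≠ z' := fun hh => e2 ((hcr z z' mz m'z hh).symm)
      have u1 : c s(y, x') = Y.1 := by rw [hver]; exact (swap_c y' x').trans cxy'
      have u2 : c s(y, z') = Y.1 := by rw [hver]; exact cyz'
      have hB : c s(y, x') = c s(y, z') := u1.trans u2.symm
      exact eg_core3 hc e1 e3 d14 d15 e2 d24 d25 d34 d35 f3 hA hB hCC
    -- (4,5): y = z'
    · have hCC : c s(x, z) = c s(x', z') := hj1.symm.trans (hcol.trans hj2)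
      have hcr : ∀ p q : Fin n, p ∈ X.2.supp → q ∈ Y.2.supp → p = q → p = y := by
        intro p q hp hq hpq
        by_contra hne2
        exact eg_b1_sep hX hY.1 (Ne.symm hXY) hp (by rw [hpq]; exact hq) my
          (by rw [hver]; exact m'z) hne2
      have d14 : z' ≠ x := fun hh => e1 ((hver.trans hh).symm)
      have d15 : z' ≠ z := fun hh => e2 (hver.trans hh)
      have d24 : y' ≠ x := fun hh => e1 (hcr x y' mx m'y hh.symm)
      have d25 : y' ≠ z := fun hh => e2 ((hcr z y' mz m'y hh.symm).symm)
      have d34 : x' ≠ x := fun hh => e1 (hcr x x' mx m'x hh.symm)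
      have d35 : x' ≠ z := fun hh => e2 ((hcr z x' mz m'x hh.symm).symm)
      have hAs : c s(z', y') = c s(y', x') := ((swap_c z' y').trans hA'.symm).trans (swap_c x' y')
      have u1 : c s(z', x) = X.1 := by rw [← hver]; exact (swap_c y x).trans cxy
      have u2 : c s(z', z) = X.1 := by rw [← hver]; exact cyz
      have hBs : c s(z', x) = c s(z', z) := u1.trans u2.symm
      have hCs : c s(z', x') = c s(x, z) := (swap_c z' x').trans hCC.symm
      exact eg_core2 hc f2.symm f3.symm d14 d15 f1.symm d24 d25 d34 d35 e3 hAs hBs hCs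
    -- (5,0) .. (5,2) : j-own
    · exact eg_bb_mixed hc Y X hY hX (Ne.symm hXY) hcol.symm m'x (Or.inr (Or.inr hver.symm))
    · exact eg_bb_mixed hc Y X hY hX (Ne.symm hXY) hcol.symm m'y (Or.inr (Or.inr hver.symm))
    · exact eg_bb_mixed hc Y X hY hX (Ne.symm hXY) hcol.symm m'z (Or.inr (Or.inr hver.symm))
    -- (5,3): z = x'
    · have hCC : c s(x, z) = c s(x', z') := hj1.symm.trans (hcol.trans hj2)
      have hcr : ∀ p q : Fin n, p ∈ X.2.supp → q ∈ Y.2.supp → p = q → p = z := by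
        intro p q hp hq hpq
        by_contra hne2
        exact eg_b1_sep hX hY.1 (Ne.symm hXY) hp (by rw [hpq]; exact hq) mz
          (by rw [hver]; exact m'x) hne2
      have d14 : z ≠ y' := fun hh => f1 (hver.symm.trans hh)
      have d15 : z ≠ z' := fun hh => f3 (hver.symm.trans hh)
      have d24 : y ≠ y' := fun hh => e2 (hcr y y' my m'y hh)
      have d25 : y ≠ z' := fun hh => e2 (hcr y z' my m'z hh)
      have d34 : x ≠ y' := fun hh => e3 (hcr x y' mx m'y hh)
      have d35 : x ≠ z' := fun hh => e3 (hcr x z' mx m'z hh)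
      have hAs : c s(z, y) = c s(y, x) := ((swap_c z y).trans hA.symm).trans (swap_c x y)
      have hBs : c s(z, y') = c s(y', z') := by rw [hver]; exact hA'
      have hCs : c s(z, x) = c s(z, z') := ((swap_c z x).trans hCC).trans (by rw [hver])
      exact eg_core1 hc e2.symm e3.symm d14 d15 e1.symm d24 d25 d34 d35 f2 hAs hBs hCs
    -- (5,4): z = y'
    · have hCC : c s(x, z) = c s(x', z') := hj1.symm.trans (hcol.trans hj2)
      have hcr : ∀ p q : Fin n, p ∈ X.2.supp → q ∈ Y.2.supp → p = q → p = z := by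
        intro p q hp hq hpq
        by_contra hne2
        exact eg_b1_sep hX hY.1 (Ne.symm hXY) hp (by rw [hpq]; exact hq) mz
          (by rw [hver]; exact m'y) hne2
      have d14 : z ≠ x' := fun hh => f1 (hh.symm.trans hver)
      have d15 : z ≠ z' := fun hh => f2 (hver.symm.trans hh)
      have d24 : y ≠ x' := fun hh => e2 (hcr y x' my m'x hh)
      have d25 : y ≠ z' := fun hh => e2 (hcr y z' my m'z hh)
      have d34 : x ≠ x' := fun hh => e3 (hcr x x' mx m'x hh)
      have d35 : x ≠ z' := fun hh => e3 (hcr x z' mx m'z hh)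
      have hAs : c s(z, y) = c s(y, x) := ((swap_c z y).trans hA.symm).trans (swap_c x y)
      have u1 : c s(x', z) = Y.1 := by rw [hver]; exact cxy'
      have u2 : c s(z, z') = Y.1 := by rw [hver]; exact cyz'
      have hBs : c s(z, x') = c s(z, z') := ((swap_c z x').trans u1).trans u2.symm
      have hCs : c s(z, x) = c s(x', z') := (swap_c z x).trans hCC
      exact eg_core2 hc e2.symm e3.symm d14 d15 e1.symm d24 d25 d34 d35 f3 hAs hBs hCs
    -- (5,5): z = z'
    · have hCC : c s(x, z) = c s(x', z') := hj1.symm.trans (hcol.trans hj2)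
      have hcr : ∀ p q : Fin n, p ∈ X.2.supp → q ∈ Y.2.supp → p = q → p = z := by
        intro p q hp hq hpq
        by_contra hne2
        exact eg_b1_sep hX hY.1 (Ne.symm hXY) hp (by rw [hpq]; exact hq) mz
          (by rw [hver]; exact m'z) hne2
      have d14 : z ≠ y' := fun hh => f2 (hh.symm.trans hver)
      have d15 : z ≠ x' := fun hh => f3 (hh.symm.trans hver)
      have d24 : y ≠ y' := fun hh => e2 (hcr y y' my m'y hh)
      have d25 : y ≠ x' := fun hh => e2 (hcr y x' my m'x hh)
      have d34 : x ≠ y' := fun hh => e3 (hcr x y' mx m'y hh)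
      have d35 : x ≠ x' := fun hh => e3 (hcr x x' mx m'x hh)
      have hAs : c s(z, y) = c s(y, x) := ((swap_c z y).trans hA.symm).trans (swap_c x y)
      have u1 : c s(y', z) = Y.1 := by rw [hver]; exact cyz'
      have u2 : c s(y', x') = Y.1 := (swap_c y' x').trans cxy'
      have hBs : c s(z, y') = c s(y', x') := ((swap_c z y').trans u1).trans u2.symm
      have hCs : c s(z, x) = c s(z, x') :=
        ((swap_c z x).trans hCC).trans ((swap_c x' z').trans (by rw [hver]))
      exact eg_core1 hc e2.symm e3.symm d14 d15 e1.symm d24 d25 d34 d35 f1.symm hAs hBs hCs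

lemma eg_tok_inj (hc : IsPQColoring 5 8 c) : Function.Injective (eg_tok c) := by
  rintro (⟨⟨X, hX⟩, k⟩ | ⟨⟨X, hX⟩, k⟩) (⟨⟨Y, hY⟩, l⟩ | ⟨⟨Y, hY⟩, l⟩) h
  · -- LL
    obtain ⟨d1, d2, d3, d4, d5, d6, hsX, -, -, -, -, -, -⟩ := eg_dquad_spec c X hX
    obtain ⟨g1, g2, g3, g4, g5, g6, hsY, -, -, -, -, -, -⟩ := eg_dquad_spec c Y hY
    simp only [eg_tok] at h
    rw [Prod.mk.injEq] at h
    obtain ⟨hcol, hver⟩ := h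
    have hvX : ![(eg_dquad c X hX).1, (eg_dquad c X hX).2.1, (eg_dquad c X hX).2.2.1,
        (eg_dquad c X hX).2.2.2] k ∈ X.2.supp := by
      fin_cases k <;> simp [hsX, eg_v6_0, eg_v6_1, eg_v6_2, eg_v6_3, eg_v6_4, eg_v6_5, eg_v4_0, eg_v4_1, eg_v4_2, eg_v4_3, eg_w6_0, eg_w6_1, eg_w6_2, eg_w6_3, eg_w6_4, eg_w6_5, eg_w4_0, eg_w4_1, eg_w4_2, eg_w4_3]
    have hvY : ![(eg_dquad c Y hY).1, (eg_dquad c Y hY).2.1, (eg_dquad c Y hY).2.2.1,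
        (eg_dquad c Y hY).2.2.2] l ∈ Y.2.supp := by
      fin_cases l <;> simp [hsY, eg_v6_0, eg_v6_1, eg_v6_2, eg_v6_3, eg_v6_4, eg_v6_5, eg_v4_0, eg_v4_1, eg_v4_2, eg_v4_3, eg_w6_0, eg_w6_1, eg_w6_2, eg_w6_3, eg_w6_4, eg_w6_5, eg_w4_0, eg_w4_1, eg_w4_2, eg_w4_3]
    rw [← hver] at hvY
    obtain rfl : X = Y := eg_sigma_eq hcol hvX hvY
    obtain rfl : hX = hY := rfl
    clear hvX hvY hcol hsX hsY g1 g2 g3 g4 g5 g6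
    suffices hkl : k = l by rw [hkl]
    fin_cases k <;> fin_cases l <;> simp_all [eg_v6_0, eg_v6_1, eg_v6_2, eg_v6_3, eg_v6_4, eg_v6_5, eg_v4_0, eg_v4_1, eg_v4_2, eg_v4_3, eg_w6_0, eg_w6_1, eg_w6_2, eg_w6_3, eg_w6_4, eg_w6_5, eg_w4_0, eg_w4_1, eg_w4_2, eg_w4_3]
  · exact absurd h (fun hh => eg_case_LR hc X hX Y hY k l hh)
  · exact absurd h.symm (fun hh => eg_case_LR hc Y hY X hX l k hh)
  · exact congrArg Sum.inr (eg_case_RR hc X hX Y hY k l h)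

end EGInj

/-- For a `(5,8)`-coloring of `K_n` (`n ≥ 5`) with `m` colors and no
monochromatic triangle, `m·n ≥ 4|D| + 6|B₁|`. -/
theorem mn_lower_bound {n m : ℕ} (hn : 5 ≤ n)
    (c : Sym2 (Fin n) → Fin m) (hc : IsPQColoring 5 8 c)
    (htri : ¬ HasMonoTriangle c) :
    4 * (setD c).ncard + 6 * (setB1 c).ncard ≤ m * n := by
  classical
  have hinj := eg_tok_inj (c := c) hc
  have hcard := Nat.card_le_card_of_injective _ hinj
  rw [Nat.card_sum, Nat.card_prod, Nat.card_prod, Nat.card_prod,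
    Nat.card_coe_set_eq, Nat.card_coe_set_eq, Nat.card_eq_fintype_card,
    Nat.card_eq_fintype_card, Nat.card_eq_fintype_card, Nat.card_eq_fintype_card,
    Fintype.card_fin, Fintype.card_fin, Fintype.card_fin, Fintype.card_fin] at hcard
  omega
end

section
/- Let n ≥ 5 and let c be a (5,8)-coloring of K_n with no monochromatic triangle. If X is a maximal monochromatic component isomorphic to P_4 (path with 3 edges) or K_{1,3} (star with 3 edges), then each of the three vertex pairs in L(X) is an edge of K_n that forms by itself a maximal monochromatic component isomorphic to K_2, and these three edges receive three pairwise distinct colors. -/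
open SimpleGraph

lemma seven_ncard {α : Type*} (t1 t2 t3 t4 t5 t6 t7 : α) :
    ({t1,t2,t3,t4,t5,t6,t7} : Set α).ncard ≤ 7 ∧ ({t1,t2,t3,t4,t5,t6,t7} : Set α).Finite := by
  have hf : ({t1,t2,t3,t4,t5,t6,t7} : Set α).Finite := by
    apply Set.Finite.insert; apply Set.Finite.insert; apply Set.Finite.insert
    apply Set.Finite.insert; apply Set.Finite.insert; apply Set.Finite.insert
    exact Set.finite_singleton _
  have step : ∀ (m : ℕ) (s : Set α) (t : α), s.ncard ≤ m → (insert t s).ncard ≤ m + 1 :=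
    fun m s t h => (Set.ncard_insert_le _ _).trans (by omega)
  refine ⟨?_, hf⟩
  apply step 6; apply step 5; apply step 4; apply step 3; apply step 2; apply step 1
  simp [Set.ncard_singleton]
lemma exists_outside {n : ℕ} (hn : 5 ≤ n) (a b d e : Fin n) :
    ∃ w : Fin n, w ≠ a ∧ w ≠ b ∧ w ≠ d ∧ w ≠ e := by
  have c2 : ({d,e} : Finset (Fin n)).card ≤ 2 := (Finset.card_insert_le _ _).trans (by simp)
  have c3 : ({b,d,e} : Finset (Fin n)).card ≤ 3 := (Finset.card_insert_le _ _).trans (by omega)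
  have c4 : ({a,b,d,e} : Finset (Fin n)).card ≤ 4 := (Finset.card_insert_le _ _).trans (by omega)
  have hns : ¬ ((Finset.univ : Finset (Fin n)) ⊆ ({a,b,d,e} : Finset (Fin n))) := by
    intro h
    have := Finset.card_le_card h
    simp [Finset.card_univ] at this
    omega
  obtain ⟨w, -, hw⟩ := Finset.not_subset.mp hns
  simp only [Finset.mem_insert, Finset.mem_singleton, not_or] at hw
  exact ⟨w, hw.1, hw.2.1, hw.2.2.1, hw.2.2.2⟩
lemma core_lemma {n : ℕ} {α : Type*} (c : Sym2 (Fin n) → α)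
    (hc : IsPQColoring 5 8 c) (a b d e w : Fin n)
    (hab : a ≠ b) (had : a ≠ d) (hae : a ≠ e) (haw : a ≠ w)
    (hbd : b ≠ d) (hbe : b ≠ e) (hbw : b ≠ w)
    (hde : d ≠ e) (hdw : d ≠ w) (hew : e ≠ w)
    (T : Set α) (hT : T.ncard ≤ 7) (hTfin : T.Finite)
    (h1 : c s(a,b) ∈ T) (h2 : c s(a,d) ∈ T) (h3 : c s(a,e) ∈ T) (h4 : c s(a,w) ∈ T)
    (h5 : c s(b,d) ∈ T) (h6 : c s(b,e) ∈ T) (h7 : c s(b,w) ∈ T)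
    (h8 : c s(d,e) ∈ T) (h9 : c s(d,w) ∈ T) (h10 : c s(e,w) ∈ T) : False := by
  have hcard : ({a, b, d, e, w} : Finset (Fin n)).card = 5 := by
    rw [Finset.card_insert_of_notMem (by simp [hab, had, hae, haw]),
      Finset.card_insert_of_notMem (by simp [hbd, hbe, hbw]),
      Finset.card_insert_of_notMem (by simp [hde, hdw]),
      Finset.card_insert_of_notMem (by simp [hew]), Finset.card_singleton]
  have h8le := hc {a, b, d, e, w} hcard
  have hsub : {j : α | ∃ x ∈ ({a, b, d, e, w} : Finset (Fin n)),
      ∃ y ∈ ({a, b, d, e, w} : Finset (Fin n)), x ≠ y ∧ c s(x, y) = j} ⊆ T := by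
    rintro j ⟨x, hx, y, hy, hxy, rfl⟩
    simp only [Finset.mem_insert, Finset.mem_singleton] at hx hy
    rcases hx with rfl | rfl | rfl | rfl | rfl <;>
      rcases hy with rfl | rfl | rfl | rfl | rfl <;>
      first
        | exact absurd rfl hxy
        | assumption
        | (rw [Sym2.eq_swap]; assumption)
  have := (Set.ncard_le_ncard hsub hTfin).trans hT
  omega
lemma master1_aux {n : ℕ} {α : Type*} (hn : 5 ≤ n) (c : Sym2 (Fin n) → α)
    (hc : IsPQColoring 5 8 c) (i : α) (a b d e : Fin n)
    (hab : a ≠ b) (had : a ≠ d) (hae : a ≠ e) (hbd : b ≠ d) (hbe : b ≠ e) (hde : d ≠ e)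
    (p1 p2 p3 : Sym2 (Fin n))
    (hcov : ∀ x y : Fin n, x ∈ ({a,b,d,e} : Set (Fin n)) → y ∈ ({a,b,d,e} : Set (Fin n)) →
      x ≠ y → c s(x,y) = i ∨ s(x,y) = p1 ∨ s(x,y) = p2 ∨ s(x,y) = p3)
    (hcp : c p1 = c p2) : False := by
  obtain ⟨w, hwa, hwb, hwd, hwe⟩ := exists_outside hn a b d e
  set T : Set α := {i, c p1, c p3, c s(a,w), c s(b,w), c s(d,w), c s(e,w)} with hTdef
  obtain ⟨hT7, hTfin⟩ := seven_ncard i (c p1) (c p3) (c s(a,w)) (c s(b,w)) (c s(d,w)) (c s(e,w))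
  have hint : ∀ x y : Fin n, x ∈ ({a,b,d,e} : Set (Fin n)) → y ∈ ({a,b,d,e} : Set (Fin n)) →
      x ≠ y → c s(x,y) ∈ T := by
    intro x y hx hy hxy
    rcases hcov x y hx hy hxy with h | h | h | h <;> rw [h]
    · simp [hTdef]
    · simp [hTdef]
    · rw [← hcp]; simp [hTdef]
    · simp [hTdef]
  have ma : a ∈ ({a,b,d,e} : Set (Fin n)) := by simp
  have mb : b ∈ ({a,b,d,e} : Set (Fin n)) := by simp
  have md : d ∈ ({a,b,d,e} : Set (Fin n)) := by simp
  have me : e ∈ ({a,b,d,e} : Set (Fin n)) := by simp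
  exact core_lemma c hc a b d e w hab had hae hwa.symm hbd hbe hwb.symm hde hwd.symm hwe.symm
    T hT7 hTfin (hint a b ma mb hab) (hint a d ma md had) (hint a e ma me hae)
    (by simp [hTdef]) (hint b d mb md hbd) (hint b e mb me hbe) (by simp [hTdef])
    (hint d e md me hde) (by simp [hTdef]) (by simp [hTdef])

lemma master1 {n : ℕ} {α : Type*} (hn : 5 ≤ n) (c : Sym2 (Fin n) → α)
    (hc : IsPQColoring 5 8 c) (i : α) (a b d e : Fin n)
    (hab : a ≠ b) (had : a ≠ d) (hae : a ≠ e) (hbd : b ≠ d) (hbe : b ≠ e) (hde : d ≠ e)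
    (p1 p2 p3 : Sym2 (Fin n))
    (hcov : ∀ x y : Fin n, x ∈ ({a,b,d,e} : Set (Fin n)) → y ∈ ({a,b,d,e} : Set (Fin n)) →
      x ≠ y → c s(x,y) = i ∨ s(x,y) = p1 ∨ s(x,y) = p2 ∨ s(x,y) = p3) :
    c p1 ≠ c p2 ∧ c p1 ≠ c p3 ∧ c p2 ≠ c p3 := by
  refine ⟨fun h => master1_aux hn c hc i a b d e hab had hae hbd hbe hde p1 p2 p3 hcov h,
    fun h => master1_aux hn c hc i a b d e hab had hae hbd hbe hde p1 p3 p2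
      (fun x y hx hy hxy => by rcases hcov x y hx hy hxy with h'|h'|h'|h' <;> tauto) h,
    fun h => master1_aux hn c hc i a b d e hab had hae hbd hbe hde p2 p3 p1
      (fun x y hx hy hxy => by rcases hcov x y hx hy hxy with h'|h'|h'|h' <;> tauto) h⟩
lemma reach_mem {V : Type*} {G : SimpleGraph V} {P : Set V}
    (hcl : ∀ u z, u ∈ P → G.Adj u z → z ∈ P) {u z : V}
    (h : G.Reachable u z) (hu : u ∈ P) : z ∈ P := by
  obtain ⟨w⟩ := h
  induction w with
  | nil => exact hu
  | cons h' p ih => exact ih (hcl _ _ hu h')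
lemma outside_aux {n : ℕ} {α : Type*} (c : Sym2 (Fin n) → α)
    (hc : IsPQColoring 5 8 c) (i : α) (u v2 v3 v4 z : Fin n)
    (h12 : u ≠ v2) (h13 : u ≠ v3) (h14 : u ≠ v4)
    (h23 : v2 ≠ v3) (h24 : v2 ≠ v4) (h34 : v3 ≠ v4)
    (hz1 : u ≠ z) (hz2 : v2 ≠ z) (hz3 : v3 ≠ z) (hz4 : v4 ≠ z)
    (p1 p2 p3 : Sym2 (Fin n))
    (hcov : ∀ x y : Fin n, x ∈ ({u,v2,v3,v4} : Set (Fin n)) → y ∈ ({u,v2,v3,v4} : Set (Fin n)) →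
      x ≠ y → c s(x,y) = i ∨ s(x,y) = p1 ∨ s(x,y) = p2 ∨ s(x,y) = p3)
    (hsp : c s(u,z) = c p1 ∨ c s(u,z) = c p2 ∨ c s(u,z) = c p3) : False := by
  obtain ⟨hT7, hTfin⟩ := seven_ncard i (c p1) (c p2) (c p3) (c s(v2,z)) (c s(v3,z)) (c s(v4,z))
  have hint : ∀ x' y' : Fin n, x' ∈ ({u,v2,v3,v4} : Set (Fin n)) →
      y' ∈ ({u,v2,v3,v4} : Set (Fin n)) → x' ≠ y' →
      c s(x',y') ∈ ({i, c p1, c p2, c p3, c s(v2,z), c s(v3,z), c s(v4,z)} : Set α) := by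
    intro x' y' hx' hy' hne
    rcases hcov x' y' hx' hy' hne with h | h | h | h <;> rw [h] <;> simp
  have m1 : u ∈ ({u,v2,v3,v4} : Set (Fin n)) := by simp
  have m2 : v2 ∈ ({u,v2,v3,v4} : Set (Fin n)) := by simp
  have m3 : v3 ∈ ({u,v2,v3,v4} : Set (Fin n)) := by simp
  have m4 : v4 ∈ ({u,v2,v3,v4} : Set (Fin n)) := by simp
  refine core_lemma c hc u v2 v3 v4 z h12 h13 h14 hz1 h23 h24 hz2 h34 hz3 hz4
    _ hT7 hTfin (hint u v2 m1 m2 h12) (hint u v3 m1 m3 h13) (hint u v4 m1 m4 h14)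
    ?_ (hint v2 v3 m2 m3 h23) (hint v2 v4 m2 m4 h24) (by simp)
    (hint v3 v4 m3 m4 h34) (by simp) (by simp)
  rcases hsp with h | h | h <;> rw [h] <;> simp

set_option maxHeartbeats 2000000 in
lemma master2 {n : ℕ} {α : Type*} (hn : 5 ≤ n) (c : Sym2 (Fin n) → α)
    (hc : IsPQColoring 5 8 c) (i : α) (a b d e : Fin n)
    (hab : a ≠ b) (had : a ≠ d) (hae : a ≠ e) (hbd : b ≠ d) (hbe : b ≠ e) (hde : d ≠ e)
    (p1 p2 p3 : Sym2 (Fin n))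
    (hcov : ∀ x y : Fin n, x ∈ ({a,b,d,e} : Set (Fin n)) → y ∈ ({a,b,d,e} : Set (Fin n)) →
      x ≠ y → c s(x,y) = i ∨ s(x,y) = p1 ∨ s(x,y) = p2 ∨ s(x,y) = p3)
    (x y : Fin n) (hx : x ∈ ({a,b,d,e} : Set (Fin n))) (hy : y ∈ ({a,b,d,e} : Set (Fin n)))
    (hxy : x ≠ y) (hjne : c s(x,y) ≠ i) :
    ((colorClass c (c s(x,y))).connectedComponentMk x).supp = {x, y} := by
  obtain ⟨F1, F2, F3⟩ := master1 hn c hc i a b d e hab had hae hbd hbe hde p1 p2 p3 hcov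
  have hxyp : s(x,y) = p1 ∨ s(x,y) = p2 ∨ s(x,y) = p3 := by
    rcases hcov x y hx hy hxy with h | h | h | h
    · exact absurd h hjne
    · exact Or.inl h
    · exact Or.inr (Or.inl h)
    · exact Or.inr (Or.inr h)
  have hcl : ∀ u z, u ∈ ({x,y} : Set (Fin n)) →
      (colorClass c (c s(x,y))).Adj u z → z ∈ ({x,y} : Set (Fin n)) := by
    rintro u z hu ⟨huz, hcc⟩
    by_contra hz
    simp only [Set.mem_insert_iff, Set.mem_singleton_iff, not_or] at hz
    obtain ⟨hzx, hzy⟩ := hz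
    have hsne : s(u,z) ≠ s(x,y) := by
      intro hEq
      rw [Sym2.eq_iff] at hEq
      rcases hEq with ⟨h1, h2⟩ | ⟨h1, h2⟩
      · exact hzy h2
      · exact hzx h2
    have huS : u ∈ ({a,b,d,e} : Set (Fin n)) := by
      rcases hu with rfl | hu
      · exact hx
      · rw [Set.mem_singleton_iff] at hu; subst hu; exact hy
    have key : ∀ q q' : Sym2 (Fin n), s(u,z) = q → s(x,y) = q' → c q = c q' := by
      intro q q' hq hq'
      rw [← hq, ← hq']
      exact hcc
    by_cases hzS : z ∈ ({a,b,d,e} : Set (Fin n))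
    · rcases hcov u z huS hzS huz with h | h | h | h
      · exact hjne (by rw [← hcc]; exact h)
      all_goals {
        rcases hxyp with h' | h' | h' <;>
        first
        | exact hsne (h.trans h'.symm)
        | exact F1 (key _ _ h h')
        | exact F1 (key _ _ h h').symm
        | exact F2 (key _ _ h h')
        | exact F2 (key _ _ h h').symm
        | exact F3 (key _ _ h h')
        | exact F3 (key _ _ h h').symm }
    · simp only [Set.mem_insert_iff, Set.mem_singleton_iff, not_or] at hzS
      obtain ⟨hza, hzb, hzd, hze⟩ := hzS
      have hza' : a ≠ z := fun h => hza h.symm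
      have hzb' : b ≠ z := fun h => hzb h.symm
      have hzd' : d ≠ z := fun h => hzd h.symm
      have hze' : e ≠ z := fun h => hze h.symm
      have hsp0 : c s(u,z) = c p1 ∨ c s(u,z) = c p2 ∨ c s(u,z) = c p3 := by
        rcases hxyp with h' | h' | h'
        · exact Or.inl (by rw [hcc, h'])
        · exact Or.inr (Or.inl (by rw [hcc, h']))
        · exact Or.inr (Or.inr (by rw [hcc, h']))
      have hmemb : ∀ x' : Fin n, x' ∈ ({a,b,d,e} : Set (Fin n)) →
          (∀ S' : Set (Fin n), ({a,b,d,e} : Set (Fin n)) = S' → x' ∈ S') := by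
        intro x' hx' S' hS'
        rw [← hS']
        exact hx'
      have huS' := huS
      simp only [Set.mem_insert_iff, Set.mem_singleton_iff] at huS'
      have adapt : ∀ q1 q2 q3 q4 : Fin n, ({a,b,d,e} : Set (Fin n)) = {q1,q2,q3,q4} →
          (∀ x' y' : Fin n, x' ∈ ({q1,q2,q3,q4} : Set (Fin n)) →
            y' ∈ ({q1,q2,q3,q4} : Set (Fin n)) → x' ≠ y' →
            c s(x',y') = i ∨ s(x',y') = p1 ∨ s(x',y') = p2 ∨ s(x',y') = p3) := by
        intro q1 q2 q3 q4 hq x' y' hx' hy' hne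
        rw [← hq] at hx' hy'
        exact hcov x' y' hx' hy' hne
      rcases huS' with h | h | h | h
      · rw [h] at hsp0
        exact outside_aux c hc i a b d e z hab had hae hbd hbe hde hza' hzb' hzd' hze'
          p1 p2 p3 hcov hsp0
      · rw [h] at hsp0
        exact outside_aux c hc i b a d e z hab.symm hbd hbe had hae hde hzb' hza' hzd' hze'
          p1 p2 p3 (adapt b a d e (Set.insert_comm a b {d,e})) hsp0
      · rw [h] at hsp0
        exact outside_aux c hc i d a b e z had.symm hbd.symm hde hab hae hbe hzd' hza' hzb' hze'
          p1 p2 p3 (adapt d a b e (by rw [Set.insert_comm b d ({e} : Set (Fin n)), Set.insert_comm a d ({b,e} : Set (Fin n))])) hsp0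
      · rw [h] at hsp0
        exact outside_aux c hc i e a b d z hae.symm hbe.symm hde.symm hab had hbd hze' hza' hzb' hzd'
          p1 p2 p3 (adapt e a b d (by rw [Set.pair_comm d e, Set.insert_comm b e ({d} : Set (Fin n)), Set.insert_comm a e ({b,d} : Set (Fin n))])) hsp0
  have hadjxy : (colorClass c (c s(x,y))).Adj x y := ⟨hxy, rfl⟩
  ext z
  simp only [ConnectedComponent.mem_supp_iff]
  constructor
  · intro hmk
    have hreach : (colorClass c (c s(x,y))).Reachable x z :=
      (ConnectedComponent.eq.mp hmk).symm
    exact reach_mem hcl hreach (Or.inl rfl)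
  · intro hmem
    rcases hmem with rfl | hmem
    · rfl
    · rw [Set.mem_singleton_iff] at hmem; subst hmem
      exact ConnectedComponent.sound hadjxy.symm.reachable
lemma extract {n : ℕ} {α : Type*} (c : Sym2 (Fin n) → α) (i : α)
    (K : (colorClass c i).ConnectedComponent)
    (hK : ComponentIso (colorClass c i) K (pathGraph 4) ∨
      ComponentIso (colorClass c i) K starK13) :
    ∃ a b d e : Fin n, a ≠ b ∧ a ≠ d ∧ a ≠ e ∧ b ≠ d ∧ b ≠ e ∧ d ≠ e ∧
      K.supp = {a,b,d,e} ∧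
      ∃ p1 p2 p3 : Sym2 (Fin n),
        ∀ x y : Fin n, x ∈ ({a,b,d,e} : Set (Fin n)) → y ∈ ({a,b,d,e} : Set (Fin n)) →
          x ≠ y → c s(x,y) = i ∨ s(x,y) = p1 ∨ s(x,y) = p2 ∨ s(x,y) = p3 := by
  have fin4 : ∀ k : Fin 4, k = 0 ∨ k = 1 ∨ k = 2 ∨ k = 3 := by decide
  have fin13 : ∀ k : Fin 1 ⊕ Fin 3, k = Sum.inl 0 ∨ k = Sum.inr 0 ∨ k = Sum.inr 1 ∨ k = Sum.inr 2 := by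
    decide
  rcases hK with hA | hA
  · -- P4 case
    obtain ⟨φ⟩ : Nonempty ((colorClass c i).induce K.supp ≃g pathGraph 4) := hA
    have hinj : ∀ j k : Fin 4, (↑(φ.symm j) : Fin n) = ↑(φ.symm k) → j = k :=
      fun j k h => φ.symm.toEquiv.injective (Subtype.ext h)
    have hadj : ∀ j k : Fin 4, (pathGraph 4).Adj j k →
        (colorClass c i).Adj ↑(φ.symm j) ↑(φ.symm k) :=
      fun j k h => φ.symm.map_adj_iff.mpr h
    have h01 : (pathGraph 4).Adj 0 1 := by rw [pathGraph_adj]; decide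
    have h12 : (pathGraph 4).Adj 1 2 := by rw [pathGraph_adj]; decide
    have h23 : (pathGraph 4).Adj 2 3 := by rw [pathGraph_adj]; decide
    have hsupp : K.supp = {↑(φ.symm 0), ↑(φ.symm 1), ↑(φ.symm 2), ↑(φ.symm 3)} := by
      ext z
      constructor
      · intro hz
        have hk : φ.symm (φ ⟨z, hz⟩) = ⟨z, hz⟩ := φ.toEquiv.symm_apply_apply ⟨z, hz⟩
        rcases fin4 (φ ⟨z, hz⟩) with h | h | h | h <;> rw [h] at hk
        · exact Or.inl (congrArg Subtype.val hk).symm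
        · exact Or.inr (Or.inl (congrArg Subtype.val hk).symm)
        · exact Or.inr (Or.inr (Or.inl (congrArg Subtype.val hk).symm))
        · exact Or.inr (Or.inr (Or.inr (congrArg Subtype.val hk).symm))
      · intro hz
        rcases hz with h | h | h | h
        · rw [h]; exact (φ.symm 0).2
        · rw [h]; exact (φ.symm 1).2
        · rw [h]; exact (φ.symm 2).2
        · rw [Set.mem_singleton_iff] at h; rw [h]; exact (φ.symm 3).2
    refine ⟨↑(φ.symm 0), ↑(φ.symm 1), ↑(φ.symm 2), ↑(φ.symm 3),
      fun h => by simpa using hinj _ _ h, fun h => by simpa using hinj _ _ h,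
      fun h => by simpa using hinj _ _ h, fun h => by simpa using hinj _ _ h,
      fun h => by simpa using hinj _ _ h, fun h => by simpa using hinj _ _ h,
      hsupp, s(↑(φ.symm 0), ↑(φ.symm 2)), s(↑(φ.symm 0), ↑(φ.symm 3)),
      s(↑(φ.symm 1), ↑(φ.symm 3)), ?_⟩
    -- hcov
    have e1 := (hadj 0 1 h01).2
    have e2 := (hadj 1 2 h12).2
    have e3 := (hadj 2 3 h23).2
    have e1' : c s(↑(φ.symm 1), ↑(φ.symm 0)) = i := by rw [Sym2.eq_swap]; exact e1
    have e2' : c s(↑(φ.symm 2), ↑(φ.symm 1)) = i := by rw [Sym2.eq_swap]; exact e2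
    have e3' : c s(↑(φ.symm 3), ↑(φ.symm 2)) = i := by rw [Sym2.eq_swap]; exact e3
    have w1 : s(↑(φ.symm 2), (↑(φ.symm 0) : Fin n)) = s(↑(φ.symm 0), ↑(φ.symm 2)) :=
      Sym2.eq_swap
    have w2 : s(↑(φ.symm 3), (↑(φ.symm 0) : Fin n)) = s(↑(φ.symm 0), ↑(φ.symm 3)) :=
      Sym2.eq_swap
    have w3 : s(↑(φ.symm 3), (↑(φ.symm 1) : Fin n)) = s(↑(φ.symm 1), ↑(φ.symm 3)) :=
      Sym2.eq_swap
    intro x y hx hy hxy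
    simp only [Set.mem_insert_iff, Set.mem_singleton_iff] at hx hy
    rcases hx with rfl | rfl | rfl | rfl <;> rcases hy with rfl | rfl | rfl | rfl <;>
      first
      | exact absurd rfl hxy
      | exact Or.inl e1 | exact Or.inl e2 | exact Or.inl e3
      | exact Or.inl e1' | exact Or.inl e2' | exact Or.inl e3'
      | exact Or.inr (Or.inl rfl)
      | exact Or.inr (Or.inr (Or.inl rfl))
      | exact Or.inr (Or.inr (Or.inr rfl))
      | exact Or.inr (Or.inl w1)
      | exact Or.inr (Or.inr (Or.inl w2))
      | exact Or.inr (Or.inr (Or.inr w3))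
  · -- K13 case
    obtain ⟨φ⟩ : Nonempty ((colorClass c i).induce K.supp ≃g starK13) := hA
    have hinj : ∀ j k : Fin 1 ⊕ Fin 3, (↑(φ.symm j) : Fin n) = ↑(φ.symm k) → j = k :=
      fun j k h => φ.symm.toEquiv.injective (Subtype.ext h)
    have hadj : ∀ j k : Fin 1 ⊕ Fin 3, starK13.Adj j k →
        (colorClass c i).Adj ↑(φ.symm j) ↑(φ.symm k) :=
      fun j k h => φ.symm.map_adj_iff.mpr h
    have h01 : starK13.Adj (Sum.inl 0) (Sum.inr 0) := by simp [starK13]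
    have h02 : starK13.Adj (Sum.inl 0) (Sum.inr 1) := by simp [starK13]
    have h03 : starK13.Adj (Sum.inl 0) (Sum.inr 2) := by simp [starK13]
    have hsupp : K.supp = {↑(φ.symm (Sum.inl 0)), ↑(φ.symm (Sum.inr 0)),
        ↑(φ.symm (Sum.inr 1)), ↑(φ.symm (Sum.inr 2))} := by
      ext z
      constructor
      · intro hz
        have hk : φ.symm (φ ⟨z, hz⟩) = ⟨z, hz⟩ := φ.toEquiv.symm_apply_apply ⟨z, hz⟩
        rcases fin13 (φ ⟨z, hz⟩) with h | h | h | h <;> rw [h] at hk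
        · exact Or.inl (congrArg Subtype.val hk).symm
        · exact Or.inr (Or.inl (congrArg Subtype.val hk).symm)
        · exact Or.inr (Or.inr (Or.inl (congrArg Subtype.val hk).symm))
        · exact Or.inr (Or.inr (Or.inr (congrArg Subtype.val hk).symm))
      · intro hz
        rcases hz with h | h | h | h
        · rw [h]; exact (φ.symm (Sum.inl 0)).2
        · rw [h]; exact (φ.symm (Sum.inr 0)).2
        · rw [h]; exact (φ.symm (Sum.inr 1)).2
        · rw [Set.mem_singleton_iff] at h; rw [h]; exact (φ.symm (Sum.inr 2)).2
    refine ⟨↑(φ.symm (Sum.inl 0)), ↑(φ.symm (Sum.inr 0)), ↑(φ.symm (Sum.inr 1)),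
      ↑(φ.symm (Sum.inr 2)),
      fun h => by simpa using hinj _ _ h, fun h => by simpa using hinj _ _ h,
      fun h => by simpa using hinj _ _ h, fun h => by simpa using hinj _ _ h,
      fun h => by simpa using hinj _ _ h, fun h => by simpa using hinj _ _ h,
      hsupp, s(↑(φ.symm (Sum.inr 0)), ↑(φ.symm (Sum.inr 1))),
      s(↑(φ.symm (Sum.inr 0)), ↑(φ.symm (Sum.inr 2))),
      s(↑(φ.symm (Sum.inr 1)), ↑(φ.symm (Sum.inr 2))), ?_⟩
    have e1 := (hadj _ _ h01).2
    have e2 := (hadj _ _ h02).2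
    have e3 := (hadj _ _ h03).2
    have e1' : c s(↑(φ.symm (Sum.inr 0)), ↑(φ.symm (Sum.inl 0))) = i := by
      rw [Sym2.eq_swap]; exact e1
    have e2' : c s(↑(φ.symm (Sum.inr 1)), ↑(φ.symm (Sum.inl 0))) = i := by
      rw [Sym2.eq_swap]; exact e2
    have e3' : c s(↑(φ.symm (Sum.inr 2)), ↑(φ.symm (Sum.inl 0))) = i := by
      rw [Sym2.eq_swap]; exact e3
    have w1 : s(↑(φ.symm (Sum.inr 1)), (↑(φ.symm (Sum.inr 0)) : Fin n)) =
        s(↑(φ.symm (Sum.inr 0)), ↑(φ.symm (Sum.inr 1))) := Sym2.eq_swap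
    have w2 : s(↑(φ.symm (Sum.inr 2)), (↑(φ.symm (Sum.inr 0)) : Fin n)) =
        s(↑(φ.symm (Sum.inr 0)), ↑(φ.symm (Sum.inr 2))) := Sym2.eq_swap
    have w3 : s(↑(φ.symm (Sum.inr 2)), (↑(φ.symm (Sum.inr 1)) : Fin n)) =
        s(↑(φ.symm (Sum.inr 1)), ↑(φ.symm (Sum.inr 2))) := Sym2.eq_swap
    intro x y hx hy hxy
    simp only [Set.mem_insert_iff, Set.mem_singleton_iff] at hx hy
    rcases hx with rfl | rfl | rfl | rfl <;> rcases hy with rfl | rfl | rfl | rfl <;>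
      first
      | exact absurd rfl hxy
      | exact Or.inl e1 | exact Or.inl e2 | exact Or.inl e3
      | exact Or.inl e1' | exact Or.inl e2' | exact Or.inl e3'
      | exact Or.inr (Or.inl rfl)
      | exact Or.inr (Or.inr (Or.inl rfl))
      | exact Or.inr (Or.inr (Or.inr rfl))
      | exact Or.inr (Or.inl w1)
      | exact Or.inr (Or.inr (Or.inl w2))
      | exact Or.inr (Or.inr (Or.inr w3))

/-- In a `(5,8)`-coloring of `K_n` (`n ≥ 5`) with no monochromatic
triangle, if `X` is a maximal monochromatic component isomorphic to `P_4` or `K_{1,3}`,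
then each vertex pair of `X` not forming an edge of `X` forms by itself a maximal
monochromatic component isomorphic to `K_2`, and these edges receive pairwise distinct
colors. -/
theorem nonedges_of_P4_or_K13 {n : ℕ} {α : Type*} (hn : 5 ≤ n)
    (c : Sym2 (Fin n) → α) (hc : IsPQColoring 5 8 c) (htri : ¬ HasMonoTriangle c)
    (i : α) (K : (colorClass c i).ConnectedComponent)
    (hK : ComponentIso (colorClass c i) K (pathGraph 4) ∨
      ComponentIso (colorClass c i) K starK13) :
    (∀ u v : Fin n, u ∈ K.supp → v ∈ K.supp → u ≠ v → ¬ (colorClass c i).Adj u v →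
      ((colorClass c (c s(u, v))).connectedComponentMk u).supp = {u, v}) ∧
    (∀ u v u' v' : Fin n, u ∈ K.supp → v ∈ K.supp → u' ∈ K.supp → v' ∈ K.supp →
      u ≠ v → u' ≠ v' → ¬ (colorClass c i).Adj u v → ¬ (colorClass c i).Adj u' v' →
      s(u, v) ≠ s(u', v') → c s(u, v) ≠ c s(u', v')) := by
  obtain ⟨a, b, d, e, hab, had, hae, hbd, hbe, hde, hsupp, p1, p2, p3, hcov⟩ :=
    extract c i K hK
  obtain ⟨F1, F2, F3⟩ := master1 hn c hc i a b d e hab had hae hbd hbe hde p1 p2 p3 hcov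
  constructor
  · intro u v hu hv huv hnadj
    rw [hsupp] at hu hv
    have hjne : c s(u, v) ≠ i := fun h => hnadj ⟨huv, h⟩
    exact master2 hn c hc i a b d e hab had hae hbd hbe hde p1 p2 p3 hcov u v hu hv huv hjne
  · intro u v u' v' hu hv hu' hv' huv hu'v' hnadj hnadj' hss
    rw [hsupp] at hu hv hu' hv'
    have hjne : c s(u, v) ≠ i := fun h => hnadj ⟨huv, h⟩
    have hjne' : c s(u', v') ≠ i := fun h => hnadj' ⟨hu'v', h⟩
    intro hcc
    have key : ∀ q q' : Sym2 (Fin n), s(u, v) = q → s(u', v') = q' → c q = c q' := by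
      intro q q' hq hq'
      rw [← hq, ← hq']
      exact hcc
    rcases hcov u v hu hv huv with h | h | h | h
    · exact hjne h
    all_goals {
      rcases hcov u' v' hu' hv' hu'v' with h' | h' | h' | h'
      · exact hjne' h'
      all_goals
        first
        | exact hss (h.trans h'.symm)
        | exact F1 (key _ _ h h')
        | exact F1 (key _ _ h h').symm
        | exact F2 (key _ _ h h')
        | exact F2 (key _ _ h h').symm
        | exact F3 (key _ _ h h')
        | exact F3 (key _ _ h h').symm }
end
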